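/- arXiv:1709.03570 — 4 statements merged into one kernel-verified Lean document; each statement's English description precedes it below -/
import Mathlib

section
/- With the sub-Gaussian deviation sequence z_t = √( (1/2) · ((N+1)/N)² · log(κ(N)·log₂(2t)/δ) / t ), the anytime bound P( ∃ t ∈ ℕ : μ̂_t − μ > z_t ) ≤ δ holds. -/
open MeasureTheory ProbabilityTheory Set

open Real Finset
open scoped ENNReal NNReal


lemma hoeffding_analytic {p : ℝ} (hp0 : 0 < p) (hp1 : p < 1) {x : ℝ} (hx : 0 ≤ x) :
    (1 - p + p * exp x) * exp (-(x * p)) ≤ exp (x ^ 2 / 8) := by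
  set D : ℝ → ℝ := fun y => 1 - p + p * exp y with hDdef
  have hDpos : ∀ y, 0 < D y := fun y => by
    have := exp_pos y; simp only [hDdef]; nlinarith
  have hD : ∀ y, HasDerivAt D (p * exp y) y := fun y => by
    exact ((Real.hasDerivAt_exp y).const_mul p).const_add (1 - p)
  set G : ℝ → ℝ := fun y => y / 4 + p - p * exp y / D y with hGdef
  set F : ℝ → ℝ := fun y => y ^ 2 / 8 + y * p - log (D y) with hFdef
  have hG : ∀ y, HasDerivAt G (1 / 4 - p * (1 - p) * exp y / (D y) ^ 2) y := by
    intro y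
    have h1 : HasDerivAt (fun y : ℝ => p * exp y) (p * exp y) y :=
      (Real.hasDerivAt_exp y).const_mul p
    have h2 : HasDerivAt (fun y => p * exp y / D y)
        ((p * exp y * D y - p * exp y * (p * exp y)) / (D y) ^ 2) y :=
      h1.div (hD y) (hDpos y).ne'
    have h3 : HasDerivAt (fun y : ℝ => y / 4 + p) (1 / 4) y := by
      simpa using ((hasDerivAt_id y).div_const 4).add_const p
    have := h3.sub h2
    refine this.congr_deriv ?_
    have hd := (hDpos y).ne'
    field_simp [hDdef]
    ring
  have hH : ∀ y, 0 ≤ 1 / 4 - p * (1 - p) * exp y / (D y) ^ 2 := fun y => by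
    have he := exp_pos y
    have hd := hDpos y
    have : p * (1 - p) * exp y / (D y) ^ 2 ≤ 1 / 4 := by
      rw [div_le_iff₀ (by positivity)]
      simp only [hDdef]
      nlinarith [sq_nonneg ((1 - p) - p * exp y), exp_pos y]
    linarith
  have hGmono : Monotone G :=
    monotone_of_deriv_nonneg (fun y => (hG y).differentiableAt)
      (fun y => by rw [(hG y).deriv]; exact hH y)
  have hG0 : G 0 = 0 := by
    simp only [hGdef, hDdef, exp_zero, mul_one]
    have : 1 - p + p = 1 := by ring
    rw [this]
    ring
  have hGnonneg : ∀ y, 0 ≤ y → 0 ≤ G y := fun y hy => hG0 ▸ hGmono hy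
  have hF : ∀ y, HasDerivAt F (G y) y := by
    intro y
    have h1 : HasDerivAt (fun y : ℝ => y ^ 2 / 8 + y * p) (y / 4 + p) y := by
      have := ((hasDerivAt_pow 2 y).div_const 8).add ((hasDerivAt_id y).mul_const p)
      refine this.congr_deriv ?_
      ring
    have h2 : HasDerivAt (fun y => log (D y)) (p * exp y / D y) y :=
      (hD y).log (hDpos y).ne'
    exact h1.sub h2
  have hFmono : MonotoneOn F (Set.Ici 0) := by
    refine monotoneOn_of_deriv_nonneg (convex_Ici 0)
      (fun y _ => (hF y).differentiableAt.continuousAt.continuousWithinAt) ?_ ?_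
    · exact fun y _ => (hF y).differentiableAt.differentiableWithinAt
    · intro y hy
      rw [(hF y).deriv]
      rw [interior_Ici] at hy
      exact hGnonneg y (le_of_lt hy)
  have hF0 : F 0 = 0 := by
    simp only [hFdef, hDdef, exp_zero, mul_one]
    norm_num
  have hFx : 0 ≤ F x := hF0 ▸ hFmono Set.self_mem_Ici hx hx
  have hlog : log (D x) ≤ x ^ 2 / 8 + x * p := by
    simp only [hFdef] at hFx; linarith
  calc (1 - p + p * exp x) * exp (-(x * p)) = exp (log (D x) + -(x * p)) := by
        rw [exp_add, exp_log (hDpos x)]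
    _ ≤ exp (x ^ 2 / 8) := by
        apply exp_le_exp.2; linarith

section Aux
variable {Ω : Type*} [MeasurableSpace Ω] (P : Measure Ω) [IsProbabilityMeasure P]

lemma integrable_of_bdd {f : Ω → ℝ} (hf : Measurable f) {C : ℝ} (hC : ∀ ω, |f ω| ≤ C) :
    Integrable f P :=
  (integrable_const C).mono' hf.aestronglyMeasurable (ae_of_all _ hC)

lemma mgf_single {X : Ω → ℝ} (hX : Measurable X) (hb : ∀ ω, X ω ∈ Set.Icc (0:ℝ) 1)
    {μ : ℝ} (hμ : μ ∈ Set.Ioo (0:ℝ) 1) (hmean : ∫ ω, X ω ∂P = μ)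
    {l : ℝ} (hl : 0 ≤ l) :
    ∫ ω, exp (l * (X ω - μ)) ∂P ≤ exp (l ^ 2 / 8) := by
  have hXi : Integrable X P := integrable_of_bdd P hX (C := 1)
    (fun ω => abs_le.2 ⟨by linarith [(hb ω).1], (hb ω).2⟩)
  have key : ∀ ω, exp (l * X ω) ≤ 1 - X ω + X ω * exp l := by
    intro ω
    obtain ⟨h0, h1⟩ := hb ω
    have := convexOn_exp.2 (Set.mem_univ (0:ℝ)) (Set.mem_univ l)
      (by linarith : (0:ℝ) ≤ 1 - X ω) h0 (by ring)
    simpa [smul_eq_mul, mul_comm] using this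
  have hint1 : Integrable (fun ω => exp (l * X ω)) P := by
    refine integrable_of_bdd P (by fun_prop) (C := exp l) (fun ω => ?_)
    rw [abs_of_nonneg (exp_nonneg _)]
    exact exp_le_exp.2 (by nlinarith [(hb ω).1, (hb ω).2])
  have hint2 : Integrable (fun ω => 1 - X ω + X ω * exp l) P := by
    exact ((integrable_const 1).sub hXi).add (hXi.mul_const _)
  have hmono : ∫ ω, exp (l * X ω) ∂P ≤ 1 - μ + μ * exp l := by
    calc ∫ ω, exp (l * X ω) ∂P ≤ ∫ ω, (1 - X ω + X ω * exp l) ∂P :=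
          integral_mono hint1 hint2 key
      _ = 1 - μ + μ * exp l := by
          have he : (fun ω => 1 - X ω + X ω * exp l) = fun ω => 1 + (exp l - 1) * X ω := by
            funext ω; ring
          rw [he, integral_add (integrable_const 1) (hXi.const_mul _), integral_const,
            integral_const_mul, hmean]
          simp only [measure_univ, probReal_univ, ENNReal.toReal_one, smul_eq_mul, one_mul]
          ring
  have h8 : (1 - μ + μ * exp l) * exp (-(l * μ)) ≤ exp (l ^ 2 / 8) :=
    hoeffding_analytic hμ.1 hμ.2 hl
  calc ∫ ω, exp (l * (X ω - μ)) ∂P = (∫ ω, exp (l * X ω) ∂P) * exp (-(l * μ)) := by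
        rw [← integral_mul_const]
        congr 1 with ω
        rw [← Real.exp_add]
        ring_nf
    _ ≤ (1 - μ + μ * exp l) * exp (-(l * μ)) := by
        have h2 : 0 ≤ ∫ ω, exp (l * X ω) ∂P := integral_nonneg fun ω => (exp_nonneg _)
        exact mul_le_mul_of_nonneg_right hmono (exp_nonneg _)
    _ ≤ exp (l ^ 2 / 8) := h8

end Aux

section MaxIneq
variable {Ω : Type*} [MeasurableSpace Ω] (P : Measure Ω) [IsProbabilityMeasure P]
  (Y : ℕ → Ω → ℝ) (hmeas : ∀ i, Measurable (Y i))
  (hindep : iIndepFun Y P)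
  (hbdd : ∀ i ω, Y i ω ∈ Set.Icc (0:ℝ) 1)
  {μ : ℝ} (hμ : μ ∈ Set.Ioo (0:ℝ) 1) (hmean : ∀ i, ∫ ω, Y i ω ∂P = μ)

include hmeas hindep hbdd hμ hmean in
lemma max_hoeffding (m : ℕ) (hm : 1 ≤ m) {a : ℝ} (ha : 0 ≤ a) :
    P {ω | ∃ t : ℕ, 1 ≤ t ∧ t ≤ m ∧ a ≤ (∑ j ∈ Finset.range t, Y j ω) - t * μ} ≤
      ENNReal.ofReal (Real.exp (-(2 * a ^ 2 / m))) := by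
  obtain ⟨hμ0, hμ1⟩ := id hμ
  set l : ℝ := 4 * a / m with hldef
  have hmpos : (0:ℝ) < m := by exact_mod_cast hm
  have hl : 0 ≤ l := by positivity
  set f : ℕ → Ω → ℝ :=
    fun k ω => exp (l * ((∑ j ∈ Finset.range (k + 1), Y j ω) - (k + 1) * μ)) with hfdef
  have hsm : ∀ i, StronglyMeasurable (Y i) := fun i => (hmeas i).stronglyMeasurable
  set 𝒢 := MeasureTheory.Filtration.natural Y hsm with h𝒢def
  -- adaptedness
  have hYadp : StronglyAdapted 𝒢 Y := Filtration.stronglyAdapted_natural hsm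
  have hfim : ∀ k, StronglyMeasurable[𝒢 k] (f k) := by
    intro k
    have hsum : StronglyMeasurable[𝒢 k] (fun ω => ∑ j ∈ Finset.range (k + 1), Y j ω) := by
      apply Finset.stronglyMeasurable_fun_sum
      intro j hj
      exact (hYadp j).mono (𝒢.mono (Nat.lt_succ_iff.mp (Finset.mem_range.mp hj)))
    exact (Real.continuous_exp.comp_stronglyMeasurable
      (((hsum.sub stronglyMeasurable_const).const_mul l)))
  have hfadp : StronglyAdapted 𝒢 f := fun k => hfim k
  -- integrability
  have hfbd : ∀ k ω, |f k ω| ≤ exp (l * (k + 1)) := by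
    intro k ω
    rw [abs_of_nonneg (exp_nonneg _), exp_le_exp]
    have h1 : (∑ j ∈ Finset.range (k + 1), Y j ω) ≤ (k + 1 : ℝ) := by
      calc (∑ j ∈ Finset.range (k + 1), Y j ω) ≤ ∑ j ∈ Finset.range (k + 1), 1 :=
            Finset.sum_le_sum fun j _ => (hbdd j ω).2
        _ = (k + 1 : ℝ) := by simp
    have h2 : (0:ℝ) ≤ (k + 1 : ℝ) * μ := by positivity
    have := mul_le_mul_of_nonneg_left (by linarith : (∑ j ∈ Finset.range (k + 1), Y j ω)
      - (k + 1) * μ ≤ (k + 1 : ℝ)) hl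
    linarith
  have hfmeas : ∀ k, Measurable (f k) := by
    intro k
    have : Measurable (fun ω => ∑ j ∈ Finset.range (k + 1), Y j ω) :=
      Finset.measurable_sum _ fun j _ => hmeas j
    fun_prop
  have hfint : ∀ k, Integrable (f k) P := fun k =>
    (integrable_const _).mono' (hfmeas k).aestronglyMeasurable (ae_of_all _ (hfbd k))
  -- submartingale step
  have hsub : Submartingale f 𝒢 P := by
    refine submartingale_nat hfadp hfint fun i => ?_
    set g : Ω → ℝ := fun ω => exp (l * (Y (i + 1) ω - μ)) with hgdef
    have hfg : f (i + 1) = fun ω => f i ω * g ω := by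
      funext ω
      simp only [hfdef, hgdef, ← Real.exp_add]
      congr 1
      rw [Finset.sum_range_succ]
      push_cast
      ring
    have hgmble : Measurable g := by fun_prop
    have hgbd : ∀ ω, |g ω| ≤ exp l := by
      intro ω
      rw [abs_of_nonneg (exp_nonneg _), exp_le_exp]
      nlinarith [(hbdd (i+1) ω).1, (hbdd (i+1) ω).2, hμ0.le]
    have hgint : Integrable g P :=
      (integrable_const _).mono' hgmble.aestronglyMeasurable (ae_of_all _ hgbd)
    have hgm1 : StronglyMeasurable[MeasurableSpace.comap (Y (i+1)) inferInstance] g := by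
      have h1 : Measurable[MeasurableSpace.comap (Y (i+1)) inferInstance] (Y (i+1)) :=
        comap_measurable (Y (i+1))
      exact (((measurable_id.sub_const μ).const_mul l).exp.comp h1).stronglyMeasurable
    have hindp : Indep (MeasurableSpace.comap (Y (i+1)) inferInstance) (𝒢 i) P :=
      hindep.indep_comap_natural_of_lt hsm (Nat.lt_succ_self i)
    have hcond_g : P[g | 𝒢 i] =ᵐ[P] fun _ => ∫ ω, g ω ∂P :=
      condExp_indep_eq (hmeas (i+1)).comap_le (𝒢.le i) hgm1 hindp
    have hmul : f i * g = f (i+1) := by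
      funext ω
      rw [hfg]
      rfl
    have hpull : P[f (i+1) | 𝒢 i] =ᵐ[P] fun ω => f i ω * (P[g | 𝒢 i]) ω := by
      rw [← hmul]
      exact condExp_mul_of_stronglyMeasurable_left (hfim i) (hmul ▸ hfint (i+1)) hgint
    have hg1 : 1 ≤ ∫ ω, g ω ∂P := by
      have hYi : Integrable (Y (i+1)) P :=
        (integrable_const 1).mono' (hmeas (i+1)).aestronglyMeasurable
          (ae_of_all _ fun ω => abs_le.2 ⟨by linarith [(hbdd (i+1) ω).1], (hbdd (i+1) ω).2⟩)
      have hint2 : Integrable (fun ω => 1 + l * (Y (i+1) ω - μ)) P := by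
        exact (integrable_const 1).add (((hYi.sub (integrable_const μ)).const_mul l))
      calc (1:ℝ) = ∫ ω, (1 + l * (Y (i+1) ω - μ)) ∂P := by
            have he : (fun ω => 1 + l * (Y (i+1) ω - μ)) =
                fun ω => (1 - l * μ) + l * Y (i+1) ω := by funext ω; ring
            rw [he, integral_add (integrable_const _) (hYi.const_mul l), integral_const,
              integral_const_mul, hmean (i+1)]
            simp
        _ ≤ ∫ ω, g ω ∂P :=
            integral_mono hint2 hgint fun ω => by
              show 1 + l * (Y (i+1) ω - μ) ≤ exp (l * (Y (i+1) ω - μ))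
              linarith [Real.add_one_le_exp (l * (Y (i+1) ω - μ))]
    filter_upwards [hpull, hcond_g] with ω h1 h2
    rw [h1, h2]
    exact le_mul_of_one_le_right (exp_nonneg _) hg1
  -- mgf bound at time m-1
  have hX : ∀ j, Measurable (fun ω => Y j ω - μ) := fun j => (hmeas j).sub_const μ
  have hXindep : iIndepFun (fun j ω => Y j ω - μ) P :=
    hindep.comp (fun _ => fun x => x - μ) (fun _ => measurable_id.sub_const μ)
  have hmgf : ∫ ω, f (m - 1) ω ∂P ≤ exp (m * l ^ 2 / 8) := by
    have hm1 : (m - 1) + 1 = m := Nat.succ_pred_eq_of_pos hm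
    have heq : ∀ ω, f (m - 1) ω = exp (l * (∑ j ∈ Finset.range m, (Y j ω - μ))) := by
      intro ω
      have hc : ((m - 1 : ℕ) : ℝ) + 1 = (m : ℝ) := by
        rw [Nat.cast_sub hm]
        push_cast
        ring
      simp only [hfdef, hm1, hc]
      congr 1
      rw [Finset.sum_sub_distrib, Finset.sum_const, Finset.card_range, nsmul_eq_mul]
    calc ∫ ω, f (m - 1) ω ∂P = mgf (∑ j ∈ Finset.range m, fun ω => Y j ω - μ) P l := by
          rw [mgf]
          congr 1 with ω
          rw [heq ω]
          congr 1
          simp [Finset.sum_apply]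
      _ = ∏ j ∈ Finset.range m, mgf (fun ω => Y j ω - μ) P l := hXindep.mgf_sum hX _
      _ ≤ ∏ j ∈ Finset.range m, exp (l ^ 2 / 8) := by
          refine Finset.prod_le_prod (fun j _ => mgf_nonneg) (fun j _ => ?_)
          exact mgf_single P (hmeas j) (hbdd j) hμ (hmean j) hl
      _ = exp (m * l ^ 2 / 8) := by
          rw [Finset.prod_const, ← Real.exp_nat_mul]
          congr 1
          push_cast [Finset.card_range]
          ring
  -- maximal inequality
  set ε : NNReal := ⟨exp (l * a), (exp_pos _).le⟩ with hεdef
  set S := {ω | (ε : ℝ) ≤ (Finset.range ((m - 1) + 1)).sup'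
      Finset.nonempty_range_add_one fun k => f k ω} with hSdef
  have hEsub : {ω | ∃ t : ℕ, 1 ≤ t ∧ t ≤ m ∧ a ≤ (∑ j ∈ Finset.range t, Y j ω) - t * μ}
      ⊆ S := by
    rintro ω ⟨t, ht1, htm, hta⟩
    have hk : t - 1 ∈ Finset.range ((m - 1) + 1) := by
      rw [Finset.mem_range]; omega
    refine le_trans ?_ (Finset.le_sup' (fun k => f k ω) hk)
    show exp (l * a) ≤ f (t - 1) ω
    simp only [hfdef]
    apply exp_le_exp.2
    have h1 : (t - 1) + 1 = t := Nat.succ_pred_eq_of_pos ht1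
    have hc : ((t - 1 : ℕ) : ℝ) + 1 = (t : ℝ) := by
      rw [Nat.cast_sub ht1]; push_cast; ring
    rw [h1, hc]
    exact mul_le_mul_of_nonneg_left hta hl
  have hnonneg : (0 : ℕ → Ω → ℝ) ≤ f := fun k ω => exp_nonneg _
  have hmax := maximal_ineq hsub hnonneg (ε := ε) (m - 1)
  have hS1 : ∫ ω in S, f (m - 1) ω ∂P ≤ ∫ ω, f (m - 1) ω ∂P :=
    setIntegral_le_integral (hfint _) (ae_of_all _ fun ω => exp_nonneg _)
  have hεpos : 0 < ε := by
    rw [← NNReal.coe_lt_coe]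
    exact exp_pos (l * a)
  have hεne : (ε : ℝ≥0∞) ≠ 0 := ENNReal.coe_ne_zero.2 hεpos.ne'
  have step : (ε : ℝ≥0∞) *
      P {ω | ∃ t : ℕ, 1 ≤ t ∧ t ≤ m ∧ a ≤ (∑ j ∈ Finset.range t, Y j ω) - t * μ} ≤
      ENNReal.ofReal (exp (m * l ^ 2 / 8)) := by
    calc (ε : ℝ≥0∞) *
        P {ω | ∃ t : ℕ, 1 ≤ t ∧ t ≤ m ∧ a ≤ (∑ j ∈ Finset.range t, Y j ω) - t * μ}
        ≤ (ε : ℝ≥0∞) * P S := mul_le_mul_right (measure_mono hEsub) _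
      _ ≤ ENNReal.ofReal (∫ ω in S, f (m - 1) ω ∂P) := by
          have h := hmax
          exact h
      _ ≤ ENNReal.ofReal (∫ ω, f (m - 1) ω ∂P) := ENNReal.ofReal_le_ofReal hS1
      _ ≤ ENNReal.ofReal (exp (m * l ^ 2 / 8)) := ENNReal.ofReal_le_ofReal hmgf
  have hdiv : P {ω | ∃ t : ℕ, 1 ≤ t ∧ t ≤ m ∧ a ≤ (∑ j ∈ Finset.range t, Y j ω) - t * μ}
      ≤ ENNReal.ofReal (exp (m * l ^ 2 / 8)) / (ε : ℝ≥0∞) := by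
    rw [ENNReal.le_div_iff_mul_le (Or.inl hεne) (Or.inl ENNReal.coe_ne_top), mul_comm]
    exact step
  refine hdiv.trans ?_
  have hcoe : (ε : ℝ≥0∞) = ENNReal.ofReal (exp (l * a)) := by
    rw [hεdef, ENNReal.ofReal, Real.toNNReal_of_nonneg (exp_pos _).le]
    rfl
  rw [hcoe, ← ENNReal.ofReal_div_of_pos (exp_pos _), ← Real.exp_sub]
  apply ENNReal.ofReal_le_ofReal
  apply exp_le_exp.2
  have hmne : (m : ℝ) ≠ 0 := hmpos.ne'
  rw [hldef]
  apply le_of_eq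
  field_simp
  ring

end MaxIneq

set_option maxHeartbeats 1000000 in
/-- Theorem: with the sub-Gaussian deviation sequence
`z_t = √( (1/2)·((N+1)/N)²·log(κ(N)·log₂(2t)/δ)/t )`, the anytime bound
`P(∃ t : μ̂_t - μ > z_t) ≤ δ` holds. -/
theorem lil_subgaussian_anytime_deviation
    {Ω : Type*} [MeasurableSpace Ω] (P : Measure Ω) [IsProbabilityMeasure P]
    (Y : ℕ → Ω → ℝ) (hmeas : ∀ i, Measurable (Y i))
    (hindep : iIndepFun Y P)
    (hident : ∀ i, IdentDistrib (Y i) (Y 0) P P)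
    (hbdd : ∀ i ω, Y i ω ∈ Set.Icc (0:ℝ) 1)
    (μ : ℝ) (hμ : μ ∈ Set.Ioo (0:ℝ) 1)
    (hmean : ∀ i, ∫ ω, Y i ω ∂P = μ)
    (δ : ℝ) (hδ : δ ∈ Set.Ioo (0:ℝ) 1)
    (l N : ℕ) (hN : N = 2 ^ l)
    (κ : ℝ)
    (hκ : κ = δ ^ ((1:ℝ)/((N:ℝ)+1)) *
      ((if l ≠ 0 then
          ∑ t ∈ Finset.Icc 1 N, (Real.logb 2 (2*(t:ℝ))) ^ (-(((N:ℝ)+1)/(N:ℝ)))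
        else 0)
        + (N:ℝ) * ∑' k : ℕ, ((k:ℝ) + (l:ℝ) + 1) ^ (-(((N:ℝ)+1)/(N:ℝ))))
        ^ ((N:ℝ)/((N:ℝ)+1)))
    (z : ℕ → ℝ)
    (hz : ∀ t : ℕ, z t =
      Real.sqrt ((1/2) * (((N:ℝ)+1)/(N:ℝ))^2 *
        Real.log (κ * Real.logb 2 (2*(t:ℝ)) / δ) / (t:ℝ))) :
    P {ω | ∃ t : ℕ, 0 < t ∧
        (∑ j ∈ Finset.range t, Y j ω) / (t:ℝ) - μ > z t} ≤ ENNReal.ofReal δ := by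
  obtain ⟨hδ0, hδ1⟩ := hδ
  set c : ℝ := ((N:ℝ)+1)/(N:ℝ) with hcdef
  have hN1 : 1 ≤ N := hN ▸ Nat.one_le_two_pow
  have hNR : (0:ℝ) < N := by exact_mod_cast hN1
  have hNR1 : (1:ℝ) ≤ N := by exact_mod_cast hN1
  have hc1 : 1 < c := by rw [hcdef, lt_div_iff₀ hNR]; linarith
  have hc2 : c ≤ 2 := by rw [hcdef, div_le_iff₀ hNR]; linarith
  have hcpos : 0 < c := lt_trans one_pos hc1
  have hcN : c = 1 + 1/(N:ℝ) := by rw [hcdef]; field_simp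
  set D : Finset ℕ := if l ≠ 0 then Finset.Icc 1 N else ∅ with hDdef
  have hDmem : ∀ t ∈ D, 1 ≤ t ∧ t ≤ N := by
    intro t ht
    rw [hDdef] at ht
    split_ifs at ht with h
    · exact Finset.mem_Icc.mp ht
    · exact absurd ht (Finset.notMem_empty t)
  set S1 : ℝ := ∑ t ∈ D, (Real.logb 2 (2*(t:ℝ))) ^ (-c) with hS1def
  set S2 : ℝ := ∑' k : ℕ, ((k:ℝ) + (l:ℝ) + 1) ^ (-c) with hS2def
  set S : ℝ := S1 + N * S2 with hSdef
  have hκ' : κ = δ ^ ((1:ℝ)/((N:ℝ)+1)) * S ^ ((N:ℝ)/((N:ℝ)+1)) := by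
    rw [hκ, hSdef, hS1def, hS2def, hDdef]
    congr 2
    split_ifs <;> simp
  -- summability
  have hterm_pos : ∀ k : ℕ, (0:ℝ) < (k:ℝ) + (l:ℝ) + 1 := fun k => by positivity
  have hterm1 : ∀ k : ℕ, (1:ℝ) ≤ (k:ℝ) + (l:ℝ) + 1 := fun k => by
    have h1 : (0:ℝ) ≤ (k:ℝ) := Nat.cast_nonneg k
    have h2 : (0:ℝ) ≤ (l:ℝ) := Nat.cast_nonneg l
    linarith
  have hsummable : Summable (fun k : ℕ => ((k:ℝ) + (l:ℝ) + 1) ^ (-c)) := by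
    have h1 : Summable (fun n : ℕ => (n:ℝ) ^ (-c)) :=
      Real.summable_nat_rpow.2 (by linarith)
    have h2 := (summable_nat_add_iff (l + 1)).2 h1
    refine h2.congr fun k => ?_
    push_cast
    ring_nf
  have hS2pos : 0 < S2 :=
    Summable.tsum_pos hsummable (fun k => Real.rpow_nonneg (hterm_pos k).le _) 0
      (Real.rpow_pos_of_pos (hterm_pos 0) _)
  -- telescoping lower bound
  have hS2ge : 1/((l:ℝ)+1) ≤ S2 := by
    set g : ℕ → ℝ := fun k => 1/(((k:ℝ)+(l:ℝ)+1) * ((k:ℝ)+(l:ℝ)+2)) with hgdef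
    have hgle : ∀ k, g k ≤ ((k:ℝ) + (l:ℝ) + 1) ^ (-c) := by
      intro k
      have hx := hterm_pos k
      have hx1 := hterm1 k
      have h1 : ((k:ℝ)+(l:ℝ)+1) ^ (-(2:ℝ)) ≤ ((k:ℝ)+(l:ℝ)+1) ^ (-c) :=
        Real.rpow_le_rpow_of_exponent_le hx1 (by linarith)
      refine le_trans ?_ h1
      rw [Real.rpow_neg hx.le, show (2:ℝ) = ((2:ℕ):ℝ) by norm_num, Real.rpow_natCast]
      show 1/(((k:ℝ)+(l:ℝ)+1) * ((k:ℝ)+(l:ℝ)+2)) ≤ (((k:ℝ)+(l:ℝ)+1)^2)⁻¹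
      rw [one_div]
      apply inv_anti₀ (by positivity)
      nlinarith
    have hpartial : ∀ n : ℕ, ∑ k ∈ Finset.range n, g k
        = 1/((l:ℝ)+1) - 1/((n:ℝ)+(l:ℝ)+1) := by
      intro n
      have : ∀ k : ℕ, g k = 1/((k:ℝ)+(l:ℝ)+1) - 1/(((k+1:ℕ):ℝ)+(l:ℝ)+1) := by
        intro k
        have h1 : (0:ℝ) < (k:ℝ)+(l:ℝ)+1 := hterm_pos k
        have h2 : (0:ℝ) < (k:ℝ)+(l:ℝ)+2 := by positivity
        show 1/(((k:ℝ)+(l:ℝ)+1) * ((k:ℝ)+(l:ℝ)+2)) = _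
        push_cast
        rw [div_sub_div _ _ h1.ne' (by positivity : ((k:ℝ)+1+(l:ℝ)+1) ≠ 0)]
        rw [div_eq_div_iff (by positivity) (by positivity)]
        ring
      calc ∑ k ∈ Finset.range n, g k
          = ∑ k ∈ Finset.range n, (1/((k:ℝ)+(l:ℝ)+1) - 1/(((k+1:ℕ):ℝ)+(l:ℝ)+1)) :=
            Finset.sum_congr rfl fun k _ => this k
        _ = 1/(((0:ℕ):ℝ)+(l:ℝ)+1) - 1/((n:ℝ)+(l:ℝ)+1) :=
            Finset.sum_range_sub' (fun k : ℕ => 1/((k:ℝ)+(l:ℝ)+1)) n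
        _ = 1/((l:ℝ)+1) - 1/((n:ℝ)+(l:ℝ)+1) := by norm_num
    have hple : ∀ n : ℕ, ∑ k ∈ Finset.range n, g k ≤ S2 := by
      intro n
      calc ∑ k ∈ Finset.range n, g k ≤ ∑ k ∈ Finset.range n, ((k:ℝ)+(l:ℝ)+1) ^ (-c) :=
            Finset.sum_le_sum fun k _ => hgle k
        _ ≤ S2 := Summable.sum_le_tsum _ (fun k _ => Real.rpow_nonneg (hterm_pos k).le _) hsummable
    have hlim : Filter.Tendsto (fun n : ℕ => ∑ k ∈ Finset.range n, g k)
        Filter.atTop (nhds (1/((l:ℝ)+1))) := by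
      simp only [hpartial]
      have h0 : Filter.Tendsto (fun n : ℕ => 1/((n:ℝ)+(l:ℝ)+1)) Filter.atTop (nhds 0) := by
        simp only [one_div]
        apply Filter.Tendsto.inv_tendsto_atTop
        apply Filter.tendsto_atTop_add_const_right
        apply Filter.tendsto_atTop_add_const_right
        exact tendsto_natCast_atTop_atTop
      simpa using tendsto_const_nhds.sub h0
    exact le_of_tendsto hlim (Filter.Eventually.of_forall hple)
  have hS1nonneg : 0 ≤ S1 :=
    Finset.sum_nonneg fun t ht => Real.rpow_nonneg
      (Real.logb_nonneg one_lt_two (by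
        have := (hDmem t ht).1
        have : (1:ℝ) ≤ t := by exact_mod_cast this
        linarith)) _
  have hNl : (l:ℝ) + 1 ≤ (N:ℝ) := by
    have : l + 1 ≤ N := hN ▸ Nat.lt_two_pow_self
    exact_mod_cast this
  have hS_ge1 : 1 ≤ S := by
    have h1 : ((l:ℝ)+1) * (1/((l:ℝ)+1)) ≤ (N:ℝ) * S2 := by
      apply mul_le_mul hNl hS2ge (by positivity) (by linarith)
    have h2 : ((l:ℝ)+1) * (1/((l:ℝ)+1)) = 1 :=
      mul_one_div_cancel (by positivity)
    rw [hSdef]; linarith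
  have hSpos : 0 < S := lt_of_lt_of_le one_pos hS_ge1
  clear_value c D S1 S2 S
  have hκpos : 0 < κ := by
    rw [hκ']
    positivity
  have hκδ : δ ≤ κ := by
    have e1 : δ ^ ((1:ℝ)/((N:ℝ)+1)) * δ ^ ((N:ℝ)/((N:ℝ)+1)) = δ := by
      rw [← Real.rpow_add hδ0]
      rw [show (1:ℝ)/((N:ℝ)+1) + (N:ℝ)/((N:ℝ)+1) = 1 by field_simp; ring, Real.rpow_one]
    have e2 : δ ^ ((N:ℝ)/((N:ℝ)+1)) ≤ S ^ ((N:ℝ)/((N:ℝ)+1)) :=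
      Real.rpow_le_rpow hδ0.le (le_trans hδ1.le hS_ge1) (by positivity)
    calc δ = δ ^ ((1:ℝ)/((N:ℝ)+1)) * δ ^ ((N:ℝ)/((N:ℝ)+1)) := e1.symm
      _ ≤ δ ^ ((1:ℝ)/((N:ℝ)+1)) * S ^ ((N:ℝ)/((N:ℝ)+1)) := by
          apply mul_le_mul_of_nonneg_left e2 (Real.rpow_nonneg hδ0.le _)
      _ = κ := hκ'.symm
  have hκc : κ ^ c = δ ^ ((1:ℝ)/(N:ℝ)) * S := by
    rw [hκ', Real.mul_rpow (Real.rpow_nonneg hδ0.le _) (Real.rpow_nonneg hSpos.le _),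
      ← Real.rpow_mul hδ0.le, ← Real.rpow_mul hSpos.le]
    rw [show (1:ℝ)/((N:ℝ)+1) * c = 1/(N:ℝ) by rw [hcdef]; field_simp,
      show (N:ℝ)/((N:ℝ)+1) * c = 1 by rw [hcdef]; field_simp, Real.rpow_one]
  have hRpow : ∀ x : ℝ, 1 ≤ x → (κ * x / δ) ^ (-c) = (δ/S) * x ^ (-c) := by
    intro x hx
    have hxpos : (0:ℝ) < x := lt_of_lt_of_le one_pos hx
    have hq : κ * x / δ = (κ/δ) * x := by ring
    have hkd : (κ/δ) ^ c = S/δ := by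
      rw [Real.div_rpow hκpos.le hδ0.le, hκc,
        show δ ^ c = δ ^ ((1:ℝ)/(N:ℝ)) * δ by
          rw [show c = (1:ℝ)/(N:ℝ) + 1 by rw [hcdef]; field_simp; ring, Real.rpow_add hδ0,
            Real.rpow_one],
        mul_div_mul_left _ _ (ne_of_gt (Real.rpow_pos_of_pos hδ0 _))]
    rw [hq, Real.mul_rpow (by positivity) hxpos.le, Real.rpow_neg (by positivity), hkd,
      inv_div]
  -- generic Chernoff-exponent comparison
  have hcore : ∀ R e : ℝ, 1 ≤ R → c ≤ e → Real.exp (-(e * Real.log R)) ≤ R ^ (-c) := by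
    intro R e hR he
    have hRpos : (0:ℝ) < R := lt_of_lt_of_le one_pos hR
    rw [Real.rpow_def_of_pos hRpos]
    apply Real.exp_le_exp.2
    have hlogR : 0 ≤ Real.log R := Real.log_nonneg hR
    nlinarith
  have hL1 : ∀ t : ℕ, 1 ≤ t → 1 ≤ Real.logb 2 (2*(t:ℝ)) := by
    intro t ht
    have h1 : (1:ℝ) ≤ (t:ℝ) := by exact_mod_cast ht
    calc (1:ℝ) = Real.logb 2 2 := (Real.logb_self_eq_one one_lt_two).symm
      _ ≤ Real.logb 2 (2*(t:ℝ)) :=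
        Real.logb_le_logb_of_le one_lt_two two_pos (by linarith)
  have hR1 : ∀ x : ℝ, 1 ≤ x → 1 ≤ κ * x / δ := by
    intro x hx
    rw [le_div_iff₀ hδ0]
    nlinarith
  have hlogR_nonneg : ∀ x : ℝ, 1 ≤ x → 0 ≤ Real.log (κ * x / δ) :=
    fun x hx => Real.log_nonneg (hR1 x hx)
  have hsqrt_mul : ∀ (B : ℝ) (t : ℕ), 1 ≤ t →
      (t:ℝ) * Real.sqrt (B / (t:ℝ)) = Real.sqrt (B * t) := by
    intro B t ht
    have htpos : (0:ℝ) < t := by exact_mod_cast ht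
    rw [show (t:ℝ) * Real.sqrt (B/(t:ℝ)) = Real.sqrt (((t:ℝ))^2) * Real.sqrt (B/(t:ℝ)) by
        rw [Real.sqrt_sq htpos.le],
      ← Real.sqrt_mul (sq_nonneg _)]
    congr 1
    field_simp
  have hznonneg : ∀ t, 0 ≤ z t := fun t => (hz t) ▸ Real.sqrt_nonneg _
  -- events
  set A : ℕ → Set Ω := fun t =>
    {ω | 0 < t ∧ (∑ j ∈ Finset.range t, Y j ω) / (t:ℝ) - μ > z t} with hAdef
  have hAsub : ∀ t : ℕ, 1 ≤ t → A t ⊆ {ω | ∃ t' : ℕ, 1 ≤ t' ∧ t' ≤ t ∧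
      (t:ℝ) * z t ≤ (∑ j ∈ Finset.range t', Y j ω) - t' * μ} := by
    intro t ht ω hω
    obtain ⟨ht0, hgt⟩ := hω
    have htpos : (0:ℝ) < t := by exact_mod_cast ht
    refine ⟨t, ht, le_rfl, ?_⟩
    have h2 := mul_lt_mul_of_pos_left hgt htpos
    have h3 : (t:ℝ) * ((∑ j ∈ Finset.range t, Y j ω)/(t:ℝ) - μ)
        = (∑ j ∈ Finset.range t, Y j ω) - t * μ := by
      field_simp
    rw [h3] at h2
    linarith
  have hsmall : ∀ t : ℕ, 1 ≤ t →
      P (A t) ≤ ENNReal.ofReal ((δ/S) * (Real.logb 2 (2*(t:ℝ))) ^ (-c)) := by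
    intro t ht
    have htpos : (0:ℝ) < t := by exact_mod_cast ht
    have hLt := hL1 t ht
    have hRt := hR1 _ hLt
    have hlogt := Real.log_nonneg hRt
    have haz : 0 ≤ (t:ℝ) * z t := mul_nonneg htpos.le (hznonneg t)
    calc P (A t) ≤ P {ω | ∃ t' : ℕ, 1 ≤ t' ∧ t' ≤ t ∧
          (t:ℝ) * z t ≤ (∑ j ∈ Finset.range t', Y j ω) - t' * μ} :=
          measure_mono (hAsub t ht)
      _ ≤ ENNReal.ofReal (Real.exp (-(2 * ((t:ℝ) * z t)^2 / t))) :=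
          max_hoeffding P Y hmeas hindep hbdd hμ hmean t ht haz
      _ ≤ ENNReal.ofReal ((δ/S) * (Real.logb 2 (2*(t:ℝ))) ^ (-c)) := by
          apply ENNReal.ofReal_le_ofReal
          have hsq : ((t:ℝ) * z t)^2
              = (1/2) * c^2 * Real.log (κ * Real.logb 2 (2*(t:ℝ)) / δ) * t := by
            rw [hz t, hsqrt_mul _ t ht, Real.sq_sqrt]
            exact mul_nonneg (mul_nonneg (by positivity) hlogt) htpos.le
          have harg : -(2 * ((t:ℝ) * z t)^2 / t)
              = -(c^2 * Real.log (κ * Real.logb 2 (2*(t:ℝ)) / δ)) := by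
            rw [hsq, mul_div_assoc, mul_div_cancel_right₀ _ htpos.ne']
            ring
          rw [harg]
          rw [← hRpow _ hLt]
          have hcc : c ≤ c^2 := by nlinarith [hc1]
          exact hcore _ _ hRt hcc
  -- block events
  set bnd : ℕ → ℝ := fun j =>
    (1/2) * c^2 * Real.log (κ * (1 + (j:ℝ)/(N:ℝ)) / δ) * (2:ℝ) ^ ((j:ℝ)/(N:ℝ)) with hbnddef
  set aj : ℕ → ℝ := fun j => Real.sqrt (bnd j) with hajdef
  set mj : ℕ → ℕ := fun j => Nat.floor ((2:ℝ) ^ (((j:ℝ)+1)/(N:ℝ))) with hmjdef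
  set M : ℕ → Set Ω := fun j => {ω | ∃ t' : ℕ, 1 ≤ t' ∧ t' ≤ mj j ∧
    aj j ≤ (∑ i ∈ Finset.range t', Y i ω) - t' * μ} with hMdef
  have hjN1 : ∀ j : ℕ, 1 ≤ 1 + (j:ℝ)/(N:ℝ) := by
    intro j
    have : (0:ℝ) ≤ (j:ℝ)/(N:ℝ) := by positivity
    linarith
  have h2powpos : ∀ e : ℝ, (0:ℝ) < (2:ℝ)^e := fun e => Real.rpow_pos_of_pos two_pos e
  have hmj1 : ∀ j, 1 ≤ mj j := by
    intro j
    apply Nat.le_floor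
    rw [Nat.cast_one]
    calc (1:ℝ) = (2:ℝ)^(0:ℝ) := (Real.rpow_zero 2).symm
      _ ≤ (2:ℝ)^(((j:ℝ)+1)/(N:ℝ)) :=
        Real.rpow_le_rpow_of_exponent_le one_le_two (by positivity)
  have hmjle : ∀ j, (mj j : ℝ) ≤ (2:ℝ)^(((j:ℝ)+1)/(N:ℝ)) := fun j => Nat.floor_le (h2powpos _).le
  have hmjpos : ∀ j, (0:ℝ) < (mj j : ℝ) := fun j => by exact_mod_cast hmj1 j
  have hlogRj : ∀ j : ℕ, 0 ≤ Real.log (κ * (1 + (j:ℝ)/(N:ℝ)) / δ) := fun j => hlogR_nonneg _ (hjN1 j)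
  have hbnd_nonneg : ∀ j, 0 ≤ bnd j :=
    fun j => mul_nonneg (mul_nonneg (by positivity) (hlogRj j)) (h2powpos _).le
  have hBern : (2:ℝ) ^ ((1:ℝ)/(N:ℝ)) ≤ c := by
    have h2 := one_add_mul_le_pow (a := 1/(N:ℝ))
      (le_trans (by norm_num : (-2:ℝ) ≤ 0) (by positivity)) N
    have h3 : 1 + (N:ℝ)*(1/(N:ℝ)) = 2 := by
      rw [mul_one_div_cancel hNR.ne']
      norm_num
    have h1 : (2:ℝ) ≤ c ^ (N:ℕ) := by
      rw [hcN]
      linarith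
    calc (2:ℝ) ^ ((1:ℝ)/(N:ℝ)) ≤ (c ^ (N:ℕ)) ^ ((1:ℝ)/(N:ℝ)) :=
          Real.rpow_le_rpow (by norm_num) h1 (by positivity)
      _ = c := by
          rw [← Real.rpow_natCast c N, ← Real.rpow_mul hcpos.le,
            show (N:ℝ) * ((1:ℝ)/(N:ℝ)) = 1 by field_simp, Real.rpow_one]
  have hce : c ≤ c^2 * (2:ℝ)^(-((1:ℝ)/(N:ℝ))) := by
    rw [Real.rpow_neg (by norm_num)]
    have h5 : c * (2:ℝ)^((1:ℝ)/(N:ℝ)) ≤ c^2 := by nlinarith [h2powpos ((1:ℝ)/(N:ℝ))]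
    calc c = c * (2:ℝ)^((1:ℝ)/(N:ℝ)) * ((2:ℝ)^((1:ℝ)/(N:ℝ)))⁻¹ := by
          field_simp
      _ ≤ c^2 * ((2:ℝ)^((1:ℝ)/(N:ℝ)))⁻¹ :=
          mul_le_mul_of_nonneg_right h5 (by positivity)
  have hblock : ∀ j : ℕ, P (M j) ≤ ENNReal.ofReal ((δ/S) * (1 + (j:ℝ)/(N:ℝ)) ^ (-c)) := by
    intro j
    calc P (M j) ≤ ENNReal.ofReal (Real.exp (-(2 * (aj j)^2 / (mj j)))) :=
          max_hoeffding P Y hmeas hindep hbdd hμ hmean (mj j) (hmj1 j) (Real.sqrt_nonneg _)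
      _ ≤ ENNReal.ofReal ((δ/S) * (1 + (j:ℝ)/(N:ℝ)) ^ (-c)) := by
          apply ENNReal.ofReal_le_ofReal
          have hsq : (aj j)^2 = bnd j := Real.sq_sqrt (hbnd_nonneg j)
          have h1 : 2 * (aj j)^2 / (2:ℝ)^(((j:ℝ)+1)/(N:ℝ)) ≤ 2 * (aj j)^2 / (mj j) :=
            div_le_div_of_nonneg_left (by positivity) (hmjpos j) (hmjle j)
          refine le_trans (Real.exp_le_exp.2 (by linarith :
            -(2 * (aj j)^2 / (mj j)) ≤ -(2 * (aj j)^2 / (2:ℝ)^(((j:ℝ)+1)/(N:ℝ))))) ?_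
          have hexp_split : (2:ℝ)^(-((1:ℝ)/(N:ℝ)))
              = (2:ℝ)^((j:ℝ)/(N:ℝ)) / (2:ℝ)^(((j:ℝ)+1)/(N:ℝ)) := by
            rw [← Real.rpow_sub two_pos]
            congr 1
            field_simp
            ring
          have harg : -(2 * (aj j)^2 / (2:ℝ)^(((j:ℝ)+1)/(N:ℝ)))
              = -((c^2 * (2:ℝ)^(-((1:ℝ)/(N:ℝ)))) * Real.log (κ * (1 + (j:ℝ)/(N:ℝ)) / δ)) := by
            rw [hsq, hexp_split]
            simp only [hbnddef]
            have hne : (2:ℝ)^(((j:ℝ)+1)/(N:ℝ)) ≠ 0 := (h2powpos _).ne'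
            generalize Real.log (κ * (1 + (j:ℝ)/(N:ℝ)) / δ) = L
            field_simp
          rw [harg, ← hRpow _ (hjN1 j)]
          exact hcore _ _ (hR1 _ (hjN1 j)) hce
  -- block inclusion
  have hblocksub : ∀ (t j : ℕ), 1 ≤ t → (2:ℝ)^((j:ℝ)/(N:ℝ)) ≤ (t:ℝ) →
      (t:ℝ) < (2:ℝ)^(((j:ℝ)+1)/(N:ℝ)) → A t ⊆ M j := by
    intro t j ht h2t ht2 ω hω
    obtain ⟨ht0, hgt⟩ := hω
    have htpos : (0:ℝ) < t := by exact_mod_cast ht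
    refine ⟨t, ht, Nat.le_floor ht2.le, ?_⟩
    have hLj : 1 + (j:ℝ)/(N:ℝ) ≤ Real.logb 2 (2*(t:ℝ)) := by
      have hlogt : (j:ℝ)/(N:ℝ) ≤ Real.logb 2 (t:ℝ) := by
        calc (j:ℝ)/(N:ℝ) = Real.logb 2 ((2:ℝ)^((j:ℝ)/(N:ℝ))) :=
              (Real.logb_rpow two_pos (by norm_num)).symm
          _ ≤ Real.logb 2 (t:ℝ) :=
              Real.logb_le_logb_of_le one_lt_two (h2powpos _) h2t
      have : Real.logb 2 (2*(t:ℝ)) = 1 + Real.logb 2 (t:ℝ) := by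
        rw [Real.logb_mul two_ne_zero htpos.ne', Real.logb_self_eq_one one_lt_two]
      linarith
    have hstep : aj j ≤ (t:ℝ) * z t := by
      rw [hz t, hsqrt_mul _ t ht]
      apply Real.sqrt_le_sqrt
      have hmono : Real.log (κ * (1 + (j:ℝ)/(N:ℝ)) / δ) ≤
          Real.log (κ * Real.logb 2 (2*(t:ℝ)) / δ) := by
        apply Real.log_le_log (by positivity)
        exact (div_le_div_iff_of_pos_right hδ0).2 (mul_le_mul_of_nonneg_left hLj hκpos.le)
      calc bnd j ≤ ((1/2) * c^2 * Real.log (κ * Real.logb 2 (2*(t:ℝ)) / δ)) * (t:ℝ) := by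
            apply mul_le_mul
            · exact mul_le_mul_of_nonneg_left hmono (by positivity)
            · exact h2t
            · exact (h2powpos _).le
            · exact mul_nonneg (by positivity) (hlogR_nonneg _ (hL1 t ht))
        _ = (1/2) * c^2 * Real.log (κ * Real.logb 2 (2*(t:ℝ)) / δ) * (t:ℝ) := by ring
    have h2' := mul_lt_mul_of_pos_left hgt htpos
    have h3 : (t:ℝ) * ((∑ i ∈ Finset.range t, Y i ω)/(t:ℝ) - μ)
        = (∑ i ∈ Finset.range t, Y i ω) - t * μ := by
      field_simp
    rw [h3] at h2'
    linarith
  have hNpos : 0 < N := hN1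
  -- rewrite goal as a union
  have hgoal_eq : {ω | ∃ t : ℕ, 0 < t ∧
      (∑ j ∈ Finset.range t, Y j ω) / (t:ℝ) - μ > z t} = ⋃ t : ℕ, A t := by
    ext ω
    simp only [hAdef, Set.mem_setOf_eq, Set.mem_iUnion]
  set U : Set Ω := ⋃ k : ℕ, ⋃ r ∈ Finset.range N, M ((k + l) * N + r) with hUdef
  have hcover : (⋃ t : ℕ, A t) ⊆ (⋃ t ∈ D, A t) ∪ U := by
    intro ω hω
    rw [Set.mem_iUnion] at hω
    obtain ⟨t, hωt⟩ := hω
    have ht1 : 1 ≤ t := hωt.1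
    by_cases hsmallcase : l ≠ 0 ∧ t ≤ N
    · left
      refine Set.mem_biUnion ?_ hωt
      rw [hDdef, if_pos hsmallcase.1]
      exact Finset.mem_Icc.mpr ⟨ht1, hsmallcase.2⟩
    · right
      have htR : (1:ℝ) ≤ (t:ℝ) := by exact_mod_cast ht1
      have htpos : (0:ℝ) < (t:ℝ) := by linarith
      have hlogtnn : 0 ≤ (N:ℝ) * Real.logb 2 (t:ℝ) :=
        mul_nonneg hNR.le (Real.logb_nonneg one_lt_two htR)
      set j : ℕ := Nat.floor ((N:ℝ) * Real.logb 2 (t:ℝ)) with hjdef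
      have hj1 : (2:ℝ)^((j:ℝ)/(N:ℝ)) ≤ (t:ℝ) := by
        have h1 : (j:ℝ) ≤ (N:ℝ) * Real.logb 2 (t:ℝ) := Nat.floor_le hlogtnn
        have h2 : (j:ℝ)/(N:ℝ) ≤ Real.logb 2 (t:ℝ) := by
          rw [div_le_iff₀ hNR]
          linarith
        calc (2:ℝ)^((j:ℝ)/(N:ℝ)) ≤ (2:ℝ)^(Real.logb 2 (t:ℝ)) :=
              Real.rpow_le_rpow_of_exponent_le one_le_two h2
          _ = (t:ℝ) := Real.rpow_logb two_pos (by norm_num) htpos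
      have hj2 : (t:ℝ) < (2:ℝ)^(((j:ℝ)+1)/(N:ℝ)) := by
        have h1 : (N:ℝ) * Real.logb 2 (t:ℝ) < (j:ℝ) + 1 := Nat.lt_floor_add_one _
        have h2 : Real.logb 2 (t:ℝ) < ((j:ℝ)+1)/(N:ℝ) := by
          rw [lt_div_iff₀ hNR]
          linarith
        calc (t:ℝ) = (2:ℝ)^(Real.logb 2 (t:ℝ)) :=
              (Real.rpow_logb two_pos (by norm_num) htpos).symm
          _ < (2:ℝ)^(((j:ℝ)+1)/(N:ℝ)) := Real.rpow_lt_rpow_of_exponent_lt one_lt_two h2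
      have hjlN : l * N ≤ j := by
        by_cases hl0 : l = 0
        · simp [hl0]
        · have htN : N < t := by
            by_contra hcon
            push_neg at hcon
            exact hsmallcase ⟨hl0, hcon⟩
          have hNt : (N:ℝ) < (t:ℝ) := by exact_mod_cast htN
          have h2lN : ((2:ℝ))^((l:ℝ)) = (N:ℝ) := by
            rw [show ((l:ℝ)) = ((l:ℕ):ℝ) from rfl, Real.rpow_natCast]
            rw [hN]
            push_cast
            ring
          have hlogN : (l:ℝ) ≤ Real.logb 2 (t:ℝ) := by
            calc (l:ℝ) = Real.logb 2 ((2:ℝ)^((l:ℝ))) :=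
                  (Real.logb_rpow two_pos (by norm_num)).symm
              _ ≤ Real.logb 2 (t:ℝ) := by
                  apply Real.logb_le_logb_of_le one_lt_two (h2powpos _)
                  rw [h2lN]
                  linarith
          apply Nat.le_floor
          push_cast
          calc (l:ℝ) * (N:ℝ) ≤ Real.logb 2 (t:ℝ) * (N:ℝ) :=
                mul_le_mul_of_nonneg_right hlogN hNR.le
            _ = (N:ℝ) * Real.logb 2 (t:ℝ) := mul_comm _ _
      have hmem : ω ∈ M j := hblocksub t j ht1 hj1 hj2 hωt
      have h1 : l ≤ j / N := (Nat.le_div_iff_mul_le hNpos).mpr hjlN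
      have hdecomp : (j / N - l + l) * N + j % N = j := by
        rw [Nat.sub_add_cancel h1, mul_comm, Nat.div_add_mod]
      rw [hUdef, Set.mem_iUnion]
      refine ⟨j / N - l, ?_⟩
      refine Set.mem_biUnion (Finset.mem_range.mpr (Nat.mod_lt j hNpos)) ?_
      rw [hdecomp]
      exact hmem
  have hdSnonneg : (0:ℝ) ≤ δ / S := div_nonneg hδ0.le hSpos.le
  rw [hgoal_eq]
  calc P (⋃ t : ℕ, A t) ≤ P ((⋃ t ∈ D, A t) ∪ U) := measure_mono hcover
    _ ≤ P (⋃ t ∈ D, A t) + P U := measure_union_le _ _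
    _ ≤ (∑ t ∈ D, P (A t)) +
        ∑' k : ℕ, ∑ r ∈ Finset.range N, P (M ((k + l) * N + r)) := by
        refine add_le_add (measure_biUnion_finset_le D A) ?_
        rw [hUdef]
        refine le_trans (measure_iUnion_le _) ?_
        exact ENNReal.tsum_le_tsum fun k => measure_biUnion_finset_le _ _
    _ ≤ ENNReal.ofReal ((δ/S) * S1) + ENNReal.ofReal ((δ/S) * ((N:ℝ) * S2)) := by
        refine add_le_add ?_ ?_
        · calc ∑ t ∈ D, P (A t)
              ≤ ∑ t ∈ D, ENNReal.ofReal ((δ/S) * (Real.logb 2 (2*(t:ℝ))) ^ (-c)) :=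
                Finset.sum_le_sum fun t ht => hsmall t (hDmem t ht).1
            _ = ENNReal.ofReal (∑ t ∈ D, (δ/S) * (Real.logb 2 (2*(t:ℝ))) ^ (-c)) := by
                rw [← ENNReal.ofReal_sum_of_nonneg]
                intro t ht
                have h1 : (1:ℝ) ≤ (t:ℝ) := by exact_mod_cast (hDmem t ht).1
                exact mul_nonneg hdSnonneg
                  (Real.rpow_nonneg (Real.logb_nonneg one_lt_two (by linarith)) _)
            _ = ENNReal.ofReal ((δ/S) * S1) := by
                rw [hS1def, Finset.mul_sum]
        · calc ∑' k : ℕ, ∑ r ∈ Finset.range N, P (M ((k + l) * N + r))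
              ≤ ∑' k : ℕ, ∑ r ∈ Finset.range N,
                  ENNReal.ofReal ((δ/S) * ((k:ℝ) + (l:ℝ) + 1) ^ (-c)) := by
                refine ENNReal.tsum_le_tsum fun k => Finset.sum_le_sum fun r hr => ?_
                refine le_trans (hblock ((k + l) * N + r)) (ENNReal.ofReal_le_ofReal ?_)
                refine mul_le_mul_of_nonneg_left ?_ hdSnonneg
                have hbase : (k:ℝ) + (l:ℝ) + 1 ≤ 1 + (((k + l) * N + r : ℕ):ℝ)/(N:ℝ) := by
                  have hr0 : (0:ℝ) ≤ (r:ℝ) := Nat.cast_nonneg r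
                  have hd : ((k:ℝ)+(l:ℝ)) ≤ (((k:ℝ)+(l:ℝ))*(N:ℝ) + (r:ℝ))/(N:ℝ) := by
                    rw [le_div_iff₀ hNR]
                    nlinarith
                  push_cast
                  linarith
                rw [Real.rpow_neg (hterm_pos k).le, Real.rpow_neg (by positivity)]
                apply inv_anti₀ (Real.rpow_pos_of_pos (hterm_pos k) c)
                exact Real.rpow_le_rpow (hterm_pos k).le hbase hcpos.le
            _ = ∑' k : ℕ, (N : ℝ≥0∞) * ENNReal.ofReal ((δ/S) * ((k:ℝ) + (l:ℝ) + 1) ^ (-c)) := by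
                congr 1
                funext k
                rw [Finset.sum_const, Finset.card_range, nsmul_eq_mul]
            _ = (N : ℝ≥0∞) * ∑' k : ℕ, ENNReal.ofReal ((δ/S) * ((k:ℝ) + (l:ℝ) + 1) ^ (-c)) :=
                ENNReal.tsum_mul_left
            _ = ENNReal.ofReal ((δ/S) * ((N:ℝ) * S2)) := by
                rw [← ENNReal.ofReal_tsum_of_nonneg
                  (fun k => mul_nonneg hdSnonneg (Real.rpow_nonneg (hterm_pos k).le _))
                  (hsummable.mul_left _)]
                rw [show ((N:ℕ) : ℝ≥0∞) = ENNReal.ofReal ((N:ℕ):ℝ) by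
                    rw [ENNReal.ofReal_natCast],
                  ← ENNReal.ofReal_mul (Nat.cast_nonneg N)]
                congr 1
                rw [tsum_mul_left, hS2def]
                ring
    _ = ENNReal.ofReal δ := by
        rw [← ENNReal.ofReal_add
          (mul_nonneg hdSnonneg hS1nonneg)
          (mul_nonneg hdSnonneg (mul_nonneg hNR.le hS2pos.le)),
          ← mul_add, ← hSdef, div_mul_cancel₀ δ hSpos.ne']
end

section
/- The random confidence level Δ := sup{ ε ∈ (0,1) : U_t(ε) ≥ μ for all t ∈ ℕ } (with sup ∅ = 0) satisfies P( Δ < γ ) ≤ γ for every γ ∈ (0,1); consequently, for any μ̃ ∈ (μ,1) and z ≥ 0, P( log(1/Δ) / D*(μ, μ̃) ≥ z ) ≤ exp( −D*(μ, μ̃)·z ). -/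
open MeasureTheory ProbabilityTheory Set

/-- Real-valued Bernoulli KL formula. -/
noncomputable def klBerR (p q : ℝ) : ℝ :=
  p * Real.log (p / q) + (1 - p) * Real.log ((1 - p) / (1 - q))

/-- KL divergence between Bernoulli(p) and Bernoulli(q), with the convention
`D(p,q) = ⊤` when `q ∈ {0,1}` and `p ≠ q`. -/
noncomputable def klBer (p q : ℝ) : EReal :=
  if (q = 0 ∨ q = 1) ∧ p ≠ q then ⊤ else ((klBerR p q : ℝ) : EReal)

/-- Chernoff information between Bernoulli(x) and Bernoulli(y) for `0 < x < y < 1`. -/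
noncomputable def chernoffR (x y : ℝ) : ℝ :=
  ⨅ z : Set.Ioo (0:ℝ) 1, max (klBerR z x) (klBerR z y)

namespace KLAux

/-- auxiliary smooth version -/
noncomputable def F (μ p : ℝ) : ℝ :=
  p * Real.log p - p * Real.log μ + (1 - p) * Real.log (1 - p) - (1 - p) * Real.log (1 - μ)

lemma klBerR_eq_F {μ : ℝ} (hμ : μ ∈ Set.Ioo (0:ℝ) 1) {p : ℝ} (hp : p ∈ Set.Icc 0 μ) :
    klBerR p μ = F μ p := by
  obtain ⟨hμ0, hμ1⟩ := hμ
  obtain ⟨hp0, hpμ⟩ := hp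
  have h1μ : (1:ℝ) - μ ≠ 0 := by linarith
  have h1p : (1:ℝ) - p > 0 := by linarith
  rcases eq_or_lt_of_le hp0 with h | h
  · subst h
    simp [klBerR, F, Real.log_div one_ne_zero h1μ]
  · unfold klBerR F
    rw [Real.log_div (ne_of_gt h) (ne_of_gt hμ0), Real.log_div (ne_of_gt h1p) h1μ]
    ring

lemma continuousOn_F (μ : ℝ) : Continuous (F μ) := by
  have h1 : Continuous fun p : ℝ => p * Real.log p := Real.continuous_mul_log
  have h2 : Continuous fun p : ℝ => (1 - p) * Real.log (1 - p) :=
    h1.comp (continuous_const.sub continuous_id)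
  unfold F
  fun_prop

lemma hasDerivAt_F {μ : ℝ} (hμ : μ ∈ Set.Ioo (0:ℝ) 1) {p : ℝ} (hp : p ∈ Set.Ioo 0 μ) :
    HasDerivAt (F μ)
      (Real.log p - Real.log μ - Real.log (1 - p) + Real.log (1 - μ)) p := by
  obtain ⟨hp0, hpμ⟩ := hp
  have h1p : (1:ℝ) - p ≠ 0 := by nlinarith [hμ.2]
  have d1 : HasDerivAt (fun p : ℝ => p * Real.log p) (Real.log p + 1) p :=
    Real.hasDerivAt_mul_log (ne_of_gt hp0)
  have d2 : HasDerivAt (fun p : ℝ => (1 - p) * Real.log (1 - p))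
      (-(Real.log (1 - p) + 1)) p := by
    have := (Real.hasDerivAt_mul_log h1p).comp p
      (((hasDerivAt_id p).const_sub 1))
    simpa [mul_comm, Function.comp_def] using this
  have d3 : HasDerivAt (fun p : ℝ => p * Real.log μ) (Real.log μ) p := by
    simpa using (hasDerivAt_id p).mul_const (Real.log μ)
  have d4 : HasDerivAt (fun p : ℝ => (1 - p) * Real.log (1 - μ)) (-Real.log (1 - μ)) p := by
    simpa using ((hasDerivAt_id p).const_sub 1).mul_const (Real.log (1 - μ))
  have := ((d1.sub d3).add d2).sub d4
  exact this.congr_deriv (by ring)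

lemma strictAntiOn_klBerR {μ : ℝ} (hμ : μ ∈ Set.Ioo (0:ℝ) 1) :
    StrictAntiOn (fun p => klBerR p μ) (Set.Icc 0 μ) := by
  have key : StrictAntiOn (F μ) (Set.Icc 0 μ) := by
    apply strictAntiOn_of_deriv_neg (convex_Icc 0 μ) (continuousOn_F μ).continuousOn
    intro p hp
    rw [interior_Icc] at hp
    rw [(hasDerivAt_F hμ hp).deriv]
    obtain ⟨hp0, hpμ⟩ := hp
    have h1 : (0:ℝ) < 1 - p := by nlinarith [hμ.2]
    have h2 : (0:ℝ) < 1 - μ := by linarith [hμ.2]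
    have : Real.log (p * (1 - μ)) < Real.log (μ * (1 - p)) := by
      apply Real.log_lt_log (by positivity)
      nlinarith
    rw [Real.log_mul (ne_of_gt hp0) (ne_of_gt h2)] at this
    rw [Real.log_mul (ne_of_gt hμ.1) (ne_of_gt h1)] at this
    linarith
  intro a ha b hb hab
  simp only
  rw [klBerR_eq_F hμ ha, klBerR_eq_F hμ hb]
  exact key ha hb hab

lemma klBerR_self {μ : ℝ} : klBerR μ μ = 0 := by
  have h : ∀ x : ℝ, Real.log (x / x) = 0 := by
    intro x
    rcases eq_or_ne x 0 with h | h
    · simp [h]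
    · simp [div_self h]
  simp [klBerR, h]

lemma klBerR_zero {μ : ℝ} (hμ : μ ∈ Set.Ioo (0:ℝ) 1) :
    klBerR 0 μ = -Real.log (1 - μ) := by
  have h1μ : (1:ℝ) - μ ≠ 0 := by linarith [hμ.2]
  simp [klBerR, Real.log_div one_ne_zero h1μ]

lemma klBerR_le_zero_left {μ : ℝ} (hμ : μ ∈ Set.Ioo (0:ℝ) 1) {p : ℝ}
    (hp : p ∈ Set.Icc 0 μ) : klBerR p μ ≤ klBerR 0 μ := by
  rcases eq_or_lt_of_le hp.1 with h | h
  · rw [← h]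
  · exact le_of_lt (strictAntiOn_klBerR hμ (by constructor <;> [rfl; exact hμ.1.le]) hp h)

lemma lt_of_klBerR_gt {μ : ℝ} (hμ : μ ∈ Set.Ioo (0:ℝ) 1) {p z : ℝ}
    (hp : p ∈ Set.Icc 0 μ) (hz : z ∈ Set.Icc 0 μ)
    (h : klBerR z μ < klBerR p μ) : p < z := by
  by_contra hcon
  push_neg at hcon
  rcases eq_or_lt_of_le hcon with he | hlt
  · rw [he] at h; exact lt_irrefl _ h
  · exact absurd (strictAntiOn_klBerR hμ hz hp hlt) (not_lt.2 h.le)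

/-- IVT: existence of `z` with `klBerR z μ = d`. -/
lemma exists_z {μ : ℝ} (hμ : μ ∈ Set.Ioo (0:ℝ) 1) {d : ℝ} (hd0 : 0 < d)
    (hd1 : d < klBerR 0 μ) : ∃ z ∈ Set.Ioo 0 μ, klBerR z μ = d := by
  have h0μ : (0:ℝ) ≤ μ := hμ.1.le
  have hFμ : F μ μ = 0 := by
    rw [← klBerR_eq_F hμ (by constructor <;> [exact h0μ; rfl]), klBerR_self]
  have hF0 : F μ 0 = klBerR 0 μ := by
    rw [← klBerR_eq_F hμ (by constructor <;> [rfl; exact h0μ])]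
  have := intermediate_value_Ioo' h0μ (continuousOn_F μ).continuousOn
    (a := 0) (b := μ)
  have hdm : d ∈ Set.Ioo (F μ μ) (F μ 0) := by rw [hFμ, hF0]; exact ⟨hd0, hd1⟩
  obtain ⟨z, hz, hFz⟩ := this hdm
  exact ⟨z, hz, by rw [klBerR_eq_F hμ ⟨hz.1.le, hz.2.le⟩, hFz]⟩

/-- The Chernoff/Legendre identity at the optimal `λ`. -/
lemma lambda_identity {μ z : ℝ} (hμ : μ ∈ Set.Ioo (0:ℝ) 1) (hz : z ∈ Set.Ioo 0 μ) :
    let lam := Real.log (z * (1 - μ) / (μ * (1 - z)))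
    lam < 0 ∧ 0 < 1 - μ + μ * Real.exp lam ∧
      lam * z - Real.log (1 - μ + μ * Real.exp lam) = klBerR z μ := by
  intro lam
  obtain ⟨hz0, hzμ⟩ := hz
  obtain ⟨hμ0, hμ1⟩ := hμ
  have h1z : (0:ℝ) < 1 - z := by linarith
  have h1μ : (0:ℝ) < 1 - μ := by linarith
  have harg : (0:ℝ) < z * (1 - μ) / (μ * (1 - z)) := by positivity
  have hexp : Real.exp lam = z * (1 - μ) / (μ * (1 - z)) := Real.exp_log harg
  have hsum : 1 - μ + μ * Real.exp lam = (1 - μ) / (1 - z) := by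
    rw [hexp]; field_simp; ring
  have hlam : lam < 0 := by
    apply Real.log_neg harg
    rw [div_lt_one (by positivity)]
    nlinarith
  refine ⟨hlam, by rw [hsum]; positivity, ?_⟩
  rw [hsum]
  have hlameq : lam = Real.log z + Real.log (1 - μ) - Real.log μ - Real.log (1 - z) := by
    unfold lam
    rw [Real.log_div (by positivity) (by positivity),
      Real.log_mul (ne_of_gt hz0) (ne_of_gt h1μ),
      Real.log_mul (ne_of_gt hμ0) (ne_of_gt h1z)]
    ring
  rw [hlameq, Real.log_div (ne_of_gt h1μ) (ne_of_gt h1z)]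
  unfold klBerR
  rw [Real.log_div (ne_of_gt hz0) (ne_of_gt hμ0),
    Real.log_div (ne_of_gt h1z) (ne_of_gt h1μ)]
  ring

/-- convexity bound `exp (λ y) ≤ 1 - y + y * exp λ` for `y ∈ [0,1]`. -/
lemma exp_le_affine {lam y : ℝ} (hy : y ∈ Set.Icc (0:ℝ) 1) :
    Real.exp (lam * y) ≤ 1 - y + y * Real.exp lam := by
  obtain ⟨hy0, hy1⟩ := hy
  have := convexOn_exp.2 (Set.mem_univ (0:ℝ)) (Set.mem_univ lam)
    (by linarith : (0:ℝ) ≤ 1 - y) hy0 (by ring)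
  simpa [mul_comm] using this

end KLAux

open MeasureTheory ProbabilityTheory Set

namespace KLAux

variable {Ω : Type*} [MeasurableSpace Ω] {P : Measure Ω} [IsProbabilityMeasure P]

noncomputable def Wfun (Y : ℕ → Ω → ℝ) (φ : ℕ → ℝ → ℝ) (t : ℕ) (ω : Ω) : ℝ :=
  ∏ i ∈ Finset.range t, φ i (Y i ω)

omit [IsProbabilityMeasure P] in
lemma Wfun_meas {Y : ℕ → Ω → ℝ} (hmeas : ∀ i, Measurable (Y i))
    {φ : ℕ → ℝ → ℝ} (hφm : ∀ i, Measurable (φ i)) (t : ℕ) :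
    Measurable (Wfun Y φ t) :=
  Finset.measurable_prod _ (fun i _ => (hφm i).comp (hmeas i))

omit [IsProbabilityMeasure P] in
lemma integral_mul_split (Y : ℕ → Ω → ℝ) (hmeas : ∀ i, Measurable (Y i))
    (hindep : iIndepFun Y P)
    (φ : ℕ → ℝ → ℝ) (hφm : ∀ i, Measurable (φ i)) (m : ℕ)
    (F : ({i // i ∈ Finset.range m} → ℝ) → ℝ) (hF : Measurable F) :
    ∫ ω, F (fun i => Y i ω) * φ m (Y m ω) ∂P
      = (∫ ω, F (fun i => Y i ω) ∂P) * ∫ ω, φ m (Y m ω) ∂P := by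
  have hdisj : Disjoint (Finset.range m) ({m} : Finset ℕ) := by
    simp only [Finset.disjoint_left, Finset.mem_range, Finset.mem_singleton]
    omega
  have hI := hindep.indepFun_finset (Finset.range m) {m} hdisj hmeas
  have hGmeas : Measurable (fun w : {i // i ∈ ({m} : Finset ℕ)} → ℝ =>
      φ m (w ⟨m, Finset.mem_singleton_self m⟩)) :=
    (hφm m).comp (measurable_pi_apply _)
  have hI2 := hI.comp hF hGmeas
  exact IndepFun.integral_fun_mul_eq_mul_integral hI2
    (hF.comp (measurable_pi_lambda _ (fun i => hmeas i))).aestronglyMeasurable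
    ((hφm m).comp (hmeas m)).aestronglyMeasurable

omit [IsProbabilityMeasure P] in
/-- key independence step. -/
lemma integral_compl_hit (Y : ℕ → Ω → ℝ) (hmeas : ∀ i, Measurable (Y i))
    (hindep : iIndepFun Y P)
    (φ : ℕ → ℝ → ℝ) (hφm : ∀ i, Measurable (φ i))
    (hφint : ∀ i, ∫ ω, φ i (Y i ω) ∂P = 1)
    (a : ℝ) (m : ℕ) :
    ∫ ω in {ω | ∃ t ≤ m, a ≤ Wfun Y φ t ω}ᶜ, Wfun Y φ (m+1) ω ∂P
      = ∫ ω in {ω | ∃ t ≤ m, a ≤ Wfun Y φ t ω}ᶜ, Wfun Y φ m ω ∂P := by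
  classical
  set C : Set Ω := {ω | ∃ t ≤ m, a ≤ Wfun Y φ t ω}ᶜ with hC
  have hCmeas : MeasurableSet C := by
    rw [hC]
    apply MeasurableSet.compl
    have : {ω | ∃ t ≤ m, a ≤ Wfun Y φ t ω}
        = ⋃ t ∈ Finset.range (m+1), {ω | a ≤ Wfun Y φ t ω} := by
      ext ω
      simp only [Set.mem_setOf_eq, Set.mem_iUnion, Finset.mem_range, Nat.lt_succ_iff,
        exists_prop]
    rw [this]
    exact Finset.measurableSet_biUnion _
      (fun t _ => measurableSet_le measurable_const (Wfun_meas hmeas hφm t))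
  -- the finite-coordinate model
  let Wv : ℕ → ({i // i ∈ Finset.range m} → ℝ) → ℝ :=
    fun t v => ∏ i ∈ (Finset.range m).attach, (if (i : ℕ) < t then φ i (v i) else 1)
  have hWvmeas : ∀ t, Measurable (Wv t) := by
    intro t
    apply Finset.measurable_prod
    intro i _
    by_cases h : (i : ℕ) < t
    · simpa [h, Function.comp_def] using (hφm i).comp (measurable_pi_apply i)
    · simpa [h] using measurable_const
  have hWveq : ∀ t ≤ m, ∀ ω : Ω, Wv t (fun i => Y i ω) = Wfun Y φ t ω := by
    intro t ht ω
    show (∏ i ∈ (Finset.range m).attach,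
      (if (i : ℕ) < t then φ i (Y i ω) else 1)) = _
    rw [Finset.prod_attach (Finset.range m)
      (fun j => if j < t then φ j (Y j ω) else 1), ← Finset.prod_filter]
    unfold Wfun
    congr 1
    ext j
    simp only [Finset.mem_filter, Finset.mem_range]
    omega
  let A : Set ({i // i ∈ Finset.range m} → ℝ) := {v | ∃ t ≤ m, a ≤ Wv t v}
  have hAmeas : MeasurableSet A := by
    have : A = ⋃ t ∈ Finset.range (m+1), {v | a ≤ Wv t v} := by
      ext v
      simp only [A, Set.mem_setOf_eq, Set.mem_iUnion, Finset.mem_range, Nat.lt_succ_iff,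
        exists_prop]
    rw [this]
    exact Finset.measurableSet_biUnion _
      (fun t _ => measurableSet_le measurable_const (hWvmeas t))
  let F : ({i // i ∈ Finset.range m} → ℝ) → ℝ := Set.indicator Aᶜ (Wv m)
  have hFmeas : Measurable F := (hWvmeas m).indicator hAmeas.compl
  have hmem : ∀ ω : Ω, ((fun i : {i // i ∈ Finset.range m} => Y i ω) ∈ Aᶜ) ↔ ω ∈ C := by
    intro ω
    simp only [A, hC, Set.mem_compl_iff, Set.mem_setOf_eq, not_exists, not_and]
    constructor
    · intro h t ht
      have := h t ht
      rwa [hWveq t ht ω] at this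
    · intro h t ht
      rw [hWveq t ht ω]
      exact h t ht
  have hFeq : ∀ ω, F (fun i => Y i ω) = Set.indicator C (Wfun Y φ m) ω := by
    intro ω
    show Set.indicator Aᶜ (Wv m) _ = _
    by_cases hm : ω ∈ C
    · rw [Set.indicator_of_mem ((hmem ω).2 hm), Set.indicator_of_mem hm,
        hWveq m (le_refl m) ω]
    · rw [Set.indicator_of_notMem (fun hc => hm ((hmem ω).1 hc)),
        Set.indicator_of_notMem hm]
  have hptw : ∀ ω, Set.indicator C (Wfun Y φ (m+1)) ω
      = F (fun i => Y i ω) * φ m (Y m ω) := by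
    intro ω
    rw [hFeq]
    by_cases hm : ω ∈ C
    · rw [Set.indicator_of_mem hm, Set.indicator_of_mem hm]
      unfold Wfun
      rw [Finset.prod_range_succ]
    · rw [Set.indicator_of_notMem hm, Set.indicator_of_notMem hm, zero_mul]
  rw [← integral_indicator hCmeas, ← integral_indicator hCmeas]
  calc ∫ ω, Set.indicator C (Wfun Y φ (m+1)) ω ∂P
      = ∫ ω, F (fun i => Y i ω) * φ m (Y m ω) ∂P := by
        congr 1; funext ω; exact hptw ω
    _ = (∫ ω, F (fun i => Y i ω) ∂P) * ∫ ω, φ m (Y m ω) ∂P :=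
        integral_mul_split Y hmeas hindep φ hφm m F hFmeas
    _ = ∫ ω, Set.indicator C (Wfun Y φ m) ω ∂P := by
        rw [hφint m, mul_one]
        congr 1; funext ω; exact hFeq ω

/-- Ville-type maximal inequality for products of independent nonnegative
mean-one random variables. -/
lemma maximal_prod (Y : ℕ → Ω → ℝ) (hmeas : ∀ i, Measurable (Y i))
    (hindep : iIndepFun Y P)
    (φ : ℕ → ℝ → ℝ) (hφm : ∀ i, Measurable (φ i))
    (hφnn : ∀ i ω, 0 ≤ φ i (Y i ω))
    (hφbd : ∀ i, ∃ C : ℝ, ∀ ω, φ i (Y i ω) ≤ C)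
    (hφint : ∀ i, ∫ ω, φ i (Y i ω) ∂P = 1)
    (a : ℝ) (ha : 0 < a) (n : ℕ) :
    P {ω | ∃ t ≤ n, a ≤ Wfun Y φ t ω} ≤ ENNReal.ofReal (1/a) := by
  set W : ℕ → Ω → ℝ := Wfun Y φ with hWdef
  have hWmeas : ∀ t, Measurable (W t) := fun t => Wfun_meas hmeas hφm t
  have hWnn : ∀ t ω, 0 ≤ W t ω := fun t ω =>
    Finset.prod_nonneg (fun i _ => hφnn i ω)
  have hWbd : ∀ t, ∃ C : ℝ, ∀ ω, W t ω ≤ C := by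
    intro t
    choose C hC using hφbd
    refine ⟨∏ i ∈ Finset.range t, max (C i) 0, fun ω => ?_⟩
    exact Finset.prod_le_prod (fun i _ => hφnn i ω)
      (fun i _ => le_max_of_le_left (hC i ω))
  have hWint : ∀ t, Integrable (W t) P := by
    intro t
    obtain ⟨C, hC⟩ := hWbd t
    refine (integrable_const C).mono' ((hWmeas t).aestronglyMeasurable) ?_
    filter_upwards with ω
    rw [Real.norm_eq_abs, abs_of_nonneg (hWnn t ω)]
    exact hC ω
  set Hit : ℕ → Set Ω := fun n => {ω | ∃ t ≤ n, a ≤ W t ω} with hHit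
  have hHitMeas : ∀ n, MeasurableSet (Hit n) := by
    intro n
    have : Hit n = ⋃ t ∈ Finset.range (n+1), {ω | a ≤ W t ω} := by
      ext ω
      simp only [hHit, Set.mem_setOf_eq, Set.mem_iUnion, Finset.mem_range,
        Nat.lt_succ_iff, exists_prop]
    rw [this]
    exact Finset.measurableSet_biUnion _
      (fun t _ => measurableSet_le measurable_const (hWmeas t))
  have key : ∀ m : ℕ, a * (P (Hit m)).toReal + ∫ ω in (Hit m)ᶜ, W m ω ∂P ≤ 1 := by
    intro m
    induction m with
    | zero =>
      have hW0 : W 0 = fun _ => (1:ℝ) := by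
        funext ω; simp [hWdef, Wfun]
      by_cases h : a ≤ 1
      · have hu : Hit 0 = Set.univ := by
          ext ω
          simp only [hHit, Set.mem_setOf_eq, Set.mem_univ, iff_true]
          exact ⟨0, le_refl 0, by rw [hW0]; exact h⟩
        rw [hu]
        simp only [measure_univ, ENNReal.toReal_one, mul_one, Set.compl_univ,
          Measure.restrict_empty, integral_zero_measure, add_zero]
        exact h
      · have he : Hit 0 = ∅ := by
          ext ω
          simp only [hHit, Set.mem_setOf_eq, Set.mem_empty_iff_false, iff_false,
            not_exists, not_and]
          intro t ht
          interval_cases t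
          rw [hW0]
          intro hc
          exact h hc
        rw [he]
        simp only [measure_empty, ENNReal.toReal_zero, mul_zero, zero_add,
          Set.compl_empty, Measure.restrict_univ]
        rw [hW0]
        simp
    | succ m ih =>
      set C := (Hit m)ᶜ with hC
      set D := C ∩ {ω | a ≤ W (m+1) ω} with hD
      have hCmeas : MeasurableSet C := (hHitMeas m).compl
      have hDmeas : MeasurableSet D :=
        hCmeas.inter (measurableSet_le measurable_const (hWmeas (m+1)))
      have hsplit : Hit (m+1) = Hit m ∪ D := by
        ext ω
        simp only [hHit, hD, hC, Set.mem_setOf_eq, Set.mem_union, Set.mem_inter_iff,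
          Set.mem_compl_iff, not_exists, not_and]
        constructor
        · rintro ⟨t, ht, hle⟩
          by_cases hc : ∃ s ≤ m, a ≤ W s ω
          · exact Or.inl hc
          · push_neg at hc
            refine Or.inr ⟨fun s hs => not_le.2 (hc s hs), ?_⟩
            have htm : t = m + 1 := by
              by_contra hne
              exact absurd hle (not_le.2 (hc t (by omega)))
            rw [← htm]
            exact hle
        · rintro (⟨t, ht, h⟩ | ⟨_, h⟩)
          · exact ⟨t, by omega, h⟩
          · exact ⟨m+1, le_refl _, h⟩
      have hdisjHD : Disjoint (Hit m) D := by
        rw [Set.disjoint_left]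
        intro ω hω hωD
        exact hωD.1 hω
      have hPsum : (P (Hit (m+1))).toReal = (P (Hit m)).toReal + (P D).toReal := by
        rw [hsplit, measure_union hdisjHD hDmeas,
          ENNReal.toReal_add (measure_ne_top P _) (measure_ne_top P _)]
      have hcompl : (Hit (m+1))ᶜ = C ∩ {ω | W (m+1) ω < a} := by
        rw [hsplit, Set.compl_union]
        ext ω
        simp only [hD, Set.mem_inter_iff, Set.mem_compl_iff, Set.mem_setOf_eq, not_and,
          not_le]
        constructor
        · rintro ⟨h1, h2⟩
          exact ⟨h1, h2 h1⟩
        · rintro ⟨h1, h2⟩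
          exact ⟨h1, fun _ => h2⟩
      have I1 : a * (P D).toReal ≤ ∫ ω in D, W (m+1) ω ∂P := by
        have hmono := setIntegral_mono_on ((integrable_const a).integrableOn)
          ((hWint (m+1)).integrableOn) hDmeas (fun ω hω => hω.2)
        rwa [setIntegral_const, smul_eq_mul, mul_comm] at hmono
      have hCsplit : C = (C ∩ {ω | W (m+1) ω < a}) ∪ D := by
        ext ω
        simp only [hD, Set.mem_union, Set.mem_inter_iff, Set.mem_setOf_eq]
        constructor
        · intro h
          rcases lt_or_ge (W (m+1) ω) a with h' | h'
          · exact Or.inl ⟨h, h'⟩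
          · exact Or.inr ⟨h, h'⟩
        · rintro (⟨h, _⟩ | ⟨h, _⟩) <;> exact h
      have hdisj2 : Disjoint (C ∩ {ω | W (m+1) ω < a}) D := by
        rw [Set.disjoint_left]
        rintro ω ⟨_, h1⟩ ⟨_, h2⟩
        rw [Set.mem_setOf_eq] at h1 h2
        linarith
      have I2 : (∫ ω in C ∩ {ω | W (m+1) ω < a}, W (m+1) ω ∂P)
          + ∫ ω in D, W (m+1) ω ∂P = ∫ ω in C, W (m+1) ω ∂P := by
        have h1 := setIntegral_union hdisj2 hDmeas
          ((hWint (m+1)).integrableOn) ((hWint (m+1)).integrableOn)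
        rw [← h1, ← hCsplit]
      have I3 : (∫ ω in C, W (m+1) ω ∂P) = ∫ ω in C, W m ω ∂P :=
        integral_compl_hit Y hmeas hindep φ hφm hφint a m
      rw [hPsum, hcompl]
      nlinarith [I1, I2, I3, ih]
  have hkey := key n
  have hnonneg : 0 ≤ ∫ ω in (Hit n)ᶜ, W n ω ∂P :=
    setIntegral_nonneg (hHitMeas n).compl (fun ω _ => hWnn n ω)
  have htr : (P (Hit n)).toReal ≤ 1/a := by
    rw [le_div_iff₀ ha]
    nlinarith
  calc P (Hit n) = ENNReal.ofReal (P (Hit n)).toReal :=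
        (ENNReal.ofReal_toReal (measure_ne_top P _)).symm
    _ ≤ ENNReal.ofReal (1/a) := ENNReal.ofReal_le_ofReal htr

end KLAux

namespace KLAux

variable {Ω : Type*} [MeasurableSpace Ω] {P : Measure Ω} [IsProbabilityMeasure P]

/-- Per-slice deviation bound. -/
lemma slice_bound (Y : ℕ → Ω → ℝ) (hmeas : ∀ i, Measurable (Y i))
    (hindep : iIndepFun Y P)
    (hbdd : ∀ i ω, Y i ω ∈ Set.Icc (0:ℝ) 1)
    (μ : ℝ) (hμ : μ ∈ Set.Ioo (0:ℝ) 1)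
    (hmean : ∀ i, ∫ ω, Y i ω ∂P = μ)
    (emp : ℕ → Ω → ℝ)
    (hemp : ∀ t ω, emp t ω = (∑ j ∈ Finset.range t, Y j ω) / (t:ℝ))
    (d T1 : ℝ) (hd : 0 < d) (hT1 : 0 < T1) (n : ℕ) (U : Set ℕ)
    (hUrange : ∀ t ∈ U, T1 ≤ (t:ℝ) ∧ t ≤ n)
    (E : ℕ → Set Ω)
    (hE : ∀ t ∈ U, ∀ ω ∈ E t, emp t ω < μ ∧ d < klBerR (emp t ω) μ) :
    P (⋃ t ∈ U, E t) ≤ ENNReal.ofReal (Real.exp (-(T1 * d))) := by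
  have hempnn : ∀ t, 0 < t → ∀ ω, 0 ≤ emp t ω ∧ (t:ℝ) * emp t ω = ∑ j ∈ Finset.range t, Y j ω := by
    intro t ht ω
    have htR : (0:ℝ) < t := by exact_mod_cast ht
    constructor
    · rw [hemp]
      apply div_nonneg _ htR.le
      exact Finset.sum_nonneg (fun j _ => (hbdd j ω).1)
    · rw [hemp]
      field_simp
  by_cases hcase : klBerR 0 μ ≤ d
  · -- events are empty
    have : (⋃ t ∈ U, E t) = ∅ := by
      ext ω
      simp only [Set.mem_iUnion, Set.mem_empty_iff_false, iff_false, not_exists]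
      intro t ht hω
      obtain ⟨h1, h2⟩ := hE t ht ω hω
      have ht0 : 0 < t := by
        by_contra h
        push_neg at h
        interval_cases t
        · have := (hUrange 0 ht).1
          simp at this
          linarith
      have h0 := (hempnn t ht0 ω).1
      have := klBerR_le_zero_left hμ ⟨h0, h1.le⟩
      linarith
    rw [this]
    simp
  · push_neg at hcase
    obtain ⟨z, hz, hzd⟩ := exists_z hμ hd hcase
    have hlam := lambda_identity hμ hz
    set lam := Real.log (z * (1 - μ) / (μ * (1 - z))) with hlamdef
    obtain ⟨hlamneg, hpos, hident⟩ := hlam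
    set ψ := Real.log (1 - μ + μ * Real.exp lam) with hψ
    -- mgf facts
    have hintexp : ∀ i, Integrable (fun ω => Real.exp (lam * Y i ω)) P := by
      intro i
      refine (integrable_const (1:ℝ)).mono'
        ((Real.measurable_exp.comp (measurable_const.mul (hmeas i))).aestronglyMeasurable) ?_
      filter_upwards with ω
      rw [Real.norm_eq_abs, abs_of_nonneg (Real.exp_pos _).le, ← Real.exp_zero]
      apply Real.exp_le_exp.2
      have := (hbdd i ω).1
      nlinarith
    have hintY : ∀ i, Integrable (Y i) P := by
      intro i
      refine (integrable_const (1:ℝ)).mono' (hmeas i).aestronglyMeasurable ?_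
      filter_upwards with ω
      rw [Real.norm_eq_abs, abs_of_nonneg (hbdd i ω).1]
      exact (hbdd i ω).2
    set M : ℕ → ℝ := fun i => ∫ ω, Real.exp (lam * Y i ω) ∂P with hM
    have hMpos : ∀ i, 0 < M i := by
      intro i
      have : ∀ ω, Real.exp lam ≤ Real.exp (lam * Y i ω) := by
        intro ω
        apply Real.exp_le_exp.2
        have h1 := (hbdd i ω).2
        nlinarith
      have hle := integral_mono (integrable_const (Real.exp lam)) (hintexp i)
        (fun ω => this ω)
      rw [integral_const, probReal_univ, one_smul] at hle
      exact lt_of_lt_of_le (Real.exp_pos lam) hle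
    have hMle : ∀ i, M i ≤ Real.exp ψ := by
      intro i
      rw [hψ, Real.exp_log hpos]
      have hptw : ∀ ω, Real.exp (lam * Y i ω) ≤ 1 - Y i ω + Y i ω * Real.exp lam :=
        fun ω => exp_le_affine (hbdd i ω)
      have hrw : (fun ω => 1 - Y i ω + Y i ω * Real.exp lam)
          = fun ω => 1 + (Real.exp lam - 1) * Y i ω := by
        funext ω; ring
      have hint2 : Integrable (fun ω => 1 + (Real.exp lam - 1) * Y i ω) P :=
        (integrable_const (1:ℝ)).add ((hintY i).const_mul _)
      have hle := integral_mono (hintexp i) (by rw [hrw]; exact hint2) hptw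
      calc M i ≤ ∫ ω, (1 - Y i ω + Y i ω * Real.exp lam) ∂P := hle
        _ = 1 - μ + μ * Real.exp lam := by
            rw [hrw, integral_add (integrable_const (1:ℝ)) ((hintY i).const_mul _),
              integral_const_mul, integral_const, probReal_univ, hmean i]
            simp
            ring
    -- the product martingale
    set φ : ℕ → ℝ → ℝ := fun i x => Real.exp (lam * x) / M i with hφ
    have hφm : ∀ i, Measurable (φ i) := fun i =>
      (Real.measurable_exp.comp (measurable_const.mul measurable_id)).div_const _
    have hφnn : ∀ i ω, 0 ≤ φ i (Y i ω) := fun i ω =>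
      div_nonneg (Real.exp_pos _).le (hMpos i).le
    have hφbd : ∀ i, ∃ C : ℝ, ∀ ω, φ i (Y i ω) ≤ C := by
      intro i
      refine ⟨1 / M i, fun ω => ?_⟩
      have h1 : Real.exp (lam * Y i ω) ≤ 1 := by
        rw [← Real.exp_zero]
        apply Real.exp_le_exp.2
        nlinarith [(hbdd i ω).1]
      show Real.exp (lam * Y i ω) / M i ≤ 1 / M i
      have h2 := hMpos i
      gcongr
    have hφint : ∀ i, ∫ ω, φ i (Y i ω) ∂P = 1 := by
      intro i
      show (∫ ω, Real.exp (lam * Y i ω) / M i ∂P) = 1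
      rw [integral_div]
      exact div_self (ne_of_gt (hMpos i))
    set a : ℝ := Real.exp (T1 * d) with ha
    have hapos : 0 < a := Real.exp_pos _
    have hsub : (⋃ t ∈ U, E t) ⊆ {ω | ∃ t ≤ n, a ≤ Wfun Y φ t ω} := by
      intro ω hω
      rw [Set.mem_iUnion] at hω
      obtain ⟨t, hω2⟩ := hω
      rw [Set.mem_iUnion] at hω2
      obtain ⟨htU, hωE⟩ := hω2
      obtain ⟨hT1t, htn⟩ := hUrange t htU
      have ht0 : 0 < t := by
        by_contra h
        push_neg at h
        interval_cases t
        · simp at hT1t; linarith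
      obtain ⟨he1, he2⟩ := hE t htU ω hωE
      obtain ⟨hempnn', hempS⟩ := hempnn t ht0 ω
      -- emp < z
      have hez : emp t ω < z := by
        apply lt_of_klBerR_gt hμ ⟨hempnn', he1.le⟩ ⟨hz.1.le, hz.2.le⟩
        rw [hzd]; exact he2
      -- compute W
      have hWform : Wfun Y φ t ω
          = Real.exp (lam * ∑ j ∈ Finset.range t, Y j ω) / ∏ i ∈ Finset.range t, M i := by
        unfold Wfun
        rw [hφ]
        simp only
        rw [Finset.prod_div_distrib]
        congr 1
        rw [← Real.exp_sum, Finset.mul_sum]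
      have hprodM : (∏ i ∈ Finset.range t, M i) ≤ Real.exp ((t:ℝ) * ψ) := by
        calc (∏ i ∈ Finset.range t, M i) ≤ ∏ i ∈ Finset.range t, Real.exp ψ :=
              Finset.prod_le_prod (fun i _ => (hMpos i).le) (fun i _ => hMle i)
          _ = Real.exp ψ ^ t := by rw [Finset.prod_const, Finset.card_range]
          _ = Real.exp ((t:ℝ) * ψ) := by rw [← Real.exp_nat_mul]
      have hprodMpos : 0 < ∏ i ∈ Finset.range t, M i :=
        Finset.prod_pos (fun i _ => hMpos i)
      have hS : lam * ∑ j ∈ Finset.range t, Y j ω ≥ lam * ((t:ℝ) * z) := by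
        rw [← hempS]
        have : (t:ℝ) * emp t ω ≤ (t:ℝ) * z := by
          apply mul_le_mul_of_nonneg_left hez.le (by positivity)
        nlinarith [this, hlamneg]
      have hW1 : Real.exp ((t:ℝ) * d) ≤ Wfun Y φ t ω := by
        rw [hWform]
        rw [ge_iff_le] at hS
        have h1 : Real.exp (lam * ((t:ℝ)*z)) ≤ Real.exp (lam * ∑ j ∈ Finset.range t, Y j ω) :=
          Real.exp_le_exp.2 hS
        have h2 : Real.exp (lam * ∑ j ∈ Finset.range t, Y j ω) / ∏ i ∈ Finset.range t, M i
            ≥ Real.exp (lam * ∑ j ∈ Finset.range t, Y j ω) / Real.exp ((t:ℝ) * ψ) :=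
          div_le_div_of_nonneg_left (Real.exp_pos _).le hprodMpos hprodM
        have h3 : Real.exp (lam * ((t:ℝ)*z)) / Real.exp ((t:ℝ)*ψ)
            = Real.exp ((t:ℝ) * d) := by
          rw [← Real.exp_sub]
          congr 1
          rw [← hzd, ← hident]
          ring
        calc Real.exp ((t:ℝ)*d) = Real.exp (lam * ((t:ℝ)*z)) / Real.exp ((t:ℝ)*ψ) := h3.symm
          _ ≤ Real.exp (lam * ∑ j ∈ Finset.range t, Y j ω) / Real.exp ((t:ℝ)*ψ) :=
              by
            have hc := Real.exp_pos ((t:ℝ)*ψ)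
            exact (div_le_div_iff_of_pos_right hc).2 h1
          _ ≤ _ := h2
      have hadW : a ≤ Real.exp ((t:ℝ) * d) := by
        rw [ha]
        apply Real.exp_le_exp.2
        apply mul_le_mul_of_nonneg_right hT1t hd.le
      exact ⟨t, htn, le_trans hadW hW1⟩
    calc P (⋃ t ∈ U, E t) ≤ P {ω | ∃ t ≤ n, a ≤ Wfun Y φ t ω} := measure_mono hsub
      _ ≤ ENNReal.ofReal (1/a) :=
          maximal_prod Y hmeas hindep φ hφm hφnn hφbd hφint a hapos n
      _ = ENNReal.ofReal (Real.exp (-(T1 * d))) := by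
          rw [ha, Real.exp_neg, one_div]

end KLAux

namespace KLAux

/-- the constant `c(N)` dominates `(N+1)/N * 2^(1/N)`. -/
lemma c_bound (N : ℕ) (hN : 1 ≤ N) :
    0 < (N:ℝ) - Real.log ((N:ℝ)+1) ∧
    ((N:ℝ)+1)/(N:ℝ) * (2:ℝ)^((1:ℝ)/(N:ℝ)) ≤ ((N:ℝ)+1)/((N:ℝ) - Real.log ((N:ℝ)+1)) := by
  have hn1 : (1:ℝ) ≤ (N:ℝ) := by exact_mod_cast hN
  have hn0 : (0:ℝ) < (N:ℝ) := by linarith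
  have hlog : Real.log ((N:ℝ)+1) < (N:ℝ) := by
    have := Real.log_lt_sub_one_of_pos (x := (N:ℝ)+1) (by linarith) (by linarith)
    linarith
  have hpos : 0 < (N:ℝ) - Real.log ((N:ℝ)+1) := by linarith
  refine ⟨hpos, ?_⟩
  have hlog2 : Real.log 2 < 1 := by
    have := Real.log_lt_sub_one_of_pos (x := (2:ℝ)) (by norm_num) (by norm_num)
    linarith
  have hlog2nn : (0:ℝ) ≤ Real.log 2 := Real.log_nonneg (by norm_num)
  have hu : Real.log 2 / (N:ℝ) < 1 := by
    rw [div_lt_one hn0]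
    linarith
  have hunn : 0 ≤ Real.log 2 / (N:ℝ) := by positivity
  -- 2^(1/N) = exp (log 2 / N) ≤ 1/(1 - log2/N) = N/(N - log 2)
  have hrpow : (2:ℝ)^((1:ℝ)/(N:ℝ)) = Real.exp (Real.log 2 / (N:ℝ)) := by
    rw [Real.rpow_def_of_pos (by norm_num)]
    ring_nf
  have hexp : Real.exp (Real.log 2 / (N:ℝ)) ≤ 1 / (1 - Real.log 2 / (N:ℝ)) := by
    have h1 : 1 - Real.log 2 / (N:ℝ) ≤ Real.exp (-(Real.log 2 / (N:ℝ))) := by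
      have := Real.add_one_le_exp (-(Real.log 2 / (N:ℝ)))
      linarith
    have h2 : 0 < 1 - Real.log 2 / (N:ℝ) := by linarith
    rw [Real.exp_neg] at h1
    rw [le_div_iff₀ h2]
    have h3 : 0 < Real.exp (Real.log 2 / (N:ℝ)) := Real.exp_pos _
    calc Real.exp (Real.log 2 / (N:ℝ)) * (1 - Real.log 2 / (N:ℝ))
        ≤ Real.exp (Real.log 2 / (N:ℝ)) * (Real.exp (Real.log 2 / (N:ℝ)))⁻¹ := by
          apply mul_le_mul_of_nonneg_left h1 h3.le
      _ = 1 := mul_inv_cancel₀ (ne_of_gt h3)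
  have heq : 1 / (1 - Real.log 2 / (N:ℝ)) = (N:ℝ)/((N:ℝ) - Real.log 2) := by
    rw [div_eq_div_iff (by nlinarith) (by nlinarith)]
    field_simp
  have hfinal : ((N:ℝ)+1)/(N:ℝ) * ((N:ℝ)/((N:ℝ) - Real.log 2))
      ≤ ((N:ℝ)+1)/((N:ℝ) - Real.log ((N:ℝ)+1)) := by
    have hl2 : Real.log 2 ≤ Real.log ((N:ℝ)+1) := by
      apply Real.log_le_log (by norm_num)
      linarith
    rw [div_mul_div_comm]
    rw [div_le_div_iff₀ (by nlinarith) hpos]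
    have hNn : (0:ℝ) < (N:ℝ) + 1 := by linarith
    have key : ((N:ℝ)+1)*(N:ℝ)*Real.log 2 ≤ ((N:ℝ)+1)*(N:ℝ)*Real.log ((N:ℝ)+1) := by
      apply mul_le_mul_of_nonneg_left hl2 (by positivity)
    nlinarith [key]
  calc ((N:ℝ)+1)/(N:ℝ) * (2:ℝ)^((1:ℝ)/(N:ℝ))
      = ((N:ℝ)+1)/(N:ℝ) * Real.exp (Real.log 2 / (N:ℝ)) := by rw [hrpow]
    _ ≤ ((N:ℝ)+1)/(N:ℝ) * (1 / (1 - Real.log 2 / (N:ℝ))) := by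
        apply mul_le_mul_of_nonneg_left hexp (by positivity)
    _ = ((N:ℝ)+1)/(N:ℝ) * ((N:ℝ)/((N:ℝ) - Real.log 2)) := by rw [heq]
    _ ≤ _ := hfinal

/-- dyadic-grid covering: every `t ≥ 2^l` lies in some slice
`[2^(K + j/N), 2^(K + (j+1)/N)]` with `K = l + k` and `j < N`. -/
lemma covering (l N : ℕ) (hN : N = 2^l) (t : ℕ) (ht : N ≤ t) :
    ∃ k j : ℕ, j < N ∧
      (2:ℝ)^((((l+k:ℕ)):ℝ) + (j:ℝ)/(N:ℝ)) ≤ (t:ℝ) ∧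
      (t:ℝ) ≤ (2:ℝ)^((((l+k:ℕ)):ℝ) + ((j:ℝ)+1)/(N:ℝ)) := by
  have hN1 : 1 ≤ N := by rw [hN]; exact Nat.one_le_two_pow
  have ht1 : 1 ≤ t := le_trans hN1 ht
  have ht0 : t ≠ 0 := by omega
  set K := Nat.log 2 t with hK
  have hlK : l ≤ K := by
    rw [hK, Nat.le_log_iff_pow_le (by norm_num) ht0, ← hN]
    exact ht
  have h1 : 2^K ≤ t := Nat.pow_log_le_self 2 ht0
  have h2 : t < 2^(K+1) := Nat.lt_pow_succ_log_self (by norm_num) t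
  have hT0 : (0:ℝ) < (t:ℝ) := by exact_mod_cast Nat.pos_of_ne_zero ht0
  set β := Real.logb 2 (t:ℝ) with hβ
  have hβ1 : (K:ℝ) ≤ β := by
    rw [hβ]
    have : ((2:ℝ)^K : ℝ) ≤ (t:ℝ) := by exact_mod_cast h1
    calc (K:ℝ) = Real.logb 2 ((2:ℝ)^(K:ℕ)) := by
          rw [Real.logb_pow]
          simp [Real.logb_self_eq_one]
      _ ≤ Real.logb 2 (t:ℝ) := Real.logb_le_logb_of_le (by norm_num) (by positivity) this
  have hβ2 : β < (K:ℝ) + 1 := by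
    rw [hβ]
    have h2' : (t:ℝ) < (2:ℝ)^(K+1 : ℕ) := by exact_mod_cast h2
    calc Real.logb 2 (t:ℝ) < Real.logb 2 ((2:ℝ)^(K+1:ℕ)) :=
          Real.logb_lt_logb (by norm_num) hT0 h2'
      _ = (K:ℝ) + 1 := by
          rw [Real.logb_pow]
          simp [Real.logb_self_eq_one]
  have hNR : (0:ℝ) < (N:ℝ) := by exact_mod_cast hN1
  set j := ⌊(N:ℝ) * (β - (K:ℝ))⌋₊ with hj
  have hbKnn : 0 ≤ β - (K:ℝ) := by linarith
  have hjle : (j:ℝ) ≤ (N:ℝ) * (β - (K:ℝ)) := Nat.floor_le (by positivity)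
  have hjgt : (N:ℝ) * (β - (K:ℝ)) < (j:ℝ) + 1 := Nat.lt_floor_add_one _
  have hjN : j < N := by
    have : (N:ℝ) * (β - (K:ℝ)) < (N:ℝ) * 1 := by
      apply mul_lt_mul_of_pos_left (by linarith) hNR
    have hj2 : (j:ℝ) < (N:ℝ) := by
      calc (j:ℝ) ≤ (N:ℝ) * (β - (K:ℝ)) := hjle
        _ < (N:ℝ) := by linarith
    exact_mod_cast hj2
  refine ⟨K - l, j, hjN, ?_, ?_⟩
  · have hlk : l + (K - l) = K := by omega
    rw [hlk]
    have hexp : (K:ℝ) + (j:ℝ)/(N:ℝ) ≤ β := by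
      rw [← sub_nonneg]
      have : (j:ℝ)/(N:ℝ) ≤ β - (K:ℝ) := by
        rw [div_le_iff₀ hNR]
        nlinarith
      linarith
    calc (2:ℝ)^((K:ℝ) + (j:ℝ)/(N:ℝ)) ≤ (2:ℝ)^β :=
          Real.rpow_le_rpow_of_exponent_le (by norm_num) hexp
      _ = (t:ℝ) := Real.rpow_logb (by norm_num) (by norm_num) hT0
  · have hlk : l + (K - l) = K := by omega
    rw [hlk]
    have hexp : β ≤ (K:ℝ) + ((j:ℝ)+1)/(N:ℝ) := by
      have : β - (K:ℝ) ≤ ((j:ℝ)+1)/(N:ℝ) := by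
        rw [le_div_iff₀ hNR]
        nlinarith
      linarith
    calc (t:ℝ) = (2:ℝ)^β := (Real.rpow_logb (by norm_num) (by norm_num) hT0).symm
      _ ≤ (2:ℝ)^((K:ℝ) + ((j:ℝ)+1)/(N:ℝ)) :=
          Real.rpow_le_rpow_of_exponent_le (by norm_num) hexp

end KLAux

set_option maxHeartbeats 2000000 in
/-- The random confidence level `Δ = sup{ε ∈ (0,1) : U_t(ε) ≥ μ ∀t}` (with
`sup ∅ = 0`, which is Mathlib's convention for `sSup (∅ : Set ℝ)`) satisfies
`P(Δ < γ) ≤ γ`, and consequently `log(1/Δ)/D*(μ,μ̃)` has a sub-exponential tail. -/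
theorem lil_klucb_random_confidence_level
    {Ω : Type*} [MeasurableSpace Ω] (P : Measure Ω) [IsProbabilityMeasure P]
    (Y : ℕ → Ω → ℝ) (hmeas : ∀ i, Measurable (Y i))
    (hindep : iIndepFun Y P)
    (hident : ∀ i, IdentDistrib (Y i) (Y 0) P P)
    (hbdd : ∀ i ω, Y i ω ∈ Set.Icc (0:ℝ) 1)
    (μ : ℝ) (hμ : μ ∈ Set.Ioo (0:ℝ) 1)
    (hmean : ∀ i, ∫ ω, Y i ω ∂P = μ)
    (l N : ℕ) (hN : N = 2 ^ l)
    (κ : ℝ → ℝ)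
    (hκ : ∀ ε : ℝ, κ ε = ε ^ ((1:ℝ)/((N:ℝ)+1)) *
      ((if l ≠ 0 then
          ∑ t ∈ Finset.Icc 1 N, (Real.logb 2 (2*(t:ℝ))) ^ (-(((N:ℝ)+1)/(N:ℝ)))
        else 0)
        + (N:ℝ) * ∑' k : ℕ, ((k:ℝ) + (l:ℝ) + 1) ^ (-(((N:ℝ)+1)/(N:ℝ))))
        ^ ((N:ℝ)/((N:ℝ)+1)))
    (c : ℝ) (hc : c = ((N:ℝ)+1)/((N:ℝ) - Real.log ((N:ℝ)+1)))
    (f : ℕ → ℝ → ℝ)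
    (hf : ∀ t : ℕ, ∀ ε : ℝ,
      f t ε = c * Real.log (κ ε * Real.logb 2 (2*(t:ℝ)) / ε) / (t:ℝ))
    (emp : ℕ → Ω → ℝ)
    (hemp : ∀ t ω, emp t ω = (∑ j ∈ Finset.range t, Y j ω) / (t:ℝ))
    (U : ℕ → ℝ → Ω → ℝ)
    (hU : ∀ t : ℕ, ∀ ε : ℝ, ∀ ω, ∀ S : Set ℝ,
      S = {m : ℝ | m ∈ Set.Ioc (emp t ω) 1 ∧ klBer (emp t ω) m ≤ ((f t ε : ℝ) : EReal)} →
      (S.Nonempty → U t ε ω = sSup S) ∧ (¬ S.Nonempty → U t ε ω = emp t ω))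
    (Δ : Ω → ℝ)
    (hΔ : ∀ ω, Δ ω = sSup {ε : ℝ | ε ∈ Set.Ioo (0:ℝ) 1 ∧ ∀ t : ℕ, 0 < t → μ ≤ U t ε ω}) :
    (∀ γ : ℝ, γ ∈ Set.Ioo (0:ℝ) 1 → P {ω | Δ ω < γ} ≤ ENNReal.ofReal γ) ∧
    (∀ μt : ℝ, μt ∈ Set.Ioo μ 1 → ∀ zz : ℝ, 0 ≤ zz →
      P {ω | Real.log (1 / Δ ω) / chernoffR μ μt ≥ zz} ≤
        ENNReal.ofReal (Real.exp (-(chernoffR μ μt) * zz))) := by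
  obtain ⟨hμ0, hμ1⟩ := hμ
  have hN1 : 1 ≤ N := by rw [hN]; exact Nat.one_le_two_pow
  have hNR : (1:ℝ) ≤ (N:ℝ) := by exact_mod_cast hN1
  have hNR0 : (0:ℝ) < (N:ℝ) := by linarith
  set p : ℝ := ((N:ℝ)+1)/(N:ℝ) with hp
  have hp1 : 1 < p := by
    rw [hp, lt_div_iff₀ hNR0]; linarith
  have hp0 : 0 < p := by linarith
  obtain ⟨hcden, hcineq⟩ := KLAux.c_bound N hN1
  have hc0 : 0 < c := by
    rw [hc]; exact div_pos (by linarith) hcden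
  have h2pow_pos : (0:ℝ) < (2:ℝ)^((1:ℝ)/(N:ℝ)) := Real.rpow_pos_of_pos (by norm_num) _
  have hcp : p ≤ c * (2:ℝ)^(-(1:ℝ)/(N:ℝ)) := by
    have h1 : p * (2:ℝ)^((1:ℝ)/(N:ℝ)) ≤ c := by rw [hp, hc]; exact hcineq
    have h2 : (2:ℝ)^(-(1:ℝ)/(N:ℝ)) = ((2:ℝ)^((1:ℝ)/(N:ℝ)))⁻¹ := by
      rw [neg_div, Real.rpow_neg (by norm_num)]
    rw [h2, le_mul_inv_iff₀ h2pow_pos]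
    exact h1
  have h2powneg_le1 : (2:ℝ)^(-(1:ℝ)/(N:ℝ)) ≤ 1 := by
    apply Real.rpow_le_one_of_one_le_of_nonpos (by norm_num)
    rw [neg_div]
    simp only [Left.neg_nonpos_iff]
    positivity
  have hpc : p ≤ c :=
    le_trans hcp (by calc c * (2:ℝ)^(-(1:ℝ)/(N:ℝ)) ≤ c * 1 :=
        mul_le_mul_of_nonneg_left h2powneg_le1 hc0.le
      _ = c := mul_one c)
  have hsummable : Summable (fun k : ℕ => ((k:ℝ) + (l:ℝ) + 1) ^ (-p)) := by
    have h0 : Summable (fun n : ℕ => ((n:ℝ)) ^ (-p)) :=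
      Real.summable_nat_rpow.2 (by linarith)
    have h1 : Summable (fun k : ℕ => (((k + (l+1) : ℕ)):ℝ) ^ (-p)) :=
      (summable_nat_add_iff (l+1)).2 h0
    apply h1.congr
    intro k
    congr 2
    push_cast
    ring
  have htsum_nn : 0 ≤ ∑' k : ℕ, ((k:ℝ) + (l:ℝ) + 1) ^ (-p) :=
    tsum_nonneg (fun k => Real.rpow_nonneg (by positivity) _)
  set Aval : ℝ := (if l ≠ 0 then
      ∑ t ∈ Finset.Icc 1 N, (Real.logb 2 (2*(t:ℝ))) ^ (-p)
    else 0) + (N:ℝ) * ∑' k : ℕ, ((k:ℝ) + (l:ℝ) + 1) ^ (-p) with hAval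
  have hlogb_ge1 : ∀ t : ℕ, 1 ≤ t → 1 ≤ Real.logb 2 (2*(t:ℝ)) := by
    intro t ht
    have ht1 : (1:ℝ) ≤ (t:ℝ) := by exact_mod_cast ht
    calc (1:ℝ) = Real.logb 2 2 := (Real.logb_self_eq_one (by norm_num)).symm
      _ ≤ Real.logb 2 (2*(t:ℝ)) :=
          Real.logb_le_logb_of_le (by norm_num) (by norm_num) (by linarith)
  have hA1 : 1 ≤ Aval := by
    rw [hAval]
    by_cases hl : l = 0
    · subst hl
      simp only [ne_eq, not_true_eq_false, if_false]
      have h1 : (1:ℝ) ≤ ∑' k : ℕ, ((k:ℝ) + ((0:ℕ):ℝ) + 1) ^ (-p) := by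
        have h2 := Summable.le_tsum hsummable 0 (fun j _ => Real.rpow_nonneg (by positivity) _)
        have h3 : (((0:ℕ):ℝ) + ((0:ℕ):ℝ) + 1) ^ (-p) = 1 := by
          norm_num
        rw [h3] at h2
        exact h2
      calc (1:ℝ) = 1 * 1 := by ring
        _ ≤ (N:ℝ) * ∑' k : ℕ, ((k:ℝ) + ((0:ℕ):ℝ) + 1) ^ (-p) :=
            mul_le_mul hNR h1 (by norm_num) (by positivity)
        _ = 0 + (N:ℝ) * ∑' k : ℕ, ((k:ℝ) + ((0:ℕ):ℝ) + 1) ^ (-p) := by ring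
    · simp only [hl, ne_eq, not_false_eq_true, if_true]
      have hnn : ∀ t ∈ Finset.Icc 1 N, 0 ≤ (Real.logb 2 (2*(t:ℝ))) ^ (-p) := by
        intro t ht
        apply Real.rpow_nonneg
        have := hlogb_ge1 t (Finset.mem_Icc.1 ht).1
        linarith
      have hmem : 1 ∈ Finset.Icc 1 N := by
        rw [Finset.mem_Icc]; exact ⟨le_refl 1, hN1⟩
      have hval : (1:ℝ) ≤ (Real.logb 2 (2*((1:ℕ):ℝ))) ^ (-p) := by
        have : (2:ℝ)*((1:ℕ):ℝ) = 2 := by norm_num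
        rw [this, Real.logb_self_eq_one (by norm_num), Real.one_rpow]
      have hsum1 : (1:ℝ) ≤ ∑ t ∈ Finset.Icc 1 N, (Real.logb 2 (2*(t:ℝ))) ^ (-p) :=
        le_trans hval (Finset.single_le_sum hnn hmem)
      have h2 : 0 ≤ (N:ℝ) * ∑' k : ℕ, ((k:ℝ) + (l:ℝ) + 1) ^ (-p) := by positivity
      linarith
  have hA0 : 0 < Aval := lt_of_lt_of_le one_pos hA1
  -- ============ PART 1 ============
  have hpart1 : ∀ γ : ℝ, γ ∈ Set.Ioo (0:ℝ) 1 → P {ω | Δ ω < γ} ≤ ENNReal.ofReal γ := by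
    intro γ hγ
    obtain ⟨hγ0, hγ1⟩ := hγ
    have hκγ : κ γ = γ ^ ((1:ℝ)/((N:ℝ)+1)) * Aval ^ ((N:ℝ)/((N:ℝ)+1)) := hκ γ
    have hκpos : 0 < κ γ := by
      rw [hκγ]
      positivity
    have hκgt : γ < κ γ := by
      rw [hκγ]
      have h1 : (1:ℝ) ≤ Aval ^ ((N:ℝ)/((N:ℝ)+1)) :=
        Real.one_le_rpow hA1 (by positivity)
      have h2 : γ < γ ^ ((1:ℝ)/((N:ℝ)+1)) := by
        nth_rewrite 1 [← Real.rpow_one γ]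
        apply Real.rpow_lt_rpow_of_exponent_gt hγ0 hγ1
        rw [div_lt_one (by linarith)]
        linarith
      calc γ < γ ^ ((1:ℝ)/((N:ℝ)+1)) := h2
        _ = γ ^ ((1:ℝ)/((N:ℝ)+1)) * 1 := (mul_one _).symm
        _ ≤ γ ^ ((1:ℝ)/((N:ℝ)+1)) * Aval ^ ((N:ℝ)/((N:ℝ)+1)) := by
            apply mul_le_mul_of_nonneg_left h1 (by positivity)
    -- argument of the log is > 1 whenever the multiplier is ≥ 1
    have harg_gt1 : ∀ L : ℝ, 1 ≤ L → 1 < κ γ * L / γ := by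
      intro L hL
      rw [lt_div_iff₀ hγ0, one_mul]
      calc γ < κ γ := hκgt
        _ = κ γ * 1 := (mul_one _).symm
        _ ≤ κ γ * L := mul_le_mul_of_nonneg_left hL hκpos.le
    -- events
    set Aev : ℕ → Set Ω := fun t => {ω | emp t ω < μ ∧ f t γ < klBerR (emp t ω) μ}
      with hAev
    -- step 1: U_t < μ implies the KL event
    have hBadA : ∀ t : ℕ, ∀ ω : Ω, U t γ ω < μ → ω ∈ Aev t := by
      intro t ω hUlt
      obtain ⟨hne, hempty⟩ := hU t γ ω _ rfl
      set S : Set ℝ := {m : ℝ | m ∈ Set.Ioc (emp t ω) 1 ∧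
        klBer (emp t ω) m ≤ ((f t γ : ℝ) : EReal)} with hS
      have hbddS : BddAbove S := ⟨1, fun x hx => hx.1.2⟩
      have hemplt : emp t ω < μ := by
        by_contra hcon
        push_neg at hcon
        rcases Set.eq_empty_or_nonempty S with he | hne'
        · have := hempty (by rw [he]; exact Set.not_nonempty_empty)
          linarith
        · have hUeq := hne hne'
          obtain ⟨m0, hm0⟩ := hne'
          have : m0 ≤ U t γ ω := by rw [hUeq]; exact le_csSup hbddS hm0
          have hm0gt : emp t ω < m0 := hm0.1.1
          linarith
      refine ⟨hemplt, ?_⟩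
      by_contra hcon
      push_neg at hcon
      have hklB : klBer (emp t ω) μ ≤ ((f t γ : ℝ) : EReal) := by
        unfold klBer
        rw [if_neg]
        · exact_mod_cast hcon
        · rintro ⟨h01, -⟩
          rcases h01 with h | h <;> linarith
      have hmemS : μ ∈ S := ⟨⟨hemplt, hμ1.le⟩, hklB⟩
      have hUeq := hne ⟨μ, hmemS⟩
      have : μ ≤ U t γ ω := by rw [hUeq]; exact le_csSup hbddS hmemS
      linarith
    -- per-t single bound (used for t < N)
    have singlebound : ∀ t : ℕ, 1 ≤ t →
        P (Aev t) ≤ ENNReal.ofReal ((γ / (κ γ * Real.logb 2 (2*(t:ℝ))))^p) := by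
      intro t ht
      have htR : (1:ℝ) ≤ (t:ℝ) := by exact_mod_cast ht
      have htR0 : (0:ℝ) < (t:ℝ) := by linarith
      set L : ℝ := Real.logb 2 (2*(t:ℝ)) with hL
      have hL1 : 1 ≤ L := hlogb_ge1 t ht
      have hargL : 1 < κ γ * L / γ := harg_gt1 L hL1
      have hKL0 : 0 < κ γ * L := by nlinarith [hκpos]
      have hft : f t γ = c * Real.log (κ γ * L / γ) / (t:ℝ) := hf t γ
      have hftpos : 0 < f t γ := by
        rw [hft]
        apply div_pos (mul_pos hc0 (Real.log_pos hargL)) htR0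
      have hUsub : Aev t ⊆ ⋃ s ∈ ({t} : Set ℕ), Aev s := fun ω h =>
        Set.mem_biUnion rfl h
      have hbd := KLAux.slice_bound Y hmeas hindep hbdd μ ⟨hμ0, hμ1⟩ hmean emp hemp
        (f t γ) (t:ℝ) hftpos htR0 t ({t} : Set ℕ)
        (by intro s hs; rw [Set.mem_singleton_iff] at hs; subst hs
            exact ⟨le_refl _, le_refl _⟩)
        Aev
        (by intro s hs ω hω
            rw [Set.mem_singleton_iff] at hs; subst hs
            exact hω)
      have hP := le_trans (measure_mono hUsub) hbd
      -- now simplify the exponent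
      have hexp : Real.exp (-((t:ℝ) * f t γ)) ≤ (γ / (κ γ * L))^p := by
        have htf : (t:ℝ) * f t γ = c * Real.log (κ γ * L / γ) := by
          rw [hft]
          field_simp
        set x : ℝ := γ / (κ γ * L) with hx
        have hx0 : 0 < x := div_pos hγ0 hKL0
        have hx1 : x < 1 := by
          rw [hx, div_lt_one hKL0]
          nlinarith [hargL, hγ0]
        have hlogx : Real.log (κ γ * L / γ) = - Real.log x := by
          rw [hx, ← Real.log_inv]
          congr 1
          rw [inv_div]
        have hxc : Real.exp (-((t:ℝ) * f t γ)) = x ^ c := by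
          rw [htf, hlogx, Real.rpow_def_of_pos hx0]
          congr 1
          ring
        rw [hxc]
        exact Real.rpow_le_rpow_of_exponent_ge hx0 hx1.le hpc
      calc P (Aev t) ≤ ENNReal.ofReal (Real.exp (-((t:ℝ) * f t γ))) := hP
        _ ≤ ENNReal.ofReal ((γ / (κ γ * L))^p) := ENNReal.ofReal_le_ofReal hexp
    -- slice sets
    set SL : ℕ → ℕ → Set ℕ := fun k j =>
      {t : ℕ | (2:ℝ)^((((l+k:ℕ)):ℝ) + (j:ℝ)/(N:ℝ)) ≤ (t:ℝ) ∧
        (t:ℝ) ≤ (2:ℝ)^((((l+k:ℕ)):ℝ) + ((j:ℝ)+1)/(N:ℝ))} with hSL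
    have slicebound : ∀ k j : ℕ, j < N →
        P (⋃ t ∈ SL k j, Aev t)
          ≤ ENNReal.ofReal ((γ / (κ γ * ((k:ℝ) + (l:ℝ) + 1)))^p) := by
      intro k j hj
      set K : ℕ := l + k with hK
      set e1 : ℝ := (K:ℝ) + (j:ℝ)/(N:ℝ) with he1
      set e2 : ℝ := (K:ℝ) + ((j:ℝ)+1)/(N:ℝ) with he2
      set T1R : ℝ := (2:ℝ)^e1 with hT1R
      set T2R : ℝ := (2:ℝ)^e2 with hT2R
      have he1nn : 0 ≤ e1 := by rw [he1]; positivity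
      have hT1R1 : 1 ≤ T1R := Real.one_le_rpow (by norm_num) he1nn
      have hT1R0 : 0 < T1R := by linarith
      have hT2R0 : 0 < T2R := Real.rpow_pos_of_pos (by norm_num) _
      have he12 : e1 ≤ e2 := by
        rw [he1, he2]
        have h : (j:ℝ)/(N:ℝ) ≤ ((j:ℝ)+1)/(N:ℝ) := by
          gcongr
          linarith
        linarith
      have hT2cap : T2R ≤ ((2^(K+1) : ℕ) : ℝ) := by
        have h1 : e2 ≤ (K:ℝ) + 1 := by
          rw [he2]
          have hjN : (j:ℝ) + 1 ≤ (N:ℝ) := by exact_mod_cast hj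
          have : ((j:ℝ)+1)/(N:ℝ) ≤ 1 := by
            rw [div_le_one hNR0]; exact hjN
          linarith
        have h2 : ((2^(K+1) : ℕ) : ℝ) = (2:ℝ)^(((K+1:ℕ)):ℝ) := by
          rw [Real.rpow_natCast]
          push_cast
          ring
        rw [h2]
        apply Real.rpow_le_rpow_of_exponent_le (by norm_num)
        push_cast
        linarith
      set L1 : ℝ := Real.log (κ γ * (1 + (K:ℝ) + (j:ℝ)/(N:ℝ)) / γ) with hL1def
      have hm1 : (1:ℝ) ≤ 1 + (K:ℝ) + (j:ℝ)/(N:ℝ) := by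
        have h : (0:ℝ) ≤ (K:ℝ) + (j:ℝ)/(N:ℝ) := by positivity
        linarith
      have hL1pos : 0 < L1 := Real.log_pos (harg_gt1 _ hm1)
      set d : ℝ := c * L1 / T2R with hd
      have hdpos : 0 < d := div_pos (mul_pos hc0 hL1pos) hT2R0
      have hrange : ∀ t ∈ SL k j, T1R ≤ (t:ℝ) ∧ t ≤ 2^(K+1) := by
        intro t htm
        obtain ⟨ht1, ht2⟩ := htm
        refine ⟨ht1, ?_⟩
        have : (t:ℝ) ≤ ((2^(K+1):ℕ):ℝ) := le_trans ht2 hT2cap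
        exact_mod_cast this
      have hE : ∀ t ∈ SL k j, ∀ ω ∈ Aev t, emp t ω < μ ∧ d < klBerR (emp t ω) μ := by
        intro t htm ω hω
        obtain ⟨ht1, ht2⟩ := htm
        obtain ⟨hω1, hω2⟩ := hω
        refine ⟨hω1, ?_⟩
        have htR0 : (0:ℝ) < (t:ℝ) := by linarith
        have ht1' : 1 ≤ t := by exact_mod_cast le_trans hT1R1 ht1
        set Lt : ℝ := Real.logb 2 (2*(t:ℝ)) with hLt
        have hLt1 : 1 ≤ Lt := hlogb_ge1 t ht1'
        have hlogb2t : 1 + (K:ℝ) + (j:ℝ)/(N:ℝ) ≤ Lt := by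
          have h2t : (2:ℝ)^(1 + e1) ≤ 2*(t:ℝ) := by
            rw [Real.rpow_add (by norm_num), Real.rpow_one]
            nlinarith [ht1, hT1R0]
          calc 1 + (K:ℝ) + (j:ℝ)/(N:ℝ) = 1 + e1 := by rw [he1]; ring
            _ = Real.logb 2 ((2:ℝ)^(1+e1)) :=
                (Real.logb_rpow (by norm_num) (by norm_num)).symm
            _ ≤ Real.logb 2 (2*(t:ℝ)) := by
                apply Real.logb_le_logb_of_le (by norm_num)
                  (Real.rpow_pos_of_pos (by norm_num) _) h2t
        have hL1Lt : L1 ≤ Real.log (κ γ * Lt / γ) := by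
          apply Real.log_le_log (by positivity)
          gcongr

        have hdf : d ≤ f t γ := by
          rw [hf t γ, ← hLt]
          rw [hd]
          apply div_le_div₀
            (mul_nonneg hc0.le (Real.log_nonneg (harg_gt1 Lt hLt1).le))
            (mul_le_mul_of_nonneg_left hL1Lt hc0.le) htR0 ht2
        linarith
      have hbd := KLAux.slice_bound Y hmeas hindep hbdd μ ⟨hμ0, hμ1⟩ hmean emp hemp
        d T1R hdpos hT1R0 (2^(K+1)) (SL k j) hrange Aev hE
      refine le_trans hbd (ENNReal.ofReal_le_ofReal ?_)
      -- T1R * d = c * L1 * 2^(-1/N)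
      have hT1d : T1R * d = c * L1 * (2:ℝ)^(-(1:ℝ)/(N:ℝ)) := by
        rw [hd, hT1R, hT2R]
        rw [div_eq_mul_inv, ← Real.rpow_neg (by norm_num : (0:ℝ) ≤ 2)]
        rw [mul_comm ((2:ℝ)^e1) _, mul_assoc]
        rw [← Real.rpow_add (by norm_num : (0:ℝ) < 2)]
        congr 2
        rw [he1, he2]
        field_simp
        ring
      set x : ℝ := γ / (κ γ * ((k:ℝ) + (l:ℝ) + 1)) with hx
      have hKl1 : (1:ℝ) ≤ (k:ℝ) + (l:ℝ) + 1 := by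
        have h : (0:ℝ) ≤ (k:ℝ) + (l:ℝ) := by positivity
        linarith
      have hKL0 : 0 < κ γ * ((k:ℝ) + (l:ℝ) + 1) := by nlinarith [hκpos]
      have hx0 : 0 < x := div_pos hγ0 hKL0
      have hargx : 1 < κ γ * ((k:ℝ) + (l:ℝ) + 1) / γ := harg_gt1 _ hKl1
      set L1' : ℝ := Real.log (κ γ * ((k:ℝ) + (l:ℝ) + 1) / γ) with hL1'def
      have hL1'0 : 0 < L1' := Real.log_pos hargx
      have hL1'L1 : L1' ≤ L1 := by
        apply Real.log_le_log (by positivity)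
        have hK' : (k:ℝ) + (l:ℝ) + 1 ≤ 1 + (K:ℝ) + (j:ℝ)/(N:ℝ) := by
          rw [hK]
          push_cast
          have : 0 ≤ (j:ℝ)/(N:ℝ) := by positivity
          linarith
        gcongr
      have hxp : x ^ p = Real.exp (-(p * L1')) := by
        rw [Real.rpow_def_of_pos hx0]
        congr 1
        have : Real.log x = - L1' := by
          rw [hx, hL1'def, ← Real.log_inv]
          congr 1
          rw [inv_div]
        rw [this]
        ring
      rw [hT1d, hxp]
      apply Real.exp_le_exp.2
      have hmul : p * L1' ≤ (c * (2:ℝ)^(-(1:ℝ)/(N:ℝ))) * L1 := by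
        apply mul_le_mul hcp hL1'L1 hL1'0.le
        positivity
      have : c * L1 * (2:ℝ)^(-(1:ℝ)/(N:ℝ)) = (c * (2:ℝ)^(-(1:ℝ)/(N:ℝ))) * L1 := by ring
      rw [this]
      linarith
    -- coverage
    have hsubset : {ω | Δ ω < γ} ⊆
        (⋃ t ∈ Finset.Ico 1 N, Aev t) ∪
        ⋃ (k : ℕ), ⋃ j ∈ Finset.range N, ⋃ t ∈ SL k j, Aev t := by
      intro ω hω
      rw [Set.mem_setOf_eq] at hω
      have hex : ∃ t : ℕ, 0 < t ∧ U t γ ω < μ := by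
        by_contra hcon
        push_neg at hcon
        have hmem : γ ∈ {ε : ℝ | ε ∈ Set.Ioo (0:ℝ) 1 ∧ ∀ t : ℕ, 0 < t → μ ≤ U t ε ω} :=
          ⟨⟨hγ0, hγ1⟩, fun t ht => hcon t ht⟩
        have hbdd2 : BddAbove {ε : ℝ | ε ∈ Set.Ioo (0:ℝ) 1 ∧ ∀ t : ℕ, 0 < t → μ ≤ U t ε ω} :=
          ⟨1, fun x hx => hx.1.2.le⟩
        have := le_csSup hbdd2 hmem
        rw [← hΔ ω] at this
        linarith
      obtain ⟨t, ht0, hUlt⟩ := hex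
      have hAt : ω ∈ Aev t := hBadA t ω hUlt
      rcases lt_or_ge t N with hcase | hcase
      · left
        exact Set.mem_biUnion (Finset.mem_Ico.2 ⟨ht0, hcase⟩) hAt
      · right
        obtain ⟨k, j, hjN, hc1, hc2⟩ := KLAux.covering l N hN t hcase
        apply Set.mem_iUnion.2 ⟨k, _⟩
        apply Set.mem_biUnion (Finset.mem_range.2 hjN)
        apply Set.mem_biUnion _ hAt
        exact ⟨hc1, hc2⟩
    -- sum everything
    have hterm_nn : ∀ t : ℕ, 1 ≤ t → 0 ≤ (γ / (κ γ * Real.logb 2 (2*(t:ℝ))))^p := by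
      intro t ht
      apply Real.rpow_nonneg
      apply div_nonneg hγ0.le
      have := hlogb_ge1 t ht
      nlinarith [hκpos]
    have hsplitm : ∀ m : ℝ, 1 ≤ m →
        (γ/(κ γ * m))^p = (γ/(κ γ))^p * m^(-p) := by
      intro m hm
      have hm0 : 0 < m := lt_of_lt_of_le one_pos hm
      rw [Real.rpow_neg hm0.le, ← Real.inv_rpow hm0.le,
        ← Real.mul_rpow (by positivity) (by positivity)]
      congr 1
      field_simp
    set S1r : ℝ := ∑ t ∈ Finset.Ico 1 N, (γ / (κ γ * Real.logb 2 (2*(t:ℝ))))^p with hS1r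
    set termk : ℕ → ℝ := fun k => (N:ℝ) * (γ / (κ γ * ((k:ℝ)+(l:ℝ)+1)))^p with htermk
    have htermk_eq : ∀ k, termk k
        = ((N:ℝ) * (γ/(κ γ))^p) * ((k:ℝ)+(l:ℝ)+1)^(-p) := by
      intro k
      rw [htermk]
      simp only
      rw [hsplitm ((k:ℝ)+(l:ℝ)+1) (le_add_of_nonneg_left (by positivity))]
      ring
    have htermk_nn : ∀ k, 0 ≤ termk k := by
      intro k
      rw [htermk_eq]
      apply mul_nonneg ?_ (Real.rpow_nonneg (by positivity) _)
      apply mul_nonneg (by positivity)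
      apply Real.rpow_nonneg
      apply div_nonneg hγ0.le hκpos.le
    have hsum2 : Summable termk := by
      apply Summable.congr (hsummable.mul_left ((N:ℝ) * (γ/(κ γ))^p))
      intro k
      rw [htermk_eq]
    set S2r : ℝ := ∑' k : ℕ, termk k with hS2r
    have hS1r_nn : 0 ≤ S1r :=
      Finset.sum_nonneg (fun t ht => hterm_nn t (Finset.mem_Ico.1 ht).1)
    have hS2r_nn : 0 ≤ S2r := tsum_nonneg htermk_nn
    -- measure bounds
    have hP1 : P (⋃ t ∈ Finset.Ico 1 N, Aev t) ≤ ENNReal.ofReal S1r := by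
      calc P (⋃ t ∈ Finset.Ico 1 N, Aev t) ≤ ∑ t ∈ Finset.Ico 1 N, P (Aev t) :=
            measure_biUnion_finset_le _ _
        _ ≤ ∑ t ∈ Finset.Ico 1 N,
              ENNReal.ofReal ((γ / (κ γ * Real.logb 2 (2*(t:ℝ))))^p) :=
            Finset.sum_le_sum (fun t ht => singlebound t (Finset.mem_Ico.1 ht).1)
        _ = ENNReal.ofReal S1r := by
            rw [hS1r, ENNReal.ofReal_sum_of_nonneg
              (fun t ht => hterm_nn t (Finset.mem_Ico.1 ht).1)]
    have hP2 : P (⋃ (k : ℕ), ⋃ j ∈ Finset.range N, ⋃ t ∈ SL k j, Aev t)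
        ≤ ENNReal.ofReal S2r := by
      have hperk : ∀ k : ℕ, P (⋃ j ∈ Finset.range N, ⋃ t ∈ SL k j, Aev t)
          ≤ ENNReal.ofReal (termk k) := by
        intro k
        calc P (⋃ j ∈ Finset.range N, ⋃ t ∈ SL k j, Aev t)
            ≤ ∑ j ∈ Finset.range N, P (⋃ t ∈ SL k j, Aev t) :=
              measure_biUnion_finset_le _ _
          _ ≤ ∑ j ∈ Finset.range N,
                ENNReal.ofReal ((γ / (κ γ * ((k:ℝ)+(l:ℝ)+1)))^p) :=
              Finset.sum_le_sum (fun j hj => slicebound k j (Finset.mem_range.1 hj))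
          _ = (N : ENNReal) * ENNReal.ofReal ((γ / (κ γ * ((k:ℝ)+(l:ℝ)+1)))^p) := by
              rw [Finset.sum_const, Finset.card_range, nsmul_eq_mul]
          _ = ENNReal.ofReal (termk k) := by
              rw [htermk]
              simp only
              rw [ENNReal.ofReal_mul (by positivity), ENNReal.ofReal_natCast]
      calc P (⋃ (k : ℕ), ⋃ j ∈ Finset.range N, ⋃ t ∈ SL k j, Aev t)
          ≤ ∑' k : ℕ, P (⋃ j ∈ Finset.range N, ⋃ t ∈ SL k j, Aev t) :=
            measure_iUnion_le _
        _ ≤ ∑' k : ℕ, ENNReal.ofReal (termk k) := ENNReal.tsum_le_tsum hperk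
        _ = ENNReal.ofReal S2r := by
            rw [hS2r, ENNReal.ofReal_tsum_of_nonneg htermk_nn hsum2]
    -- the real-valued bound
    have hratio_nn : 0 ≤ (γ/(κ γ))^p := Real.rpow_nonneg (by positivity) _
    have hκp : (κ γ)^p = γ^((1:ℝ)/(N:ℝ)) * Aval := by
      rw [hκγ, Real.mul_rpow (by positivity) (by positivity),
        ← Real.rpow_mul hγ0.le, ← Real.rpow_mul hA0.le]
      have e1 : (1:ℝ)/((N:ℝ)+1) * p = 1/(N:ℝ) := by
        rw [hp]
        field_simp
      have e2 : (N:ℝ)/((N:ℝ)+1) * p = 1 := by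
        rw [hp]
        field_simp
      rw [e1, e2, Real.rpow_one]
    have hfrac : (γ/(κ γ))^p * Aval = γ := by
      rw [Real.div_rpow hγ0.le hκpos.le, hκp]
      have hγN : (0:ℝ) < γ^((1:ℝ)/(N:ℝ)) := Real.rpow_pos_of_pos hγ0 _
      have h1 : γ^p / (γ^((1:ℝ)/(N:ℝ)) * Aval) * Aval = γ^p / γ^((1:ℝ)/(N:ℝ)) := by
        field_simp
      rw [h1, ← Real.rpow_sub hγ0]
      have : p - (1:ℝ)/(N:ℝ) = 1 := by
        rw [hp]
        field_simp
        ring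
      rw [this, Real.rpow_one]
    have hS1_le : S1r ≤ (γ/(κ γ))^p * (if l ≠ 0 then
        ∑ t ∈ Finset.Icc 1 N, (Real.logb 2 (2*(t:ℝ))) ^ (-p) else 0) := by
      by_cases hl : l = 0
      · have hNone : N = 1 := by rw [hN, hl]; rfl
        rw [hS1r, hNone]
        simp [hl]
      · simp only [hl, ne_eq, not_false_eq_true, if_true]
        have heq : S1r = (γ/(κ γ))^p *
            ∑ t ∈ Finset.Ico 1 N, (Real.logb 2 (2*(t:ℝ)))^(-p) := by
          rw [hS1r, Finset.mul_sum]
          apply Finset.sum_congr rfl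
          intro t ht
          rw [hsplitm _ (hlogb_ge1 t (Finset.mem_Ico.1 ht).1)]
        rw [heq]
        apply mul_le_mul_of_nonneg_left ?_ hratio_nn
        apply Finset.sum_le_sum_of_subset_of_nonneg
        · intro t ht
          rw [Finset.mem_Icc]
          rw [Finset.mem_Ico] at ht
          omega
        · intro t ht _
          apply Real.rpow_nonneg
          have := hlogb_ge1 t (Finset.mem_Icc.1 ht).1
          linarith
    have hS2_eq : S2r = (γ/(κ γ))^p *
        ((N:ℝ) * ∑' k : ℕ, ((k:ℝ)+(l:ℝ)+1)^(-p)) := by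
      rw [hS2r]
      have : ∀ k : ℕ, termk k = ((N:ℝ) * (γ/(κ γ))^p) * ((k:ℝ)+(l:ℝ)+1)^(-p) :=
        htermk_eq
      rw [tsum_congr this, tsum_mul_left]
      ring
    have hfinal_real : S1r + S2r ≤ γ := by
      have h1 : S1r + S2r ≤ (γ/(κ γ))^p * Aval := by
        rw [hAval, mul_add]
        apply add_le_add hS1_le (le_of_eq hS2_eq)
      rw [hfrac] at h1
      exact h1
    -- conclude part 1
    calc P {ω | Δ ω < γ}
        ≤ P ((⋃ t ∈ Finset.Ico 1 N, Aev t) ∪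
            ⋃ (k : ℕ), ⋃ j ∈ Finset.range N, ⋃ t ∈ SL k j, Aev t) :=
          measure_mono hsubset
      _ ≤ P (⋃ t ∈ Finset.Ico 1 N, Aev t) +
            P (⋃ (k : ℕ), ⋃ j ∈ Finset.range N, ⋃ t ∈ SL k j, Aev t) :=
          measure_union_le _ _
      _ ≤ ENNReal.ofReal S1r + ENNReal.ofReal S2r := add_le_add hP1 hP2
      _ = ENNReal.ofReal (S1r + S2r) := (ENNReal.ofReal_add hS1r_nn hS2r_nn).symm
      _ ≤ ENNReal.ofReal γ := ENNReal.ofReal_le_ofReal hfinal_real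
  -- ============ PART 2 ============
  refine ⟨hpart1, ?_⟩
  intro μt hμt zz hzz
  set D : ℝ := chernoffR μ μt with hD
  by_cases hDz : D * zz ≤ 0
  · have h1 : (1:ℝ) ≤ Real.exp (-D * zz) := by
      rw [← Real.exp_zero]
      apply Real.exp_le_exp.2
      nlinarith
    calc P {ω | Real.log (1 / Δ ω) / D ≥ zz} ≤ 1 := prob_le_one
      _ ≤ ENNReal.ofReal (Real.exp (-D * zz)) := by
          rw [ENNReal.one_le_ofReal]
          exact h1
  · push_neg at hDz
    have hD0 : 0 < D := by
      by_contra h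
      push_neg at h
      nlinarith
    have hzz0 : 0 < zz := by
      by_contra h
      push_neg at h
      have : zz = 0 := le_antisymm h hzz
      rw [this, mul_zero] at hDz
      linarith
    set e : ℝ := Real.exp (-(D * zz)) with he
    have he0 : 0 < e := Real.exp_pos _
    have he1 : e < 1 := by
      rw [he, ← Real.exp_zero]
      apply Real.exp_lt_exp.2
      nlinarith
    have hΔnn : ∀ ω, 0 ≤ Δ ω := by
      intro ω
      rw [hΔ ω]
      apply Real.sSup_nonneg
      intro x hx
      exact hx.1.1.le
    have hsub : {ω | Real.log (1 / Δ ω) / D ≥ zz} ⊆ {ω | Δ ω ≤ e} := by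
      intro ω hω
      rw [Set.mem_setOf_eq] at hω ⊢
      have hlog : D * zz ≤ Real.log (1 / Δ ω) := by
        have := (le_div_iff₀ hD0).1 hω
        linarith
      rcases eq_or_lt_of_le (hΔnn ω) with h0 | h0
      · exfalso
        rw [← h0] at hlog
        simp only [div_zero, Real.log_zero] at hlog
        nlinarith
      · have hlogΔ : Real.log (Δ ω) ≤ -(D * zz) := by
          rw [one_div, Real.log_inv] at hlog
          linarith
        calc Δ ω = Real.exp (Real.log (Δ ω)) := (Real.exp_log h0).symm
          _ ≤ Real.exp (-(D * zz)) := Real.exp_le_exp.2 hlogΔ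
          _ = e := rfl
    have hub : ∀ γ' : ℝ, e < γ' → γ' < 1 →
        P {ω | Real.log (1 / Δ ω) / D ≥ zz} ≤ ENNReal.ofReal γ' := by
      intro γ' h1 h2
      have hsub2 : {ω | Δ ω ≤ e} ⊆ {ω | Δ ω < γ'} := by
        intro ω hω
        rw [Set.mem_setOf_eq] at hω ⊢
        linarith
      calc P {ω | Real.log (1 / Δ ω) / D ≥ zz}
          ≤ P {ω | Δ ω < γ'} := measure_mono (Set.Subset.trans hsub hsub2)
        _ ≤ ENNReal.ofReal γ' := hpart1 γ' ⟨by linarith, h2⟩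
    have hfin : P {ω | Real.log (1 / Δ ω) / D ≥ zz} ≤ ENNReal.ofReal e := by
      apply ENNReal.le_of_forall_pos_le_add
      intro δ hδ _
      set γ' : ℝ := min ((e + 1)/2) (e + (δ:ℝ)) with hγ'
      have hδR : (0:ℝ) < (δ:ℝ) := by exact_mod_cast hδ
      have hγ'e : e < γ' := by
        apply lt_min (by linarith) (by linarith)
      have hγ'1 : γ' < 1 := by
        apply lt_of_le_of_lt (min_le_left _ _)
        linarith
      calc P {ω | Real.log (1 / Δ ω) / D ≥ zz} ≤ ENNReal.ofReal γ' := hub γ' hγ'e hγ'1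
        _ ≤ ENNReal.ofReal (e + (δ:ℝ)) :=
            ENNReal.ofReal_le_ofReal (min_le_right _ _)
        _ = ENNReal.ofReal e + ENNReal.ofReal (δ:ℝ) :=
            ENNReal.ofReal_add he0.le hδR.le
        _ = ENNReal.ofReal e + δ := by rw [ENNReal.ofReal_coe_nnreal]
    have heq : Real.exp (-D * zz) = e := by rw [he]; ring_nf
    rw [heq]
    exact hfin
end

section
/- For every integer k ≥ l, the deviation probability over the dyadic block [2^k, 2^{k+1}] satisfies P( ∃ t ∈ [2^k, 2^{k+1}] : μ̂_t − μ > z_t ) ≤ N · ( δ / (κ(N)·(k+1)) )^{(N+1)/N}. -/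
open MeasureTheory ProbabilityTheory Set

/-- Ville/Doob maximal inequality for products of independent positive mean-one
random variables. -/
lemma ville_prod {Ω : Type*} [MeasurableSpace Ω] (P : Measure Ω) [IsProbabilityMeasure P]
    (X : ℕ → Ω → ℝ) (hXm : ∀ i, Measurable (X i))
    (hXindep : iIndepFun X P)
    (C : ℝ) (hC : 0 < C) (hXpos : ∀ i ω, 0 < X i ω) (hXbd : ∀ i ω, X i ω ≤ C)
    (hXmean : ∀ i, ∫ ω, X i ω ∂P = 1)
    (n : ℕ) (hn : 1 ≤ n) (a : ℝ) (ha : 0 < a) :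
    P {ω | ∃ t, 1 ≤ t ∧ t ≤ n ∧ a ≤ ∏ i ∈ Finset.range t, X i ω} ≤
      ENNReal.ofReal (1 / a) := by
  classical
  set M : ℕ → Ω → ℝ := fun s ω => ∏ i ∈ Finset.range (s + 1), X i ω with hM
  have hXsm : ∀ i, StronglyMeasurable (X i) := fun i => (hXm i).stronglyMeasurable
  set 𝒢 := MeasureTheory.Filtration.natural X hXsm with h𝒢
  have hMmeas : ∀ s, Measurable (M s) := by
    intro s
    exact Finset.measurable_prod _ (fun i _ => hXm i)
  have hMnonneg : ∀ s ω, 0 ≤ M s ω := fun s ω =>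
    Finset.prod_nonneg (fun i _ => (hXpos i ω).le)
  have hMbd : ∀ s ω, M s ω ≤ C ^ (s + 1) := by
    intro s ω
    calc M s ω ≤ ∏ _i ∈ Finset.range (s + 1), C :=
          Finset.prod_le_prod (fun i _ => (hXpos i ω).le) (fun i _ => hXbd i ω)
      _ = C ^ (s + 1) := by simp
  have hMint : ∀ s, Integrable (M s) P := by
    intro s
    refine Integrable.mono' (integrable_const (C ^ (s + 1))) (hMmeas s).aestronglyMeasurable ?_
    refine Filter.Eventually.of_forall fun ω => ?_
    rw [Real.norm_eq_abs, abs_of_nonneg (hMnonneg s ω)]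
    exact hMbd s ω
  have hadp : StronglyAdapted 𝒢 M := by
    intro s
    refine Finset.stronglyMeasurable_fun_prod _ (fun i hi => ?_)
    have hle : MeasurableSpace.comap (X i) inferInstance ≤ 𝒢 s := by
      simp only [Finset.mem_range, Nat.lt_succ_iff] at hi
      rw [h𝒢]
      show MeasurableSpace.comap (X i) inferInstance ≤
        ⨆ j, ⨆ _ : j ≤ s, MeasurableSpace.comap (X j) inferInstance
      exact le_iSup₂ (f := fun j (_ : j ≤ s) => MeasurableSpace.comap (X j) inferInstance) i hi
    exact ((comap_measurable (X i)).mono hle le_rfl).stronglyMeasurable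
  have hmart : Martingale M 𝒢 P := by
    refine martingale_nat hadp hMint (fun s => ?_)
    have hsucc : M (s + 1) = M s * X (s + 1) := by
      funext ω
      simp only [hM, Pi.mul_apply]
      rw [Finset.prod_range_succ]
    rw [hsucc]
    have hcond : P[M s * X (s + 1)|𝒢 s] =ᵐ[P] M s * P[X (s + 1)|𝒢 s] := by
      refine condExp_mul_of_stronglyMeasurable_left (hadp s) ?_ ?_
      · refine Integrable.mono' (integrable_const (C ^ (s + 1) * C))
          ((hMmeas s).mul (hXm (s + 1))).aestronglyMeasurable ?_
        refine Filter.Eventually.of_forall fun ω => ?_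
        rw [Real.norm_eq_abs, Pi.mul_apply,
          abs_of_nonneg (mul_nonneg (hMnonneg s ω) (hXpos _ ω).le)]
        exact mul_le_mul (hMbd s ω) (hXbd _ ω) (hXpos _ ω).le (by positivity)
      · refine Integrable.mono' (integrable_const C) (hXm (s + 1)).aestronglyMeasurable ?_
        exact Filter.Eventually.of_forall fun ω => by
          rw [Real.norm_eq_abs, abs_of_nonneg (hXpos _ ω).le]; exact hXbd _ ω
    have hindepcond : P[X (s + 1)|𝒢 s] =ᵐ[P] fun _ => ∫ ω, X (s + 1) ω ∂P :=
      ProbabilityTheory.iIndepFun.condExp_natural_ae_eq_of_lt hXsm hXindep (Nat.lt_succ_self s)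
    filter_upwards [hcond, hindepcond] with ω h1 h2
    rw [h1, Pi.mul_apply, h2, hXmean (s + 1), mul_one]
  have hXint : ∀ i, Integrable (X i) P := by
    intro i
    refine Integrable.mono' (integrable_const C) (hXm i).aestronglyMeasurable ?_
    exact Filter.Eventually.of_forall fun ω => by
      rw [Real.norm_eq_abs, abs_of_nonneg (hXpos _ ω).le]; exact hXbd _ ω
  have hprodint : ∀ t : ℕ, Integrable (fun ω => ∏ i ∈ Finset.range t, X i ω) P := by
    intro t
    refine Integrable.mono' (integrable_const (C ^ t))
      (Finset.measurable_prod _ (fun i _ => hXm i)).aestronglyMeasurable ?_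
    refine Filter.Eventually.of_forall fun ω => ?_
    rw [Real.norm_eq_abs, abs_of_nonneg (Finset.prod_nonneg (fun i _ => (hXpos i ω).le))]
    calc (∏ i ∈ Finset.range t, X i ω) ≤ ∏ _i ∈ Finset.range t, C :=
          Finset.prod_le_prod (fun i _ => (hXpos i ω).le) (fun i _ => hXbd i ω)
      _ = C ^ t := by simp
  have hmean : ∀ t : ℕ, ∫ ω, (∏ i ∈ Finset.range t, X i ω) ∂P = 1 := by
    intro t
    induction t with
    | zero => simp
    | succ t ih =>
      have hindep2 : IndepFun (∏ i ∈ Finset.range t, X i) (X t) P :=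
        ProbabilityTheory.iIndepFun.indepFun_finset_prod_of_notMem hXindep hXm
          (by simp)
      have hthis : (fun ω => ∏ i ∈ Finset.range (t + 1), X i ω) =
          (fun ω => (∏ i ∈ Finset.range t, X i) ω * X t ω) := by
        funext ω
        simp [Finset.prod_range_succ]
      have hpp : (∏ i ∈ Finset.range t, X i) = fun ω => ∏ i ∈ Finset.range t, X i ω := by
        funext ω; simp
      have hkey := IndepFun.integral_fun_mul_eq_mul_integral hindep2
        (by rw [hpp]; exact (hprodint t).1) (hXint t).1
      have hgoal : ∫ (ω : Ω), (∏ i ∈ Finset.range t, X i) ω * X t ω ∂P =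
          (∫ ω, (∏ i ∈ Finset.range t, X i) ω ∂P) * ∫ ω, X t ω ∂P := hkey
      rw [hthis, hgoal, hpp, ih, hXmean t, one_mul]
  set ε : NNReal := ⟨a, ha.le⟩ with hε
  have hmax := maximal_ineq hmart.submartingale
    (fun s ω => hMnonneg s ω) (ε := ε) (n - 1)
  have hsub : {ω | ∃ t, 1 ≤ t ∧ t ≤ n ∧ a ≤ ∏ i ∈ Finset.range t, X i ω} ⊆
      {ω | (ε : ℝ) ≤ (Finset.range (n - 1 + 1)).sup' Finset.nonempty_range_add_one
        fun k => M k ω} := by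
    rintro ω ⟨t, ht1, htn, hta⟩
    have ht' : t - 1 ∈ Finset.range (n - 1 + 1) := by
      rw [Finset.mem_range]
      show t - 1 < n - 1 + 1
      omega
    refine le_trans ?_ (Finset.le_sup' (fun k => M k ω) ht')
    have : M (t - 1) ω = ∏ i ∈ Finset.range t, X i ω := by
      simp only [hM]
      rw [Nat.sub_add_cancel ht1]
    rw [this]
    exact hta
  have hPle : (ε : ENNReal) * P {ω | ∃ t, 1 ≤ t ∧ t ≤ n ∧ a ≤ ∏ i ∈ Finset.range t, X i ω} ≤ 1 := by
    calc (ε : ENNReal) * P {ω | ∃ t, 1 ≤ t ∧ t ≤ n ∧ a ≤ ∏ i ∈ Finset.range t, X i ω}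
        ≤ (ε : ENNReal) * P {ω | (ε : ℝ) ≤ (Finset.range (n - 1 + 1)).sup'
            Finset.nonempty_range_add_one fun k => M k ω} := by
          exact mul_le_mul_right (measure_mono hsub) _
      _ ≤ ENNReal.ofReal (∫ ω in {ω | (ε : ℝ) ≤ (Finset.range (n - 1 + 1)).sup'
            Finset.nonempty_range_add_one fun k => M k ω}, M (n - 1) ω ∂P) := hmax
      _ ≤ ENNReal.ofReal (∫ ω, M (n - 1) ω ∂P) := by
          refine ENNReal.ofReal_le_ofReal ?_
          refine setIntegral_le_integral (hMint (n - 1)) ?_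
          exact Filter.Eventually.of_forall fun ω => hMnonneg _ ω
      _ = 1 := by
          have := hmean (n - 1 + 1)
          simp only [hM]
          rw [this, ENNReal.ofReal_one]
  have hεeq : (ε : ENNReal) = ENNReal.ofReal a := by
    rw [ENNReal.ofReal]
    congr 1
    rw [Real.toNNReal_of_nonneg ha.le]
    exact hε
  have hstep : P {ω | ∃ t, 1 ≤ t ∧ t ≤ n ∧ a ≤ ∏ i ∈ Finset.range t, X i ω} ≤ (ε : ENNReal)⁻¹ := by
    rw [ENNReal.le_inv_iff_mul_le]
    rwa [mul_comm]
  refine le_trans hstep (le_of_eq ?_)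
  rw [hεeq, one_div, ENNReal.ofReal_inv_of_pos ha]

/-- The Legendre identity for the Bernoulli log-mgf at the optimal tilt. -/
lemma klBer_legendre {μ p : ℝ} (hμ0 : 0 < μ) (hμ1 : μ < 1) (hp : μ < p) (hp1 : p < 1) :
    Real.log (p * (1 - μ) / ((1 - p) * μ)) * (p - μ) -
      (Real.log (1 - μ + μ * Real.exp (Real.log (p * (1 - μ) / ((1 - p) * μ)))) -
        Real.log (p * (1 - μ) / ((1 - p) * μ)) * μ) = klBerR p μ := by
  have hp0 : 0 < p := lt_trans hμ0 hp
  have h1p : 0 < 1 - p := by linarith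
  have h1μ : 0 < 1 - μ := by linarith
  set lam := Real.log (p * (1 - μ) / ((1 - p) * μ)) with hlam
  have hexp : Real.exp lam = p * (1 - μ) / ((1 - p) * μ) := Real.exp_log (by positivity)
  have h1 : 1 - μ + μ * Real.exp lam = (1 - μ) / (1 - p) := by
    rw [hexp]
    field_simp
    ring
  rw [h1]
  have hlameq : lam = Real.log p + Real.log (1 - μ) - (Real.log (1 - p) + Real.log μ) := by
    rw [hlam, Real.log_div (by positivity) (by positivity), Real.log_mul hp0.ne' h1μ.ne',
      Real.log_mul h1p.ne' hμ0.ne']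
  have hlog2 : Real.log ((1 - μ) / (1 - p)) = Real.log (1 - μ) - Real.log (1 - p) :=
    Real.log_div h1μ.ne' h1p.ne'
  have hkl : klBerR p μ = p * (Real.log p - Real.log μ) +
      (1 - p) * (Real.log (1 - p) - Real.log (1 - μ)) := by
    rw [klBerR, Real.log_div hp0.ne' hμ0.ne', Real.log_div h1p.ne' h1μ.ne']
  rw [hkl, hlog2, hlameq]
  ring

set_option maxHeartbeats 2000000

/-- For every `k ≥ l`, the deviation probability over the dyadic block `[2^k, 2^(k+1)]`
satisfies `P(∃ t ∈ [2^k,2^(k+1)] : μ̂_t - μ > z_t) ≤ N·(δ/(κ(N)·(k+1)))^((N+1)/N)`. -/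
theorem lil_klucb_dyadic_block_deviation
    {Ω : Type*} [MeasurableSpace Ω] (P : Measure Ω) [IsProbabilityMeasure P]
    (Y : ℕ → Ω → ℝ) (hmeas : ∀ i, Measurable (Y i))
    (hindep : iIndepFun Y P)
    (hident : ∀ i, IdentDistrib (Y i) (Y 0) P P)
    (hbdd : ∀ i ω, Y i ω ∈ Set.Icc (0:ℝ) 1)
    (μ : ℝ) (hμ : μ ∈ Set.Ioo (0:ℝ) 1)
    (hmean : ∀ i, ∫ ω, Y i ω ∂P = μ)
    (δ : ℝ) (hδ : δ ∈ Set.Ioo (0:ℝ) 1)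
    (l N : ℕ) (hN : N = 2 ^ l)
    (κ : ℝ)
    (hκ : κ = δ ^ ((1:ℝ)/((N:ℝ)+1)) *
      ((if l ≠ 0 then
          ∑ t ∈ Finset.Icc 1 N, (Real.logb 2 (2*(t:ℝ))) ^ (-(((N:ℝ)+1)/(N:ℝ)))
        else 0)
        + (N:ℝ) * ∑' k : ℕ, ((k:ℝ) + (l:ℝ) + 1) ^ (-(((N:ℝ)+1)/(N:ℝ))))
        ^ ((N:ℝ)/((N:ℝ)+1)))
    (f : ℕ → ℝ)
    (hf : ∀ t : ℕ, f t = Real.log (κ * Real.logb 2 (2*(t:ℝ)) / δ) / (t:ℝ))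
    (z : ℕ → ℝ)
    (hz : ∀ t : ℕ, 0 < t →
      z t ∈ Set.Ioc (0:ℝ) (1 - μ) ∧
      ((∃ y ∈ Set.Ioc (0:ℝ) (1 - μ),
          klBerR (μ + ((N:ℝ)/((N:ℝ)+1)) * y) μ = f t) →
        klBerR (μ + ((N:ℝ)/((N:ℝ)+1)) * z t) μ = f t) ∧
      ((¬ ∃ y ∈ Set.Ioc (0:ℝ) (1 - μ),
          klBerR (μ + ((N:ℝ)/((N:ℝ)+1)) * y) μ = f t) →
        z t = 1 - μ)) :
    ∀ k : ℕ, l ≤ k →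
      P {ω | ∃ t : ℕ, 2 ^ k ≤ t ∧ t ≤ 2 ^ (k+1) ∧
          (∑ j ∈ Finset.range t, Y j ω) / (t:ℝ) - μ > z t} ≤
        ENNReal.ofReal ((N:ℝ) * (δ / (κ * ((k:ℝ)+1))) ^ (((N:ℝ)+1)/(N:ℝ))) := by
  classical
  intro k hk
  obtain ⟨hμ0, hμ1⟩ := hμ
  obtain ⟨hδ0, hδ1⟩ := hδ
  have hN1 : 1 ≤ N := by rw [hN]; exact Nat.one_le_two_pow
  have hN0 : (0:ℝ) < (N:ℝ) := by exact_mod_cast hN1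
  have hNp1 : (0:ℝ) < (N:ℝ) + 1 := by linarith
  set r : ℝ := ((N:ℝ)+1)/(N:ℝ) with hr
  set c : ℝ := (N:ℝ)/((N:ℝ)+1) with hcdef
  have hrpos : 0 < r := by positivity
  have hcpos : 0 < c := by positivity
  have hc1 : c < 1 := by
    rw [hcdef, div_lt_one hNp1]; linarith
  -- κ > 0
  have hκpos : 0 < κ := by
    rw [hκ]
    have hq1 : (1:ℝ) < ((N:ℝ)+1)/(N:ℝ) := by
      rw [lt_div_iff₀ hN0]; linarith
    have hsummable : Summable (fun n : ℕ => ((n:ℝ) + (l:ℝ) + 1) ^ (-(((N:ℝ)+1)/(N:ℝ)))) := by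
      have hg : Summable (fun m : ℕ => (m:ℝ) ^ (-(((N:ℝ)+1)/(N:ℝ)))) :=
        Real.summable_nat_rpow.2 (by linarith)
      have := hg.comp_injective (add_left_injective (l + 1))
      refine this.congr (fun n => ?_)
      simp only [Function.comp_apply]
      congr 1
      push_cast
      ring
    have htsum : 0 < ∑' n : ℕ, ((n:ℝ) + (l:ℝ) + 1) ^ (-(((N:ℝ)+1)/(N:ℝ))) := by
      refine Summable.tsum_pos hsummable (fun n => Real.rpow_nonneg (by positivity) _) 0 ?_
      exact Real.rpow_pos_of_pos (by positivity) _
    have hfirst : 0 ≤ (if l ≠ 0 then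
        ∑ t ∈ Finset.Icc 1 N, (Real.logb 2 (2*(t:ℝ))) ^ (-(((N:ℝ)+1)/(N:ℝ)))
      else 0) := by
      split
      · refine Finset.sum_nonneg (fun t ht => ?_)
        refine Real.rpow_nonneg ?_ _
        refine Real.logb_nonneg (by norm_num) ?_
        rw [Finset.mem_Icc] at ht
        have : (1:ℝ) ≤ (t:ℝ) := by exact_mod_cast ht.1
        linarith
      · exact le_refl 0
    have hS : 0 < (if l ≠ 0 then
        ∑ t ∈ Finset.Icc 1 N, (Real.logb 2 (2*(t:ℝ))) ^ (-(((N:ℝ)+1)/(N:ℝ)))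
      else 0) + (N:ℝ) * ∑' n : ℕ, ((n:ℝ) + (l:ℝ) + 1) ^ (-(((N:ℝ)+1)/(N:ℝ))) := by
      have : 0 < (N:ℝ) * ∑' n : ℕ, ((n:ℝ) + (l:ℝ) + 1) ^ (-(((N:ℝ)+1)/(N:ℝ))) :=
        mul_pos hN0 htsum
      linarith
    exact mul_pos (Real.rpow_pos_of_pos hδ0 _) (Real.rpow_pos_of_pos hS _)
  -- slice structure
  set w : ℕ := 2 ^ (k - l) with hwdef
  have hw0 : 0 < w := Nat.pow_pos (by norm_num)
  have hNw : N * w = 2 ^ k := by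
    rw [hN, hwdef, ← pow_add]
    congr 1
    omega
  set u : ℕ → ℕ := fun j => 2 ^ k + j * w with hudef
  have hu0 : ∀ j, 2 ^ k ≤ u j := fun j => Nat.le_add_right _ _
  have huN : u N = 2 ^ (k + 1) := by
    simp only [hudef, hNw]
    ring
  have hupos : ∀ j, 1 ≤ u j := fun j => le_trans (Nat.one_le_two_pow) (hu0 j)
  have hratio : ∀ j, N * u (j + 1) ≤ (N + 1) * u j := by
    intro j
    have heq : (N + 1) * u j = N * u (j + 1) + j * w := by
      simp only [hudef]
      rw [← hNw]
      ring
    omega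
  -- covering
  have hcover : ∀ t : ℕ, 2 ^ k ≤ t → t ≤ 2 ^ (k + 1) → ∃ j < N, u j ≤ t ∧ t ≤ u (j + 1) := by
    intro t h1 h2
    set d := t - 2 ^ k with hd
    have hdle : d ≤ N * w := by
      have : 2 ^ (k + 1) = 2 ^ k + N * w := by rw [hNw]; ring
      omega
    by_cases hcase : d = N * w
    · refine ⟨N - 1, by omega, ?_, ?_⟩
      · simp only [hudef]
        have : (N - 1) * w ≤ N * w := Nat.mul_le_mul_right _ (by omega)
        omega
      · have : N - 1 + 1 = N := by omega
        rw [this, huN]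
        exact h2
    · have hdlt : d < N * w := lt_of_le_of_ne hdle hcase
      refine ⟨d / w, ?_, ?_, ?_⟩
      · rw [Nat.div_lt_iff_lt_mul hw0]
        omega
      · simp only [hudef]
        have := Nat.div_mul_le_self d w
        omega
      · simp only [hudef]
        have h3 := Nat.div_add_mod d w
        have h4 := Nat.mod_lt d hw0
        have : d < (d / w + 1) * w := by
          nlinarith [Nat.div_add_mod d w, Nat.mod_lt d hw0]
        omega
  -- solvability of active times
  set solv : ℕ → Prop := fun t => ∃ y ∈ Set.Ioc (0:ℝ) (1 - μ), klBerR (μ + c * y) μ = f t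
    with hsolv
  have himp : ∀ (t : ℕ) (ω : Ω), 0 < t →
      (∑ i ∈ Finset.range t, Y i ω) / (t:ℝ) - μ > z t → solv t := by
    intro t ω ht hev
    by_contra hns
    have hzt : z t = 1 - μ := (hz t ht).2.2 hns
    have htR : (0:ℝ) < (t:ℝ) := by exact_mod_cast ht
    have hsum : (∑ i ∈ Finset.range t, Y i ω) ≤ (t:ℝ) := by
      calc (∑ i ∈ Finset.range t, Y i ω) ≤ ∑ _i ∈ Finset.range t, (1:ℝ) :=
            Finset.sum_le_sum (fun i _ => (hbdd i ω).2)
        _ = (t:ℝ) := by simp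
    have : (∑ i ∈ Finset.range t, Y i ω) / (t:ℝ) ≤ 1 := by
      rw [div_le_one htR]; exact hsum
    rw [hzt] at hev
    linarith
  -- the per-slice bound
  have hslice : ∀ j < N, P {ω | ∃ t, u j ≤ t ∧ t ≤ u (j + 1) ∧
      (∑ i ∈ Finset.range t, Y i ω) / (t:ℝ) - μ > z t} ≤
      ENNReal.ofReal ((δ / (κ * ((k:ℝ)+1))) ^ r) := by
    intro j hj
    set G : Finset ℕ := (Finset.Icc (u j) (u (j + 1))).filter solv with hG
    by_cases hGe : G.Nonempty
    · -- main case
      obtain ⟨t₀, ht₀G, ht₀min⟩ := Finset.exists_min_image G (fun t => (t:ℝ) * z t) hGe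
      rw [hG, Finset.mem_filter, Finset.mem_Icc] at ht₀G
      obtain ⟨⟨ht₀l, ht₀u⟩, ht₀solv⟩ := ht₀G
      have ht₀pos : 0 < t₀ := lt_of_lt_of_le (by positivity) (le_trans (hupos j) ht₀l)
      have ht₀R : (0:ℝ) < (t₀:ℝ) := by exact_mod_cast ht₀pos
      obtain ⟨hz₀mem, hz₀eq, _⟩ := hz t₀ ht₀pos
      have hkl₀ : klBerR (μ + c * z t₀) μ = f t₀ := hz₀eq ht₀solv
      obtain ⟨hz₀pos, hz₀le⟩ := hz₀mem
      set p : ℝ := μ + c * z t₀ with hpdef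
      have hpμ : μ < p := by
        rw [hpdef]; nlinarith
      have hp1 : p < 1 := by
        rw [hpdef]
        nlinarith
      have hp0 : 0 < p := lt_trans hμ0 hpμ
      have h1p : 0 < 1 - p := by linarith
      have h1μ : 0 < 1 - μ := by linarith
      set lam : ℝ := Real.log (p * (1 - μ) / ((1 - p) * μ)) with hlamdef
      have hlam0 : 0 ≤ lam := by
        refine Real.log_nonneg ?_
        rw [le_div_iff₀ (by positivity)]
        nlinarith
      -- the mgf
      set m : ℝ := ∫ ω, Real.exp (lam * Y 0 ω) ∂P with hmdef
      have hexpbd : ∀ (i : ℕ) (ω : Ω), Real.exp (lam * Y i ω) ≤ Real.exp lam := by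
        intro i ω
        refine Real.exp_le_exp.2 ?_
        nlinarith [(hbdd i ω).1, (hbdd i ω).2]
      have hexpint : ∀ i, Integrable (fun ω => Real.exp (lam * Y i ω)) P := by
        intro i
        refine Integrable.mono' (integrable_const (Real.exp lam))
          ((Real.measurable_exp.comp ((hmeas i).const_mul lam)).aestronglyMeasurable) ?_
        exact Filter.Eventually.of_forall fun ω => by
          rw [Real.norm_eq_abs, abs_of_pos (Real.exp_pos _)]; exact hexpbd i ω
      have hmeq : ∀ i, ∫ ω, Real.exp (lam * Y i ω) ∂P = m := by
        intro i
        rw [hmdef]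
        have hid : IdentDistrib (fun ω => Real.exp (lam * Y i ω))
            (fun ω => Real.exp (lam * Y 0 ω)) P P :=
          (hident i).comp (Real.measurable_exp.comp (measurable_id.const_mul lam))
        exact hid.integral_eq
      have hYint : Integrable (Y 0) P := by
        refine Integrable.mono' (integrable_const 1) (hmeas 0).aestronglyMeasurable ?_
        exact Filter.Eventually.of_forall fun ω => by
          rw [Real.norm_eq_abs, abs_of_nonneg (hbdd 0 ω).1]; exact (hbdd 0 ω).2
      have hmlow : Real.exp (lam * μ) ≤ m := by
        have hpt : ∀ ω, Real.exp (lam * μ) * (1 + lam * (Y 0 ω - μ)) ≤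
            Real.exp (lam * Y 0 ω) := by
          intro ω
          have h1 : Real.exp (lam * Y 0 ω) = Real.exp (lam * μ) *
              Real.exp (lam * (Y 0 ω - μ)) := by
            rw [← Real.exp_add]; ring_nf
          rw [h1]
          have h2 : 1 + lam * (Y 0 ω - μ) ≤ Real.exp (lam * (Y 0 ω - μ)) := by
            have := Real.add_one_le_exp (lam * (Y 0 ω - μ))
            linarith
          nlinarith [Real.exp_pos (lam * μ)]
        have hint1 : Integrable (fun ω => Real.exp (lam * μ) * (1 + lam * (Y 0 ω - μ))) P := by
          apply Integrable.const_mul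
          exact (integrable_const 1).add (((hYint.sub (integrable_const μ))).const_mul lam)
        have := integral_mono hint1 (hexpint 0) (fun ω => hpt ω)
        rw [integral_const_mul] at this
        have hcomp : ∫ ω, (1 + lam * (Y 0 ω - μ)) ∂P = 1 := by
          have heq2 : (fun ω => 1 + lam * (Y 0 ω - μ)) =
              fun ω => (1 - lam * μ) + lam * Y 0 ω := by
            funext ω; ring
          rw [heq2, integral_add (integrable_const _) (hYint.const_mul lam),
            integral_const_mul, hmean 0]
          simp
        rw [hcomp, mul_one] at this
        rw [hmdef]
        exact this
      have hmpos : 0 < m := lt_of_lt_of_le (Real.exp_pos _) hmlow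
      have hmup : m ≤ 1 - μ + μ * Real.exp lam := by
        have hpt : ∀ ω, Real.exp (lam * Y 0 ω) ≤ (1 - Y 0 ω) + Y 0 ω * Real.exp lam := by
          intro ω
          obtain ⟨hy0, hy1⟩ := hbdd 0 ω
          have := convexOn_exp.2 (Set.mem_univ (0:ℝ)) (Set.mem_univ lam)
            (by linarith : (0:ℝ) ≤ 1 - Y 0 ω) hy0 (by ring)
          simp only [smul_eq_mul, mul_zero, Real.exp_zero, mul_one] at this
          calc Real.exp (lam * Y 0 ω) = Real.exp ((1 - Y 0 ω) * 0 + Y 0 ω * lam) := by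
                ring_nf
            _ ≤ (1 - Y 0 ω) * 1 + Y 0 ω * Real.exp lam := by
                have h' := convexOn_exp.2 (Set.mem_univ (0:ℝ)) (Set.mem_univ lam)
                  (by linarith : (0:ℝ) ≤ 1 - Y 0 ω) hy0 (by ring)
                simpa [smul_eq_mul, Real.exp_zero] using h'
            _ = (1 - Y 0 ω) + Y 0 ω * Real.exp lam := by ring
        have hint2 : Integrable (fun ω => (1 - Y 0 ω) + Y 0 ω * Real.exp lam) P := by
          exact ((integrable_const 1).sub hYint).add (hYint.mul_const _)
        have := integral_mono (hexpint 0) hint2 (fun ω => hpt ω)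
        rw [hmdef]
        refine le_trans this (le_of_eq ?_)
        have heq3 : (fun ω => (1 - Y 0 ω) + Y 0 ω * Real.exp lam) =
            fun ω => 1 + (Real.exp lam - 1) * Y 0 ω := by
          funext ω; ring
        rw [heq3, integral_add (integrable_const _) (hYint.const_mul _),
          integral_const_mul, hmean 0]
        simp
        ring
      -- the key exponent inequality
      set ψ : ℝ := Real.log m - lam * μ with hψdef
      have hψ0 : 0 ≤ ψ := by
        rw [hψdef, sub_nonneg]
        calc lam * μ = Real.log (Real.exp (lam * μ)) := (Real.log_exp _).symm
          _ ≤ Real.log m := Real.log_le_log (Real.exp_pos _) hmlow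
      have hψB : ψ ≤ Real.log (1 - μ + μ * Real.exp lam) - lam * μ := by
        rw [hψdef]
        have : Real.log m ≤ Real.log (1 - μ + μ * Real.exp lam) :=
          Real.log_le_log hmpos hmup
        linarith
      have hkey : klBerR p μ ≤ lam * (c * z t₀) - ψ := by
        have hleg := klBer_legendre hμ0 hμ1 hpμ hp1
        rw [← hlamdef] at hleg
        have hpc : p - μ = c * z t₀ := by rw [hpdef]; ring
        rw [hpc] at hleg
        linarith
      -- the slice event is inside the Ville event
      set ck : ℝ := Real.log (κ * ((k:ℝ)+1) / δ) with hckdef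
      set a : ℝ := Real.exp (r * ck) with hadef
      have hapos : 0 < a := Real.exp_pos _
      set X : ℕ → Ω → ℝ := fun i ω => Real.exp (lam * Y i ω - Real.log m) with hXdef
      have hlogb : ((k:ℝ)+1) ≤ Real.logb 2 (2*(t₀:ℝ)) := by
        have h2t : (2:ℝ) ^ (k+1) ≤ 2*(t₀:ℝ) := by
          have : ((2:ℝ))^k ≤ (t₀:ℝ) := by
            calc ((2:ℝ))^k = ((2^k : ℕ):ℝ) := by push_cast; ring
              _ ≤ (t₀:ℝ) := by exact_mod_cast le_trans (hu0 j) ht₀l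
          calc (2:ℝ)^(k+1) = 2 * (2:ℝ)^k := by ring
            _ ≤ 2*(t₀:ℝ) := by linarith
        calc ((k:ℝ)+1) = Real.logb 2 ((2:ℝ)^(k+1)) := by
              rw [Real.logb_pow, Real.logb_self_eq_one (by norm_num)]
              push_cast; ring
          _ ≤ Real.logb 2 (2*(t₀:ℝ)) :=
              Real.logb_le_logb_of_le (by norm_num) (by positivity) h2t
      have hlogbpos : 0 < Real.logb 2 (2*(t₀:ℝ)) := by
        have : (0:ℝ) < (k:ℝ)+1 := by positivity
        linarith
      have ht₀fck : ck ≤ (t₀:ℝ) * f t₀ := by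
        rw [hf t₀]
        have hcan : (t₀:ℝ) * (Real.log (κ * Real.logb 2 (2*(t₀:ℝ)) / δ) / (t₀:ℝ)) =
            Real.log (κ * Real.logb 2 (2*(t₀:ℝ)) / δ) := by
          field_simp
        rw [hcan, hckdef]
        refine Real.log_le_log (by positivity) ?_
        refine (div_le_div_iff_of_pos_right hδ0).2 ?_
        exact mul_le_mul_of_nonneg_left hlogb hκpos.le
      -- inclusion into the Ville event
      have hrc : ∀ x : ℝ, lam * ((t₀:ℝ) * z t₀) - r * (t₀:ℝ) * x =
          r * (t₀:ℝ) * (lam * (c * z t₀) - x) := by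
        intro x
        have hNe : (N:ℝ) ≠ 0 := hN0.ne'
        have hNe1 : (N:ℝ) + 1 ≠ 0 := hNp1.ne'
        rw [hr, hcdef]
        field_simp
      have hsubev : {ω | ∃ t, u j ≤ t ∧ t ≤ u (j + 1) ∧
          (∑ i ∈ Finset.range t, Y i ω) / (t:ℝ) - μ > z t} ⊆
          {ω | ∃ t, 1 ≤ t ∧ t ≤ u (j + 1) ∧ a ≤ ∏ i ∈ Finset.range t, X i ω} := by
        rintro ω ⟨t, htl, htu, hev⟩
        have htpos : 0 < t := lt_of_lt_of_le (hupos j) htl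
        have htR : (0:ℝ) < (t:ℝ) := by exact_mod_cast htpos
        refine ⟨t, htpos, htu, ?_⟩
        set S : ℝ := ∑ i ∈ Finset.range t, Y i ω with hSdef
        have hprodeq : ∏ i ∈ Finset.range t, X i ω =
            Real.exp (lam * S - (t:ℝ) * Real.log m) := by
          rw [hSdef, Finset.mul_sum, ← Real.exp_sum]
          congr 1
          rw [Finset.sum_sub_distrib]
          simp [Finset.sum_const, Finset.card_range]
        rw [hprodeq, hadef]
        refine Real.exp_le_exp.2 ?_
        -- the chain of inequalities
        have h1 : (t:ℝ) * (μ + z t) ≤ S := by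
          have : μ + z t < S / (t:ℝ) := by linarith [hev]
          have := (lt_div_iff₀ htR).1 this
          linarith
        have hsolvt : solv t := himp t ω htpos hev
        have htG : t ∈ G := by
          rw [hG, Finset.mem_filter, Finset.mem_Icc]
          exact ⟨⟨htl, htu⟩, hsolvt⟩
        have hmin : (t₀:ℝ) * z t₀ ≤ (t:ℝ) * z t := ht₀min t htG
        have htuR : (t:ℝ) ≤ ((u (j+1)):ℝ) := by exact_mod_cast htu
        have h5 : ((u (j+1)):ℝ) ≤ r * (t₀:ℝ) := by
          have hnat : N * u (j + 1) ≤ (N + 1) * t₀ :=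
            le_trans (hratio j) (Nat.mul_le_mul_left _ ht₀l)
          have hcast : (N:ℝ) * ((u (j+1)):ℝ) ≤ ((N:ℝ) + 1) * (t₀:ℝ) := by
            exact_mod_cast hnat
          rw [hr, div_mul_eq_mul_div, le_div_iff₀ hN0]
          nlinarith
        have hchain1 : lam * ((t:ℝ) * z t) - (t:ℝ) * ψ ≤ lam * S - (t:ℝ) * Real.log m := by
          have : lam * ((t:ℝ) * (μ + z t)) ≤ lam * S :=
            mul_le_mul_of_nonneg_left h1 hlam0
          have hexpand : lam * ((t:ℝ) * (μ + z t)) - (t:ℝ) * Real.log m =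
              lam * ((t:ℝ) * z t) - (t:ℝ) * ψ := by
            rw [hψdef]; ring
          linarith
        have hchain2 : lam * ((t₀:ℝ) * z t₀) - ((u (j+1)):ℝ) * ψ ≤
            lam * ((t:ℝ) * z t) - (t:ℝ) * ψ := by
          have hl : lam * ((t₀:ℝ) * z t₀) ≤ lam * ((t:ℝ) * z t) :=
            mul_le_mul_of_nonneg_left hmin hlam0
          have hr' : (t:ℝ) * ψ ≤ ((u (j+1)):ℝ) * ψ :=
            mul_le_mul_of_nonneg_right htuR hψ0
          linarith
        have hchain3 : lam * ((t₀:ℝ) * z t₀) - r * (t₀:ℝ) * ψ ≤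
            lam * ((t₀:ℝ) * z t₀) - ((u (j+1)):ℝ) * ψ := by
          have : ((u (j+1)):ℝ) * ψ ≤ r * (t₀:ℝ) * ψ :=
            mul_le_mul_of_nonneg_right h5 hψ0
          linarith
        have hchain4 : r * ck ≤ lam * ((t₀:ℝ) * z t₀) - r * (t₀:ℝ) * ψ := by
          rw [hrc ψ]
          calc r * ck ≤ r * ((t₀:ℝ) * f t₀) :=
                mul_le_mul_of_nonneg_left ht₀fck hrpos.le
            _ = r * (t₀:ℝ) * klBerR p μ := by rw [← hkl₀, hpdef]; ring
            _ ≤ r * (t₀:ℝ) * (lam * (c * z t₀) - ψ) := by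
                refine mul_le_mul_of_nonneg_left hkey ?_
                positivity
        linarith
      -- apply Ville's inequality
      have hXm : ∀ i, Measurable (X i) := by
        intro i
        exact Real.measurable_exp.comp (((hmeas i).const_mul lam).sub measurable_const)
      have hXindep : iIndepFun X P := by
        have := hindep.comp (fun _ => fun y : ℝ => Real.exp (lam * y - Real.log m))
          (fun _ => Real.measurable_exp.comp ((measurable_id.const_mul lam).sub measurable_const))
        exact this
      have hXpos : ∀ i ω, 0 < X i ω := fun i ω => Real.exp_pos _
      have hXbd : ∀ i ω, X i ω ≤ Real.exp (lam - Real.log m) := by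
        intro i ω
        refine Real.exp_le_exp.2 ?_
        have h1 : lam * Y i ω ≤ lam := by
          nlinarith [(hbdd i ω).1, (hbdd i ω).2]
        linarith
      have hXmean : ∀ i, ∫ ω, X i ω ∂P = 1 := by
        intro i
        have heq : (fun ω => X i ω) = fun ω => Real.exp (lam * Y i ω) / m := by
          funext ω
          show Real.exp (lam * Y i ω - Real.log m) = Real.exp (lam * Y i ω) / m
          rw [Real.exp_sub, Real.exp_log hmpos]
        rw [heq, integral_div, hmeq i, div_self hmpos.ne']
      have hville := ville_prod P X hXm hXindep (Real.exp (lam - Real.log m))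
        (Real.exp_pos _) hXpos hXbd hXmean (u (j+1)) (hupos (j+1)) a hapos
      refine le_trans (le_trans (measure_mono hsubev) hville) (le_of_eq ?_)
      congr 1
      have hbase : (0:ℝ) < δ / (κ * ((k:ℝ)+1)) := by positivity
      rw [Real.rpow_def_of_pos hbase]
      have hloginv : Real.log (δ / (κ * ((k:ℝ)+1))) = -ck := by
        rw [hckdef]
        rw [show δ / (κ * ((k:ℝ)+1)) = (κ * ((k:ℝ)+1) / δ)⁻¹ by rw [inv_div]]
        rw [Real.log_inv]
      rw [hloginv, hadef, one_div, ← Real.exp_neg]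
      congr 1
      ring
    · -- empty case: the slice event is empty
      have hempty : {ω | ∃ t, u j ≤ t ∧ t ≤ u (j + 1) ∧
          (∑ i ∈ Finset.range t, Y i ω) / (t:ℝ) - μ > z t} = ∅ := by
        ext ω
        simp only [Set.mem_setOf_eq, Set.mem_empty_iff_false, iff_false, not_exists]
        rintro t ⟨ht1, ht2, hev⟩
        have htpos : 0 < t := lt_of_lt_of_le (by positivity) (le_trans (hupos j) ht1)
        have : t ∈ G := by
          rw [hG, Finset.mem_filter, Finset.mem_Icc]
          exact ⟨⟨ht1, ht2⟩, himp t ω htpos hev⟩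
        exact hGe ⟨t, this⟩
      rw [hempty]
      simp
  -- assemble: union bound over the N slices
  have hEsub : {ω | ∃ t : ℕ, 2 ^ k ≤ t ∧ t ≤ 2 ^ (k+1) ∧
      (∑ j ∈ Finset.range t, Y j ω) / (t:ℝ) - μ > z t} ⊆
      ⋃ j ∈ Finset.range N, {ω | ∃ t, u j ≤ t ∧ t ≤ u (j + 1) ∧
        (∑ i ∈ Finset.range t, Y i ω) / (t:ℝ) - μ > z t} := by
    rintro ω ⟨t, ht1, ht2, hev⟩
    obtain ⟨j, hjN, hjl, hju⟩ := hcover t ht1 ht2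
    refine Set.mem_biUnion (Finset.mem_range.2 hjN) ?_
    exact ⟨t, hjl, hju, hev⟩
  calc P {ω | ∃ t : ℕ, 2 ^ k ≤ t ∧ t ≤ 2 ^ (k+1) ∧
        (∑ j ∈ Finset.range t, Y j ω) / (t:ℝ) - μ > z t}
      ≤ P (⋃ j ∈ Finset.range N, {ω | ∃ t, u j ≤ t ∧ t ≤ u (j + 1) ∧
          (∑ i ∈ Finset.range t, Y i ω) / (t:ℝ) - μ > z t}) := measure_mono hEsub
    _ ≤ ∑ j ∈ Finset.range N, P {ω | ∃ t, u j ≤ t ∧ t ≤ u (j + 1) ∧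
          (∑ i ∈ Finset.range t, Y i ω) / (t:ℝ) - μ > z t} :=
        measure_biUnion_finset_le _ _
    _ ≤ ∑ _j ∈ Finset.range N, ENNReal.ofReal ((δ / (κ * ((k:ℝ)+1))) ^ r) :=
        Finset.sum_le_sum (fun j hj => hslice j (Finset.mem_range.1 hj))
    _ = N * ENNReal.ofReal ((δ / (κ * ((k:ℝ)+1))) ^ r) := by
        rw [Finset.sum_const, Finset.card_range, nsmul_eq_mul]
    _ = ENNReal.ofReal ((N:ℝ) * (δ / (κ * ((k:ℝ)+1))) ^ r) := by
        rw [ENNReal.ofReal_mul (by positivity : (0:ℝ) ≤ (N:ℝ))]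
        congr 1
        exact (ENNReal.ofReal_natCast N).symm
end

section
/- The deviation probability over the initial times satisfies P( ∃ t ∈ {1, …, N} : μ̂_t − μ > z_t ) ≤ (δ/κ(N))^{(N+1)/N} · ∑_{t=1}^{N} (log₂(2t))^{−(N+1)/N}. -/
open MeasureTheory ProbabilityTheory Set

lemma aux_integrable_exp {Ω : Type*} [MeasurableSpace Ω] (P : Measure Ω) [IsProbabilityMeasure P]
    (X : Ω → ℝ) (hm : Measurable X) (c : ℝ) (hb : ∀ ω, |X ω| ≤ c) (s : ℝ) :
    Integrable (fun ω => Real.exp (s * X ω)) P := by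
  refine Integrable.mono' (integrable_const (Real.exp (|s| * c))) 
    ((hm.const_mul s).exp.aestronglyMeasurable) (ae_of_all _ fun ω => ?_)
  rw [Real.norm_eq_abs, abs_of_pos (Real.exp_pos _), Real.exp_le_exp]
  calc s * X ω ≤ |s * X ω| := le_abs_self _
    _ = |s| * |X ω| := abs_mul _ _
    _ ≤ |s| * c := by
        refine mul_le_mul_of_nonneg_left (hb ω) (abs_nonneg s)

lemma aux_integrable_bdd {Ω : Type*} [MeasurableSpace Ω] (P : Measure Ω) [IsProbabilityMeasure P]
    (X : Ω → ℝ) (hm : Measurable X) (hb : ∀ ω, X ω ∈ Set.Icc (0:ℝ) 1) :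
    Integrable X P := by
  refine Integrable.mono' (integrable_const 1) hm.aestronglyMeasurable (ae_of_all _ fun ω => ?_)
  rw [Real.norm_eq_abs, abs_of_nonneg (hb ω).1]; exact (hb ω).2

lemma aux_mgf_le {Ω : Type*} [MeasurableSpace Ω] (P : Measure Ω) [IsProbabilityMeasure P]
    (X : Ω → ℝ) (hm : Measurable X) (hb : ∀ ω, X ω ∈ Set.Icc (0:ℝ) 1)
    (μ : ℝ) (hmean : ∫ ω, X ω ∂P = μ) (s : ℝ) :
    mgf X P s ≤ 1 - μ + μ * Real.exp s := by
  have hXint : Integrable X P := aux_integrable_bdd P X hm hb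
  have hint : Integrable (fun ω => Real.exp (s * X ω)) P :=
    aux_integrable_exp P X hm 1 (fun ω => by rw [abs_of_nonneg (hb ω).1]; exact (hb ω).2) s
  have hpt : ∀ ω, Real.exp (s * X ω) ≤ 1 - X ω + X ω * Real.exp s := by
    intro ω
    have h := convexOn_exp.2 (Set.mem_univ (0:ℝ)) (Set.mem_univ s)
      (sub_nonneg.2 (hb ω).2) (hb ω).1 (by ring)
    simp only [smul_eq_mul, mul_zero, zero_add, Real.exp_zero, mul_one] at h
    calc Real.exp (s * X ω) = Real.exp ((1 - X ω) * 0 + X ω * s) := by ring_nf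
      _ ≤ (1 - X ω) * Real.exp 0 + X ω * Real.exp s := by
          simpa [smul_eq_mul] using convexOn_exp.2 (Set.mem_univ (0:ℝ)) (Set.mem_univ s)
            (sub_nonneg.2 (hb ω).2) (hb ω).1 (by ring)
      _ = 1 - X ω + X ω * Real.exp s := by rw [Real.exp_zero]; ring
  have hRint : Integrable (fun ω => 1 - X ω + X ω * Real.exp s) P := by
    exact ((integrable_const (1:ℝ)).sub hXint).add (hXint.mul_const _)
  calc mgf X P s = ∫ ω, Real.exp (s * X ω) ∂P := rfl
    _ ≤ ∫ ω, (1 - X ω + X ω * Real.exp s) ∂P := integral_mono hint hRint hpt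
    _ = ∫ ω, (1 - X ω) ∂P + ∫ ω, X ω * Real.exp s ∂P :=
        integral_add ((integrable_const (1:ℝ)).sub hXint) (hXint.mul_const _)
    _ = 1 - μ + μ * Real.exp s := by
        rw [integral_sub (integrable_const (1:ℝ)) hXint, integral_mul_const, hmean, integral_const]
        simp

lemma aux_entropy_convex : ConvexOn ℝ (Set.Icc (0:ℝ) 1)
    (fun p => p * Real.log p + (1 - p) * Real.log (1 - p)) := by
  have h1 : ConvexOn ℝ (Set.Icc (0:ℝ) 1) (fun p => p * Real.log p) :=
    Real.convexOn_mul_log.subset (fun x hx => hx.1) (convex_Icc 0 1)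
  have h2 : ConvexOn ℝ (Set.Icc (0:ℝ) 1) (fun p => (1 - p) * Real.log (1 - p)) := by
    have hmap := Real.convexOn_mul_log.comp_affineMap (AffineMap.lineMap (1:ℝ) (0:ℝ))
    have heq : ((fun x => x * Real.log x) ∘ ⇑(AffineMap.lineMap (1:ℝ) (0:ℝ)))
        = fun p => (1 - p) * Real.log (1 - p) := by
      ext p
      simp only [Function.comp_apply, AffineMap.lineMap_apply, vsub_eq_sub, vadd_eq_add,
        zero_sub, smul_neg, smul_eq_mul, mul_one]
      ring_nf
    rw [heq] at hmap
    refine hmap.subset (fun x hx => ?_) (convex_Icc 0 1)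
    simp only [Set.mem_preimage, AffineMap.lineMap_apply, vsub_eq_sub, vadd_eq_add,
      zero_sub, smul_neg, smul_eq_mul, mul_one, Set.mem_Ici]
    linarith [hx.2]
  exact h1.add h2

lemma aux_klBerR_eq (p μ : ℝ) (hp0 : 0 < p) (hp1 : p < 1) (hμ0 : 0 < μ) (hμ1 : μ < 1) :
    klBerR p μ = (p * Real.log p + (1 - p) * Real.log (1 - p))
      - p * Real.log μ - (1 - p) * Real.log (1 - μ) := by
  unfold klBerR
  rw [Real.log_div hp0.ne' hμ0.ne', Real.log_div (by linarith) (by linarith : (1:ℝ)-μ ≠ 0)]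
  ring

lemma aux_kl_convex_pt (μ : ℝ) (hμ0 : 0 < μ) (hμ1 : μ < 1) (z : ℝ) (hz0 : 0 < z)
    (hz1 : μ + z < 1) (lam : ℝ) (hl0 : 0 ≤ lam) (hl1 : lam ≤ 1) :
    klBerR (μ + lam * z) μ ≤ lam * klBerR (μ + z) μ := by
  have ha0 : 0 < μ + z := by linarith
  have hp0 : 0 < μ + lam * z := by nlinarith
  have hp1 : μ + lam * z < 1 := by nlinarith
  have hconv := aux_entropy_convex.2 (Set.mem_Icc.2 ⟨ha0.le, by linarith⟩)
    (Set.mem_Icc.2 ⟨hμ0.le, hμ1.le⟩) hl0 (by linarith : (0:ℝ) ≤ 1 - lam) (by ring)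
  simp only [smul_eq_mul] at hconv
  have harg : lam * (μ + z) + (1 - lam) * μ = μ + lam * z := by ring
  rw [harg] at hconv
  rw [aux_klBerR_eq _ _ hp0 hp1 hμ0 hμ1, aux_klBerR_eq _ _ ha0 hz1 hμ0 hμ1]
  nlinarith [hconv]

lemma aux_chernoff {Ω : Type*} [MeasurableSpace Ω] (P : Measure Ω) [IsProbabilityMeasure P]
    (Y : ℕ → Ω → ℝ) (hmeas : ∀ i, Measurable (Y i))
    (hindep : iIndepFun Y P)
    (hident : ∀ i, IdentDistrib (Y i) (Y 0) P P)
    (hbdd : ∀ i ω, Y i ω ∈ Set.Icc (0:ℝ) 1)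
    (μ : ℝ) (hμ0 : 0 < μ) (hμ1 : μ < 1)
    (hmean : ∀ i, ∫ ω, Y i ω ∂P = μ)
    (t : ℕ) (a : ℝ) (haμ : μ < a) (ha1 : a < 1) :
    (P {ω | (t:ℝ) * a ≤ ∑ j ∈ Finset.range t, Y j ω}).toReal ≤
      Real.exp (-(t:ℝ) * klBerR a μ) := by
  have h1a : 0 < 1 - a := by linarith
  have h1μ : 0 < 1 - μ := by linarith
  have ha0 : 0 < a := lt_trans hμ0 haμ
  set s : ℝ := Real.log (a * (1 - μ) / ((1 - a) * μ)) with hs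
  have hRpos : 0 < a * (1 - μ) / ((1 - a) * μ) := by positivity
  have hs0 : 0 ≤ s := by
    apply Real.log_nonneg
    rw [le_div_iff₀ (by positivity)]
    nlinarith
  have hexps : Real.exp s = a * (1 - μ) / ((1 - a) * μ) := Real.exp_log hRpos
  -- integrability of exp of each variable and of the sum
  have hinti : ∀ i, Integrable (fun ω => Real.exp (s * Y i ω)) P := fun i =>
    aux_integrable_exp P (Y i) (hmeas i) 1
      (fun ω => by rw [abs_of_nonneg (hbdd i ω).1]; exact (hbdd i ω).2) s
  have hmeasS : Measurable (fun ω => ∑ j ∈ Finset.range t, Y j ω) := by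
    apply Finset.measurable_sum
    exact fun j _ => hmeas j
  have hintS : Integrable (fun ω => Real.exp (s * ∑ j ∈ Finset.range t, Y j ω)) P := by
    refine aux_integrable_exp P _ hmeasS (t:ℝ) (fun ω => ?_) s
    rw [abs_of_nonneg (Finset.sum_nonneg fun j _ => (hbdd j ω).1)]
    calc ∑ j ∈ Finset.range t, Y j ω ≤ ∑ j ∈ Finset.range t, 1 :=
          Finset.sum_le_sum fun j _ => (hbdd j ω).2
      _ = (t:ℝ) := by simp
  -- Chernoff + mgf factorization
  have hch := measure_ge_le_exp_mul_mgf (X := fun ω => ∑ j ∈ Finset.range t, Y j ω)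
    (μ := P) (t := s) ((t:ℝ) * a) hs0 hintS
  have hmgf_sum : mgf (fun ω => ∑ j ∈ Finset.range t, Y j ω) P s = (mgf (Y 0) P s) ^ t := by
    have h := hindep.mgf_sum hmeas (Finset.range t) (t := s)
    have heq : (fun ω => ∑ j ∈ Finset.range t, Y j ω) = ∑ j ∈ Finset.range t, Y j := by
      ext ω; simp
    rw [heq, h]
    have : ∀ j ∈ Finset.range t, mgf (Y j) P s = mgf (Y 0) P s := by
      intro j _
      unfold mgf
      exact ((hident j).comp (Real.measurable_exp.comp (measurable_const_mul s))).integral_eq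
    rw [Finset.prod_congr rfl this, Finset.prod_const, Finset.card_range]
  have hB : (1:ℝ) - μ + μ * Real.exp s = (1 - μ) / (1 - a) := by
    rw [hexps]; field_simp; ring
  have hBpos : (0:ℝ) < (1 - μ) / (1 - a) := by positivity
  have hmgf0 : mgf (Y 0) P s ≤ (1 - μ) / (1 - a) := by
    rw [← hB]
    exact aux_mgf_le P (Y 0) (hmeas 0) (hbdd 0) μ (hmean 0) s
  have hmgfpow : (mgf (Y 0) P s) ^ t ≤ ((1 - μ) / (1 - a)) ^ t :=
    pow_le_pow_left₀ mgf_nonneg hmgf0 t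
  -- final algebra
  have hfin : Real.exp (-s * ((t:ℝ) * a)) * ((1 - μ) / (1 - a)) ^ t
      = Real.exp (-(t:ℝ) * klBerR a μ) := by
    rw [← Real.exp_log hBpos, ← Real.exp_nat_mul, ← Real.exp_add]
    congr 1
    rw [hs, Real.log_div (by positivity) (by positivity), Real.log_mul ha0.ne' h1μ.ne',
      Real.log_mul h1a.ne' hμ0.ne', Real.log_div h1μ.ne' h1a.ne']
    unfold klBerR
    rw [Real.log_div ha0.ne' hμ0.ne', Real.log_div h1a.ne' h1μ.ne']
    ring
  calc (P {ω | (t:ℝ) * a ≤ ∑ j ∈ Finset.range t, Y j ω}).toReal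
      ≤ Real.exp (-s * ((t:ℝ) * a)) * mgf (fun ω => ∑ j ∈ Finset.range t, Y j ω) P s := hch
    _ ≤ Real.exp (-s * ((t:ℝ) * a)) * ((1 - μ) / (1 - a)) ^ t := by
        rw [hmgf_sum]
        exact mul_le_mul_of_nonneg_left hmgfpow (Real.exp_pos _).le
    _ = Real.exp (-(t:ℝ) * klBerR a μ) := hfin

/-- The deviation probability over the initial times satisfies
`P(∃ t ∈ {1,…,N} : μ̂_t - μ > z_t) ≤ (δ/κ(N))^((N+1)/N) · ∑_{t=1}^N (log₂(2t))^{-(N+1)/N}`. -/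
theorem lil_klucb_initial_block_deviation
    {Ω : Type*} [MeasurableSpace Ω] (P : Measure Ω) [IsProbabilityMeasure P]
    (Y : ℕ → Ω → ℝ) (hmeas : ∀ i, Measurable (Y i))
    (hindep : iIndepFun Y P)
    (hident : ∀ i, IdentDistrib (Y i) (Y 0) P P)
    (hbdd : ∀ i ω, Y i ω ∈ Set.Icc (0:ℝ) 1)
    (μ : ℝ) (hμ : μ ∈ Set.Ioo (0:ℝ) 1)
    (hmean : ∀ i, ∫ ω, Y i ω ∂P = μ)
    (δ : ℝ) (hδ : δ ∈ Set.Ioo (0:ℝ) 1)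
    (l N : ℕ) (hN : N = 2 ^ l)
    (κ : ℝ)
    (hκ : κ = δ ^ ((1:ℝ)/((N:ℝ)+1)) *
      ((if l ≠ 0 then
          ∑ t ∈ Finset.Icc 1 N, (Real.logb 2 (2*(t:ℝ))) ^ (-(((N:ℝ)+1)/(N:ℝ)))
        else 0)
        + (N:ℝ) * ∑' k : ℕ, ((k:ℝ) + (l:ℝ) + 1) ^ (-(((N:ℝ)+1)/(N:ℝ))))
        ^ ((N:ℝ)/((N:ℝ)+1)))
    (f : ℕ → ℝ)
    (hf : ∀ t : ℕ, f t = Real.log (κ * Real.logb 2 (2*(t:ℝ)) / δ) / (t:ℝ))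
    (z : ℕ → ℝ)
    (hz : ∀ t : ℕ, 0 < t →
      z t ∈ Set.Ioc (0:ℝ) (1 - μ) ∧
      ((∃ y ∈ Set.Ioc (0:ℝ) (1 - μ),
          klBerR (μ + ((N:ℝ)/((N:ℝ)+1)) * y) μ = f t) →
        klBerR (μ + ((N:ℝ)/((N:ℝ)+1)) * z t) μ = f t) ∧
      ((¬ ∃ y ∈ Set.Ioc (0:ℝ) (1 - μ),
          klBerR (μ + ((N:ℝ)/((N:ℝ)+1)) * y) μ = f t) →
        z t = 1 - μ)) :
    P {ω | ∃ t : ℕ, 1 ≤ t ∧ t ≤ N ∧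
        (∑ j ∈ Finset.range t, Y j ω) / (t:ℝ) - μ > z t} ≤
      ENNReal.ofReal ((δ / κ) ^ (((N:ℝ)+1)/(N:ℝ)) *
        ∑ t ∈ Finset.Icc 1 N, (Real.logb 2 (2*(t:ℝ))) ^ (-(((N:ℝ)+1)/(N:ℝ)))) := by
  obtain ⟨hμ0, hμ1⟩ := hμ
  obtain ⟨hδ0, hδ1⟩ := hδ
  have hN1 : 1 ≤ N := hN ▸ Nat.one_le_two_pow
  have hNR : (1:ℝ) ≤ (N:ℝ) := by exact_mod_cast hN1
  set e : ℝ := ((N:ℝ)+1)/(N:ℝ) with he_def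
  have he1 : 1 < e := by
    rw [he_def, lt_div_iff₀ (by linarith)]
    linarith
  have he0 : 0 < e := by linarith
  -- positivity of κ
  have hκ0 : 0 < κ := by
    have hT : Summable (fun k : ℕ => ((k:ℝ) + (l:ℝ) + 1) ^ (-e)) := by
      have h0 : Summable (fun n : ℕ => (n:ℝ) ^ (-e)) :=
        Real.summable_nat_rpow.2 (by rw [neg_lt_neg_iff]; exact he1)
      have h1 := (summable_nat_add_iff (l+1)).2 h0
      refine h1.congr fun k => ?_
      push_cast
      ring_nf
    have hTpos : 0 < ∑' k : ℕ, ((k:ℝ) + (l:ℝ) + 1) ^ (-e) :=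
      Summable.tsum_pos hT (fun k => Real.rpow_nonneg (by positivity) _) 0
        (Real.rpow_pos_of_pos (by positivity) _)
    have hC : 0 ≤ (if l ≠ 0 then
        ∑ t ∈ Finset.Icc 1 N, (Real.logb 2 (2*(t:ℝ))) ^ (-e) else 0) := by
      split_ifs
      · refine Finset.sum_nonneg fun t ht => Real.rpow_nonneg ?_ _
        refine Real.logb_nonneg (by norm_num) ?_
        have : (1:ℝ) ≤ (t:ℝ) := by exact_mod_cast (Finset.mem_Icc.1 ht).1
        linarith
      · exact le_rfl
    rw [hκ]
    refine mul_pos (Real.rpow_pos_of_pos hδ0 _) (Real.rpow_pos_of_pos ?_ _)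
    have : 0 < (N:ℝ) * ∑' k : ℕ, ((k:ℝ) + (l:ℝ) + 1) ^ (-e) := by
      exact mul_pos (by linarith) hTpos
    linarith
  -- the per-time deviation bound
  have hw1 : ∀ t : ℕ, 1 ≤ t → (1:ℝ) ≤ Real.logb 2 (2*(t:ℝ)) := by
    intro t ht
    rw [show (1:ℝ) = Real.logb 2 2 from (Real.logb_self_eq_one (by norm_num)).symm]
    have ht' : (1:ℝ) ≤ (t:ℝ) := by exact_mod_cast ht
    exact (Real.logb_le_logb (by norm_num) (by norm_num) (by linarith)).2 (by linarith)
  have key : ∀ t ∈ Finset.Icc 1 N,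
      P {ω | (∑ j ∈ Finset.range t, Y j ω) / (t:ℝ) - μ > z t} ≤
      ENNReal.ofReal ((δ / κ) ^ e * (Real.logb 2 (2*(t:ℝ))) ^ (-e)) := by
    intro t ht
    obtain ⟨ht1, htN⟩ := Finset.mem_Icc.1 ht
    have htpos : 0 < t := ht1
    have htR : (0:ℝ) < (t:ℝ) := by exact_mod_cast htpos
    obtain ⟨hzIoc, hsolcase, hnosol⟩ := hz t htpos
    rcases eq_or_lt_of_le hzIoc.2 with hzeq | hzlt
    · -- z t = 1 - μ : the event is empty
      have hempty : {ω | (∑ j ∈ Finset.range t, Y j ω) / (t:ℝ) - μ > z t} = ∅ := by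
        ext ω
        simp only [mem_setOf_eq, mem_empty_iff_false, iff_false, not_lt]
        rw [hzeq]
        have hS : (∑ j ∈ Finset.range t, Y j ω) ≤ (t:ℝ) := by
          calc (∑ j ∈ Finset.range t, Y j ω) ≤ ∑ j ∈ Finset.range t, 1 :=
                Finset.sum_le_sum fun j _ => (hbdd j ω).2
            _ = (t:ℝ) := by simp
        have : (∑ j ∈ Finset.range t, Y j ω) / (t:ℝ) ≤ 1 := by
          rw [div_le_one htR]; exact hS
        linarith
      rw [hempty]
      simp
    · -- z t < 1 - μ : Chernoff
      have hsol : klBerR (μ + ((N:ℝ)/((N:ℝ)+1)) * z t) μ = f t := by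
        rcases Classical.em (∃ y ∈ Set.Ioc (0:ℝ) (1 - μ),
            klBerR (μ + ((N:ℝ)/((N:ℝ)+1)) * y) μ = f t) with h | h
        · exact hsolcase h
        · exact absurd (hnosol h) (by linarith)
      set a : ℝ := μ + z t with ha_def
      have haμ : μ < a := by simp [ha_def]; linarith [hzIoc.1]
      have ha1 : a < 1 := by simp [ha_def]; linarith
      set lam : ℝ := (N:ℝ)/((N:ℝ)+1) with hlam_def
      have hlam0 : 0 ≤ lam := by positivity
      have hlam1 : lam ≤ 1 := by
        rw [hlam_def, div_le_one (by linarith)]; linarith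
      have helam : e * lam = 1 := by
        rw [he_def, hlam_def]
        field_simp
      -- convexity bound : e * f t ≤ klBerR a μ
      have hconv : klBerR (μ + lam * z t) μ ≤ lam * klBerR a μ :=
        aux_kl_convex_pt μ hμ0 hμ1 (z t) hzIoc.1 (by simpa [ha_def] using ha1) lam hlam0 hlam1
      have hKL : e * f t ≤ klBerR a μ := by
        have h1 : f t ≤ lam * klBerR a μ := by rw [← hsol]; exact hconv
        have h2 : e * f t ≤ e * (lam * klBerR a μ) :=
          mul_le_mul_of_nonneg_left h1 he0.le
        calc e * f t ≤ e * (lam * klBerR a μ) := h2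
          _ = (e * lam) * klBerR a μ := by ring
          _ = klBerR a μ := by rw [helam]; ring
      -- event inclusion
      have hsub : {ω | (∑ j ∈ Finset.range t, Y j ω) / (t:ℝ) - μ > z t} ⊆
          {ω | (t:ℝ) * a ≤ ∑ j ∈ Finset.range t, Y j ω} := by
        intro ω hω
        simp only [mem_setOf_eq] at hω ⊢
        have : a < (∑ j ∈ Finset.range t, Y j ω) / (t:ℝ) := by
          rw [ha_def]; linarith
        have := (lt_div_iff₀ htR).1 this
        linarith
      -- Chernoff bound
      have hch := aux_chernoff P Y hmeas hindep hident hbdd μ hμ0 hμ1 hmean t a haμ ha1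
      -- compute exp(-t * e * f t)
      have hwt : (1:ℝ) ≤ Real.logb 2 (2*(t:ℝ)) := hw1 t ht1
      have hX : (0:ℝ) < κ * Real.logb 2 (2*(t:ℝ)) / δ := by positivity
      have hexp_eq : Real.exp (-(t:ℝ) * (e * f t)) =
          (δ / κ) ^ e * (Real.logb 2 (2*(t:ℝ))) ^ (-e) := by
        rw [hf t]
        have h1 : -(t:ℝ) * (e * (Real.log (κ * Real.logb 2 (2*(t:ℝ)) / δ) / (t:ℝ)))
            = Real.log (κ * Real.logb 2 (2*(t:ℝ)) / δ) * (-e) := by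
          field_simp
        rw [h1, ← Real.rpow_def_of_pos hX]
        have h2 : κ * Real.logb 2 (2*(t:ℝ)) / δ = (κ/δ) * Real.logb 2 (2*(t:ℝ)) := by
          ring
        rw [h2, Real.mul_rpow (by positivity) (by linarith), Real.rpow_neg (by positivity)]
        congr 1
        rw [← Real.inv_rpow (by positivity), inv_div]
      -- put everything together
      calc P {ω | (∑ j ∈ Finset.range t, Y j ω) / (t:ℝ) - μ > z t}
          ≤ P {ω | (t:ℝ) * a ≤ ∑ j ∈ Finset.range t, Y j ω} := measure_mono hsub
        _ = ENNReal.ofReal ((P {ω | (t:ℝ) * a ≤ ∑ j ∈ Finset.range t, Y j ω}).toReal) :=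
            (ENNReal.ofReal_toReal (measure_ne_top _ _)).symm
        _ ≤ ENNReal.ofReal ((δ / κ) ^ e * (Real.logb 2 (2*(t:ℝ))) ^ (-e)) := by
            apply ENNReal.ofReal_le_ofReal
            calc (P {ω | (t:ℝ) * a ≤ ∑ j ∈ Finset.range t, Y j ω}).toReal
                ≤ Real.exp (-(t:ℝ) * klBerR a μ) := hch
              _ ≤ Real.exp (-(t:ℝ) * (e * f t)) := by
                  apply Real.exp_le_exp.2
                  have := mul_le_mul_of_nonneg_left hKL htR.le
                  nlinarith
              _ = (δ / κ) ^ e * (Real.logb 2 (2*(t:ℝ))) ^ (-e) := hexp_eq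
  -- union bound
  have hseteq : {ω | ∃ t : ℕ, 1 ≤ t ∧ t ≤ N ∧
      (∑ j ∈ Finset.range t, Y j ω) / (t:ℝ) - μ > z t} =
      ⋃ t ∈ Finset.Icc 1 N, {ω | (∑ j ∈ Finset.range t, Y j ω) / (t:ℝ) - μ > z t} := by
    ext ω
    simp only [mem_setOf_eq, mem_iUnion, Finset.mem_Icc, exists_prop]
    constructor
    · rintro ⟨t, h1, h2, h3⟩; exact ⟨t, ⟨h1, h2⟩, h3⟩
    · rintro ⟨t, ⟨h1, h2⟩, h3⟩; exact ⟨t, h1, h2, h3⟩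
  calc P {ω | ∃ t : ℕ, 1 ≤ t ∧ t ≤ N ∧
        (∑ j ∈ Finset.range t, Y j ω) / (t:ℝ) - μ > z t}
      = P (⋃ t ∈ Finset.Icc 1 N,
          {ω | (∑ j ∈ Finset.range t, Y j ω) / (t:ℝ) - μ > z t}) := by rw [hseteq]
    _ ≤ ∑ t ∈ Finset.Icc 1 N,
          P {ω | (∑ j ∈ Finset.range t, Y j ω) / (t:ℝ) - μ > z t} :=
        measure_biUnion_finset_le _ _
    _ ≤ ∑ t ∈ Finset.Icc 1 N,
          ENNReal.ofReal ((δ / κ) ^ e * (Real.logb 2 (2*(t:ℝ))) ^ (-e)) :=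
        Finset.sum_le_sum key
    _ = ENNReal.ofReal (∑ t ∈ Finset.Icc 1 N,
          (δ / κ) ^ e * (Real.logb 2 (2*(t:ℝ))) ^ (-e)) := by
        rw [ENNReal.ofReal_sum_of_nonneg]
        intro t ht
        have := hw1 t (Finset.mem_Icc.1 ht).1
        positivity
    _ = ENNReal.ofReal ((δ / κ) ^ e * ∑ t ∈ Finset.Icc 1 N,
          (Real.logb 2 (2*(t:ℝ))) ^ (-e)) := by rw [← Finset.mul_sum]
end
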